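/- arXiv:1303.3654 — 10 statements merged into one kernel-verified Lean document; each statement's English description precedes it below -/
import Mathlib

section
/- Let X be a real Banach space, let f ∈ Γ(X), and let x̄ ∈ X, ȳ* ∈ X* with ȳ* ∈ ∂f(x̄). Suppose there exist a neighborhood U of x̄ and a constant c > 0 such that f(x) ≥ f(x̄) + ⟨ȳ*, x − x̄⟩ + c·d(x, (∂f)⁻¹(ȳ*))² for all x ∈ U. Then ∂f is metrically subregular at x̄ for ȳ* with constant 1/c; more precisely, d(x, (∂f)⁻¹(ȳ*)) ≤ (1/c)·d(ȳ*, ∂f(x)) for all x ∈ U. -/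
open Topology Filter Metric Set

/-- The convex subdifferential of an extended-real-valued function `f` at `x`:
the set of continuous linear functionals `p` with `f z ≥ f x + ⟨p, z - x⟩` for all `z`
(empty when `f x = ∞`). -/
noncomputable def subdiff {X : Type*} [NormedAddCommGroup X] [NormedSpace ℝ X]
    (f : X → EReal) (x : X) : Set (X →L[ℝ] ℝ) :=
  {p | f x ≠ ⊤ ∧ ∀ z : X, f x + ((p (z - x) : ℝ) : EReal) ≤ f z}

/-- If `f ∈ Γ(X)` on a Banach space, `ȳ* ∈ ∂f(x̄)`, and the quadratic growth
condition `f(x) ≥ f(x̄) + ⟨ȳ*, x - x̄⟩ + c·d(x, (∂f)⁻¹(ȳ*))²` holds on a neighborhood `U`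
of `x̄`, then `∂f` is metrically subregular at `x̄` for `ȳ*` with constant `1/c`:
`d(x, (∂f)⁻¹(ȳ*)) ≤ (1/c)·d(ȳ*, ∂f(x))` for all `x ∈ U` (stated pointwise over
`y* ∈ ∂f(x)`, which matches the convention `d(ȳ*, ∅) = ∞`). -/
theorem stmt_0 {X : Type*} [NormedAddCommGroup X] [NormedSpace ℝ X] [CompleteSpace X]
    (f : X → EReal)
    (hproper : ∃ x, f x ≠ ⊤) (hne_bot : ∀ x, f x ≠ ⊥)
    (hlsc : LowerSemicontinuous f)
    (hconv : ∀ x y : X, ∀ a b : ℝ, 0 ≤ a → 0 ≤ b → a + b = 1 →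
      f (a • x + b • y) ≤ (a : EReal) * f x + (b : EReal) * f y)
    (xbar : X) (ybar : X →L[ℝ] ℝ) (hybar : ybar ∈ subdiff f xbar)
    (U : Set X) (hU : U ∈ 𝓝 xbar) (c : ℝ) (hc : 0 < c)
    (growth : ∀ x ∈ U,
      f xbar + ((ybar (x - xbar) + c * (infDist x {z | ybar ∈ subdiff f z}) ^ 2 : ℝ) : EReal)
        ≤ f x) :
    ∀ x ∈ U, ∀ y ∈ subdiff f x,
      infDist x {z | ybar ∈ subdiff f z} ≤ (1 / c) * ‖y - ybar‖ := by

  intro x hx y hy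
  set S := {z | ybar ∈ subdiff f z} with hS
  have hxbarS : xbar ∈ S := hybar
  set d := infDist x S with hd
  have hd0 : (0:ℝ) ≤ d := infDist_nonneg
  obtain ⟨hfx_ne, hysub⟩ := hy
  -- key inequality
  have key : ∀ z ∈ S, c * d ^ 2 ≤ ‖y - ybar‖ * dist x z := by
    intro z hz
    obtain ⟨hfz_ne, hzsub⟩ := hz
    have hA := growth x hx
    have hB := hysub z
    have hC := hzsub xbar
    have hfxbar_ne : f xbar ≠ ⊤ := hybar.1
    set a := (f xbar).toReal with ha
    set b := (f x).toReal with hb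
    set e := (f z).toReal with he
    have hae : f xbar = (a : EReal) := (EReal.coe_toReal hfxbar_ne (hne_bot xbar)).symm
    have hbe : f x = (b : EReal) := (EReal.coe_toReal hfx_ne (hne_bot x)).symm
    have hee : f z = (e : EReal) := (EReal.coe_toReal hfz_ne (hne_bot z)).symm
    rw [hae, hbe] at hA
    rw [hbe, hee] at hB
    rw [hee, hae] at hC
    rw [← EReal.coe_add, EReal.coe_le_coe_iff] at hA hB hC
    have h1 : ybar (x - xbar) + ybar (xbar - z) = ybar (x - z) := by
      rw [← map_add, sub_add_sub_cancel]
    have h2 : y (z - x) = - y (x - z) := by rw [← map_neg, neg_sub]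
    have h3 : (y - ybar) (x - z) = y (x - z) - ybar (x - z) :=
      ContinuousLinearMap.sub_apply y ybar (x - z)
    have h4 : (y - ybar) (x - z) ≤ ‖y - ybar‖ * ‖x - z‖ :=
      le_trans (le_abs_self _) ((y - ybar).le_opNorm (x - z))
    rw [dist_eq_norm]
    linarith
  have hSne : S.Nonempty := ⟨xbar, hxbarS⟩
  have key2 : c * d ^ 2 ≤ ‖y - ybar‖ * d := by
    rcases eq_or_lt_of_le (norm_nonneg (y - ybar)) with hn | hn
    · have := key xbar hxbarS
      rw [← hn] at this ⊢
      have hdz : d ^ 2 ≤ 0 := by nlinarith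
      have : d = 0 := by nlinarith [sq_nonneg d]
      simp [this]
    · apply le_of_forall_pos_le_add
      intro ε hε
      have hlt : d < d + ε / ‖y - ybar‖ := by
        have : 0 < ε / ‖y - ybar‖ := div_pos hε hn
        linarith
      obtain ⟨z, hzS, hzd⟩ := (infDist_lt_iff hSne).mp hlt
      have := key z hzS
      have h5 : ‖y - ybar‖ * dist x z ≤ ‖y - ybar‖ * (d + ε / ‖y - ybar‖) :=
        mul_le_mul_of_nonneg_left hzd.le (norm_nonneg _)
      have h6 : ‖y - ybar‖ * (ε / ‖y - ybar‖) = ε := by field_simp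
      nlinarith
  rcases eq_or_lt_of_le hd0 with hd0' | hd0'
  · rw [← hd0']
    positivity
  · have : c * d ≤ ‖y - ybar‖ := by nlinarith
    rw [div_mul_eq_mul_div, le_div_iff₀ hc]
    linarith
end

section
/- Let X be a real Banach space, let f ∈ Γ(X), and let x̄ ∈ X, ȳ* ∈ X* with ȳ* ∈ ∂f(x̄). Suppose there exist constants κ > 0 and a > 0 such that d(x, (∂f)⁻¹(ȳ*)) ≤ κ·d(ȳ*, ∂f(x)) for all x in the closed ball B_a(x̄). Then for every constant c with 0 < c < 1/(4κ), one has f(x) ≥ f(x̄) + ⟨ȳ*, x − x̄⟩ + c·d(x, (∂f)⁻¹(ȳ*))² for all x in the closed ball B_{2a/3}(x̄). -/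
open Topology Filter Metric Set

lemma ereal_add_coe_coe (p : EReal) (r s : ℝ) :
    (p + (r:EReal)) + (s:EReal) = p + ((r+s:ℝ):EReal) := by
  induction p using EReal.rec with
  | bot => simp
  | coe t => norm_cast; ring
  | top => rw [EReal.top_add_coe, EReal.top_add_coe, EReal.top_add_coe]

lemma ereal_add_coe_le_iff (p q : EReal) (r s : ℝ) :
    p + (r:EReal) ≤ q + (s:EReal) ↔ p + ((r - s:ℝ):EReal) ≤ q := by
  induction p using EReal.rec with
  | bot => simp
  | top =>
    rw [EReal.top_add_coe, EReal.top_add_coe]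
    induction q using EReal.rec with
    | bot => simp
    | coe v => simp [← EReal.coe_add]
    | top => simp [EReal.top_add_coe]
  | coe t =>
    induction q using EReal.rec with
    | bot => simp [← EReal.coe_sub]
    | coe v => norm_cast; constructor <;> intro h <;> linarith
    | top => simp [EReal.top_add_coe]

lemma ereal_coe_le_add_iff (p : EReal) (r s : ℝ) :
    (s:EReal) ≤ p + (r:EReal) ↔ ((s - r:ℝ):EReal) ≤ p := by
  induction p using EReal.rec with
  | bot => simp [← EReal.coe_sub]
  | coe t => norm_cast; constructor <;> intro h <;> linarith
  | top => rw [EReal.top_add_coe]; simp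

lemma ereal_mul_ne_bot (p : ℝ) (hp : 0 ≤ p) (w : EReal) (hw : w ≠ ⊥) :
    (p:EReal) * w ≠ ⊥ := by
  rcases eq_or_lt_of_le hp with h | h
  · rw [← h]; simp
  · induction w using EReal.rec with
    | bot => exact absurd rfl hw
    | coe t => rw [← EReal.coe_mul]; exact EReal.coe_ne_bot _
    | top => rw [EReal.mul_top_of_pos (by exact_mod_cast h)]; simp

lemma ereal_mul_add_coe (p : ℝ) (hp : 0 ≤ p) (w : EReal) (hw : w ≠ ⊥) (r : ℝ) :
    (p:EReal) * (w + (r:EReal)) = (p:EReal) * w + ((p*r:ℝ):EReal) := by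
  rcases eq_or_lt_of_le hp with h | h
  · rw [← h]; simp
  · induction w using EReal.rec with
    | bot => exact absurd rfl hw
    | coe t => norm_cast; ring
    | top =>
      rw [EReal.top_add_coe, EReal.mul_top_of_pos (by exact_mod_cast h), EReal.top_add_coe]

lemma ereal_rearrange (p q : EReal) (hp : p ≠ ⊥) (hq : q ≠ ⊥) (r s : ℝ) :
    (p + (r:EReal)) + (q + (s:EReal)) = (p + q) + ((r+s:ℝ):EReal) := by
  induction p using EReal.rec with
  | bot => exact absurd rfl hp
  | top =>
    have h1 : q + (s:EReal) ≠ ⊥ := by simp [EReal.add_eq_bot_iff, hq]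
    rw [EReal.top_add_coe, EReal.top_add_of_ne_bot h1, EReal.top_add_of_ne_bot hq,
      EReal.top_add_coe]
  | coe t =>
    induction q using EReal.rec with
    | bot => exact absurd rfl hq
    | coe v => norm_cast; ring
    | top =>
      rw [show (t:EReal) + (r:EReal) = ((t+r:ℝ):EReal) from (EReal.coe_add t r).symm,
        EReal.top_add_coe, EReal.add_top_of_ne_bot (EReal.coe_ne_bot _),
        EReal.add_top_of_ne_bot (EReal.coe_ne_bot _), EReal.top_add_coe]

/-- Ekeland's variational principle for real-valued lsc nonnegative functions. -/
lemma ekeland_real {X : Type*} [MetricSpace X] [CompleteSpace X]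
    (G : X → ℝ) (hlsc : LowerSemicontinuous G) (hnn : ∀ z, 0 ≤ G z)
    (x₀ : X) (δ lam : ℝ) (hδ : 0 < δ) (hlam : 0 < lam) (h₀ : G x₀ ≤ δ * lam) :
    ∃ u, G u ≤ G x₀ ∧ dist u x₀ ≤ lam ∧ ∀ z, G u ≤ G z + δ * dist z u := by
  have key : ∀ (x : X) (n : ℕ), ∃ y, (G y + δ * dist y x ≤ G x) ∧
      ∀ z, G z + δ * dist z x ≤ G x → G y ≤ G z + (1/2 : ℝ)^n := by
    intro x n
    set F : Set X := {z | G z + δ * dist z x ≤ G x} with hF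
    have hxF : x ∈ F := by simp [hF]
    have hne : (G '' F).Nonempty := ⟨G x, x, hxF, rfl⟩
    have hbdd : BddBelow (G '' F) := ⟨0, by rintro v ⟨z, -, rfl⟩; exact hnn z⟩
    obtain ⟨v, ⟨y, hyF, rfl⟩, hv⟩ := Real.lt_sInf_add_pos hne
      (ε := (1/2:ℝ)^n) (by positivity)
    exact ⟨y, hyF, fun z hz => le_trans hv.le
      (by have := csInf_le hbdd ⟨z, hz, rfl⟩; linarith)⟩
  choose! next h1 h2 using key
  set seq : ℕ → X := fun n => Nat.rec x₀ (fun k x => next x k) n with hseq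
  have hseq0 : seq 0 = x₀ := rfl
  have hseqS : ∀ n, seq (n+1) = next (seq n) n := fun n => rfl
  have hstep1 : ∀ n, G (seq (n+1)) + δ * dist (seq (n+1)) (seq n) ≤ G (seq n) := by
    intro n; rw [hseqS]; exact h1 (seq n) n
  have hstep2 : ∀ n z, G z + δ * dist z (seq n) ≤ G (seq n) →
      G (seq (n+1)) ≤ G z + (1/2:ℝ)^n := by
    intro n; rw [hseqS]; exact h2 (seq n) n
  have hdec : ∀ n, G (seq (n+1)) ≤ G (seq n) := by
    intro n
    have := hstep1 n
    have h2 : 0 ≤ δ * dist (seq (n+1)) (seq n) := by positivity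
    linarith
  have hanti : Antitone (fun n => G (seq n)) :=
    antitone_nat_of_succ_le hdec
  have htel : ∀ n m, n ≤ m → δ * dist (seq m) (seq n) ≤ G (seq n) - G (seq m) := by
    intro n m hnm
    induction m, hnm using Nat.le_induction with
    | base => simp
    | succ m hnm ih =>
      have h3 := hstep1 m
      have h4 : dist (seq (m+1)) (seq n) ≤ dist (seq (m+1)) (seq m) + dist (seq m) (seq n) :=
        dist_triangle _ _ _
      nlinarith [dist_nonneg (x := seq (m+1)) (y := seq m)]
  have hbddr : BddBelow (Set.range fun n => G (seq n)) :=
    ⟨0, by rintro v ⟨n, rfl⟩; exact hnn _⟩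
  set L : ℝ := ⨅ n, G (seq n) with hLdef
  have hL : Tendsto (fun n => G (seq n)) atTop (𝓝 L) :=
    tendsto_atTop_ciInf hanti hbddr
  have hLle : ∀ n, L ≤ G (seq n) := fun n => ciInf_le hbddr n
  have hcauchy : CauchySeq seq := by
    apply cauchySeq_of_le_tendsto_0 (fun n => (G (seq n) - L) / δ)
    · intro n m N hn hm
      rcases le_total n m with h | h
      · have := htel n m h
        have h5 := hanti hn
        have h6 := hLle m
        rw [dist_comm]
        rw [le_div_iff₀ hδ]; simp only at h5 ⊢; nlinarith
      · have := htel m n h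
        have h5 := hanti hm
        have h6 := hLle n
        rw [le_div_iff₀ hδ]; simp only at h5 ⊢; nlinarith
    · have : Tendsto (fun n => (G (seq n) - L) / δ) atTop (𝓝 ((L - L)/δ)) :=
        ((hL.sub tendsto_const_nhds).div_const δ)
      simpa using this
  obtain ⟨u, hu⟩ := cauchySeq_tendsto_of_complete hcauchy
  have hGuL : G u ≤ L := by
    by_contra h
    push_neg at h
    obtain ⟨y, hy1, hy2⟩ := exists_between h
    have hev1 : ∀ᶠ z in 𝓝 u, y < G z := hlsc u y hy2
    have hev2 : ∀ᶠ n in atTop, y < G (seq n) := hu.eventually hev1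
    have hev3 : ∀ᶠ n in atTop, G (seq n) < y :=
      hL.eventually (Filter.Tendsto.eventually_lt_const hy1 tendsto_id) |>.mono (fun n h => h)
    obtain ⟨n, h4, h5⟩ := (hev2.and hev3).exists
    linarith
  have hdistu : ∀ n, dist u (seq n) * δ ≤ G (seq n) - L := by
    intro n
    have ht : Tendsto (fun m => dist (seq m) (seq n) * δ) atTop (𝓝 (dist u (seq n) * δ)) :=
      (hu.dist tendsto_const_nhds).mul_const δ
    have ht2 : Tendsto (fun m => G (seq n) - G (seq m)) atTop (𝓝 (G (seq n) - L)) :=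
      tendsto_const_nhds.sub hL
    refine le_of_tendsto_of_tendsto ht ht2 ?_
    filter_upwards [eventually_ge_atTop n] with m hm
    have := htel n m hm
    nlinarith
  refine ⟨u, le_trans hGuL (by simpa [hseq0] using hLle 0), ?_, ?_⟩
  · have ht : Tendsto (fun m => dist (seq m) x₀) atTop (𝓝 (dist u x₀)) :=
      hu.dist tendsto_const_nhds
    refine le_of_tendsto ht (Eventually.of_forall fun m => ?_)
    have h7 := htel 0 m (Nat.zero_le m)
    rw [hseq0] at h7
    have h8 := hnn (seq m)
    nlinarith
  · intro z
    by_contra h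
    push_neg at h
    have hzF : ∀ n, G z + δ * dist z (seq n) ≤ G (seq n) := by
      intro n
      have h9 : dist z (seq n) ≤ dist z u + dist u (seq n) := dist_triangle _ _ _
      have h10 := hdistu n
      have h11 := hGuL
      nlinarith
    have h12 : ∀ n, L ≤ G z + (1/2:ℝ)^n := by
      intro n
      exact le_trans (hLle (n+1)) (hstep2 n z (hzF n))
    have h13 : L ≤ G z := by
      have ht : Tendsto (fun n : ℕ => G z + (1/2:ℝ)^n) atTop (𝓝 (G z + 0)) :=
        tendsto_const_nhds.add (tendsto_pow_atTop_nhds_zero_of_lt_one (by norm_num) (by norm_num))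
      have h14 : L ≤ G z + 0 :=
        le_of_tendsto_of_tendsto' (f := fun _ : ℕ => L) tendsto_const_nhds ht h12
      linarith
    have := hGuL
    nlinarith [dist_nonneg (x := z) (y := u)]

/-- Ekeland's variational principle, `EReal`-valued version. -/
lemma ekeland_ereal {X : Type*} [MetricSpace X] [CompleteSpace X]
    (g : X → EReal) (hlsc : LowerSemicontinuous g) (hnn : ∀ z, 0 ≤ g z)
    (x₀ : X) (δ lam : ℝ) (hδ : 0 < δ) (hlam : 0 < lam)
    (h₀ : g x₀ < ((δ * lam : ℝ) : EReal)) :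
    ∃ u, ∃ Gu : ℝ, g u = (Gu : EReal) ∧ g u ≤ g x₀ ∧ dist u x₀ ≤ lam ∧
      ∀ z, g u ≤ g z + ((δ * dist z u : ℝ) : EReal) := by
  set M : ℝ := δ * lam with hM
  have hMpos : 0 < M := mul_pos hδ hlam
  set G : X → ℝ := fun z => (min (g z) ((M : ℝ) : EReal)).toReal with hG
  have hmin_nn : ∀ z, (0 : EReal) ≤ min (g z) ((M:ℝ):EReal) :=
    fun z => le_min (hnn z) (by exact_mod_cast hMpos.le)
  have hmin_ne_top : ∀ z, min (g z) ((M:ℝ):EReal) ≠ ⊤ :=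
    fun z => ne_top_of_le_ne_top (EReal.coe_ne_top M) (min_le_right _ _)
  have hmin_ne_bot : ∀ z, min (g z) ((M:ℝ):EReal) ≠ ⊥ := by
    intro z
    intro h
    have := hmin_nn z
    rw [h] at this
    exact absurd this (by norm_num)
  have hcoeG : ∀ z, ((G z : ℝ) : EReal) = min (g z) ((M:ℝ):EReal) :=
    fun z => EReal.coe_toReal (hmin_ne_top z) (hmin_ne_bot z)
  have hGnn : ∀ z, 0 ≤ G z := by
    intro z
    have := hmin_nn z
    rw [← hcoeG z] at this
    exact_mod_cast this
  have hGlsc : LowerSemicontinuous G := by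
    intro x y hy
    have hy' : ((y:ℝ):EReal) < min (g x) ((M:ℝ):EReal) := by
      rw [← hcoeG x]; exact_mod_cast hy
    have hyg : ((y:ℝ):EReal) < g x := lt_of_lt_of_le hy' (min_le_left _ _)
    have hyM : ((y:ℝ):EReal) < ((M:ℝ):EReal) := lt_of_lt_of_le hy' (min_le_right _ _)
    filter_upwards [hlsc x _ hyg] with z hz
    have : ((y:ℝ):EReal) < min (g z) ((M:ℝ):EReal) := lt_min hz hyM
    rw [← hcoeG z] at this
    exact_mod_cast this
  have hgx₀ : min (g x₀) ((M:ℝ):EReal) = g x₀ := min_eq_left h₀.le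
  have hGx₀lt : G x₀ < M := by
    have : ((G x₀:ℝ):EReal) < ((M:ℝ):EReal) := by
      rw [hcoeG x₀, hgx₀]; exact h₀
    exact_mod_cast this
  obtain ⟨u, hu1, hu2, hu3⟩ := ekeland_real G hGlsc hGnn x₀ δ lam hδ hlam (le_of_lt hGx₀lt)
  have hGuM : G u < M := lt_of_le_of_lt hu1 hGx₀lt
  have hgu : g u = ((G u : ℝ) : EReal) := by
    rcases le_or_gt ((M:ℝ):EReal) (g u) with h | h
    · exfalso
      have : min (g u) ((M:ℝ):EReal) = ((M:ℝ):EReal) := min_eq_right h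
      have h2 := hcoeG u
      rw [this] at h2
      have : G u = M := by exact_mod_cast h2
      linarith
    · rw [hcoeG u]; exact (min_eq_left h.le).symm
  refine ⟨u, G u, hgu, ?_, hu2, ?_⟩
  · rw [hgu, ← hgx₀, ← hcoeG x₀]
    exact_mod_cast hu1
  · intro z
    rcases le_or_gt ((M:ℝ):EReal) (g z) with h | h
    · calc g u ≤ ((M:ℝ):EReal) := by rw [hgu]; exact_mod_cast hGuM.le
        _ ≤ g z := h
        _ = g z + ((0:ℝ):EReal) := by norm_num
        _ ≤ g z + ((δ * dist z u : ℝ):EReal) := by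
            apply add_le_add_right
            exact_mod_cast (by positivity : (0:ℝ) ≤ δ * dist z u)
    · have hgz : g z = ((G z:ℝ):EReal) := by
        rw [hcoeG z]; exact (min_eq_left h.le).symm
      rw [hgu, hgz, ← EReal.coe_add]
      exact_mod_cast hu3 z

/-- From a global Ekeland-type lower estimate at `u`, a convex function has a
subgradient at `u` of norm at most `δ`. -/
lemma exists_small_subgrad {X : Type*} [NormedAddCommGroup X] [NormedSpace ℝ X]
    (g : X → EReal) (hnb : ∀ z, g z ≠ ⊥)
    (gconv : ∀ x y : X, ∀ p q : ℝ, 0 ≤ p → 0 ≤ q → p + q = 1 →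
      g (p • x + q • y) ≤ (p : EReal) * g x + (q : EReal) * g y)
    (u : X) (Gu : ℝ) (hGu : g u = (Gu : EReal)) (δ : ℝ) (hδ : 0 ≤ δ)
    (hEk : ∀ z, g u ≤ g z + ((δ * dist z u : ℝ) : EReal)) :
    ∃ w : X →L[ℝ] ℝ, ‖w‖ ≤ δ ∧ ∀ z, g u + ((w (z - u) : ℝ) : EReal) ≤ g z := by
  classical
  set S : X → Set ℝ := fun d => {v | ∃ t : ℝ, 0 < t ∧ ∃ d₁ : X, g (u + t • d₁) ≠ ⊤ ∧
    v = ((g (u + t • d₁)).toReal - Gu) / t + δ * ‖d - d₁‖} with hS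
  have hel : ∀ d : X, δ * ‖d‖ ∈ S d := by
    intro d
    refine ⟨1, one_pos, 0, ?_, ?_⟩
    · simp [hGu]
    · simp [hGu]
  have hne : ∀ d, (S d).Nonempty := fun d => ⟨_, hel d⟩
  have hlb : ∀ d, ∀ v ∈ S d, -(δ * ‖d‖) ≤ v := by
    rintro d v ⟨t, ht, d₁, htop, rfl⟩
    have hEk' := hEk (u + t • d₁)
    have hd : dist (u + t • d₁) u = t * ‖d₁‖ := by
      rw [dist_eq_norm]
      simp [norm_smul, abs_of_pos ht]
    rw [hGu, hd] at hEk'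
    have hfin : g (u + t • d₁) = (((g (u + t • d₁)).toReal : ℝ) : EReal) :=
      (EReal.coe_toReal htop (hnb _)).symm
    rw [hfin, ← EReal.coe_add] at hEk'
    have hEkr : Gu ≤ (g (u + t • d₁)).toReal + δ * (t * ‖d₁‖) := by exact_mod_cast hEk'
    have h1 : -(δ * ‖d₁‖) ≤ ((g (u + t • d₁)).toReal - Gu) / t := by
      rw [le_div_iff₀ ht]; nlinarith
    have h2 : ‖d₁‖ - ‖d - d₁‖ ≤ ‖d‖ := by
      have := norm_sub_le d (d - d₁)
      simp at this
      linarith [norm_sub_le d (d - d₁)]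
    nlinarith
  have hbdd : ∀ d, BddBelow (S d) := fun d => ⟨-(δ * ‖d‖), hlb d⟩
  set N : X → ℝ := fun d => sInf (S d) with hN
  have hNub : ∀ d, N d ≤ δ * ‖d‖ := fun d => csInf_le (hbdd d) (hel d)
  have hNlb : ∀ d, -(δ * ‖d‖) ≤ N d := fun d => le_csInf (hne d) (hlb d)
  -- scaling
  have hmap : ∀ c : ℝ, 0 < c → ∀ d : X, ∀ v ∈ S d, c * v ∈ S (c • d) := by
    rintro c hc d v ⟨t, ht, d₁, htop, rfl⟩
    refine ⟨t / c, div_pos ht hc, c • d₁, ?_, ?_⟩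
    · rw [smul_smul, div_mul_cancel₀ _ (ne_of_gt hc)]
      exact htop
    · rw [smul_smul, div_mul_cancel₀ _ (ne_of_gt hc)]
      have hnrm : ‖c • d - c • d₁‖ = c * ‖d - d₁‖ := by
        rw [← smul_sub, norm_smul, Real.norm_eq_abs, abs_of_pos hc]
      rw [hnrm]
      field_simp
  have hhom : ∀ c : ℝ, 0 < c → ∀ d : X, N (c • d) = c * N d := by
    intro c hc d
    apply le_antisymm
    · have h1 : N (c • d) / c ≤ N d := by
        apply le_csInf (hne d)
        intro v hv
        have := csInf_le (hbdd (c • d)) (hmap c hc d v hv)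
        rw [div_le_iff₀ hc]
        linarith [this]
      calc N (c • d) = (N (c • d) / c) * c := by field_simp
        _ ≤ N d * c := by nlinarith [h1]
        _ = c * N d := by ring
    · apply le_csInf (hne (c • d))
      intro w hw
      have h2 : c⁻¹ * w ∈ S d := by
        have := hmap c⁻¹ (inv_pos.mpr hc) (c • d) w hw
        rwa [inv_smul_smul₀ (ne_of_gt hc)] at this
      have h3 : N d ≤ c⁻¹ * w := csInf_le (hbdd d) h2
      calc c * N d ≤ c * (c⁻¹ * w) := by nlinarith [h3]
        _ = w := by field_simp
  -- subadditivity
  have hadd : ∀ d e : X, N (d + e) ≤ N d + N e := by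
    intro d e
    have main : ∀ v ∈ S d, ∀ w ∈ S e, N (d + e) ≤ v + w := by
      rintro v ⟨t, ht, a₁, hat, rfl⟩ w ⟨s, hs, b₁, hbt, rfl⟩
      have hts : 0 < t + s := by linarith
      set τ : ℝ := t * s / (t + s) with hτdef
      have hτ : 0 < τ := div_pos (mul_pos ht hs) hts
      set p : ℝ := s / (t + s) with hpdef
      set q : ℝ := t / (t + s) with hqdef
      have hp : 0 ≤ p := by positivity
      have hq : 0 ≤ q := by positivity
      have hpq : p + q = 1 := by rw [hpdef, hqdef]; field_simp; ring
      have hpt : p * t = τ := by rw [hpdef, hτdef]; field_simp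
      have hqs : q * s = τ := by rw [hqdef, hτdef]; field_simp
      have hpoint : p • (u + t • a₁) + q • (u + s • b₁) = u + τ • (a₁ + b₁) := by
        rw [smul_add, smul_add, smul_smul, smul_smul, hpt, hqs, smul_add]
        rw [show p • u + τ • a₁ + (q • u + τ • b₁) = (p + q) • u + (τ • a₁ + τ • b₁) by
          rw [add_smul]; abel]
        rw [hpq, one_smul]
      have hconv := gconv (u + t • a₁) (u + s • b₁) p q hp hq hpq
      rw [hpoint] at hconv
      set G₁ : ℝ := (g (u + t • a₁)).toReal with hG₁
      set G₂ : ℝ := (g (u + s • b₁)).toReal with hG₂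
      have hf1 : g (u + t • a₁) = ((G₁ : ℝ) : EReal) := (EReal.coe_toReal hat (hnb _)).symm
      have hf2 : g (u + s • b₁) = ((G₂ : ℝ) : EReal) := (EReal.coe_toReal hbt (hnb _)).symm
      rw [hf1, hf2, ← EReal.coe_mul, ← EReal.coe_mul, ← EReal.coe_add] at hconv
      set R : ℝ := p * G₁ + q * G₂ with hR
      have hntop : g (u + τ • (a₁ + b₁)) ≠ ⊤ :=
        ne_top_of_le_ne_top (EReal.coe_ne_top R) hconv
      set G₃ : ℝ := (g (u + τ • (a₁ + b₁))).toReal with hG₃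
      have hG₃R : G₃ ≤ R := by
        have := EReal.toReal_le_toReal hconv (hnb _) (EReal.coe_ne_top R)
        rwa [EReal.toReal_coe] at this
      have helem : (G₃ - Gu) / τ + δ * ‖(d + e) - (a₁ + b₁)‖ ∈ S (d + e) :=
        ⟨τ, hτ, a₁ + b₁, hntop, rfl⟩
      have hNle := csInf_le (hbdd (d + e)) helem
      have hsplit : (R - Gu) / τ = (G₁ - Gu) / t + (G₂ - Gu) / s := by
        rw [hR, hτdef, hpdef, hqdef]
        field_simp
        ring
      have hdiv : (G₃ - Gu) / τ ≤ (G₁ - Gu) / t + (G₂ - Gu) / s := by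
        rw [← hsplit]
        gcongr
      have hnrm : ‖(d + e) - (a₁ + b₁)‖ ≤ ‖d - a₁‖ + ‖e - b₁‖ := by
        have : (d + e) - (a₁ + b₁) = (d - a₁) + (e - b₁) := by abel
        rw [this]
        exact norm_add_le _ _
      have hδnrm : δ * ‖(d + e) - (a₁ + b₁)‖ ≤ δ * ‖d - a₁‖ + δ * ‖e - b₁‖ := by
        nlinarith
      linarith
    have h1 : ∀ v ∈ S d, N (d + e) - N e ≤ v := by
      intro v hv
      have h2 : N (d + e) - v ≤ N e := le_csInf (hne e) (fun w hw => by linarith [main v hv w hw])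
      linarith
    have := le_csInf (hne d) h1
    linarith
  -- Hahn-Banach extension from the trivial subspace
  have hN0 : (0:ℝ) ≤ N 0 := by
    have := hNlb 0
    simpa using this
  obtain ⟨w, -, hw⟩ := exists_extension_of_le_sublinear ⟨⊥, 0⟩ N
    (fun c hc x => hhom c hc x) hadd (by
      rintro ⟨x, hx⟩
      have hx0 : x = 0 := by simpa using hx
      subst hx0
      simpa using hN0)
  have hbound : ∀ x, |w x| ≤ δ * ‖x‖ := by
    intro x
    rw [abs_le]
    constructor
    · have h1 := hw (-x)
      have h2 := hNub (-x)
      rw [map_neg] at h1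
      rw [norm_neg] at h2
      linarith
    · exact (hw x).trans (hNub x)
  set W : X →L[ℝ] ℝ := w.mkContinuous δ
    (fun x => by rw [Real.norm_eq_abs]; exact hbound x) with hW
  have hWval : ∀ x, W x = w x := fun x => rfl
  refine ⟨W, LinearMap.mkContinuous_norm_le w hδ _, ?_⟩
  intro z
  by_cases hz : g z = ⊤
  · rw [hz]; exact le_top
  · have helem : (g z).toReal - Gu ∈ S (z - u) := by
      refine ⟨1, one_pos, z - u, ?_, ?_⟩
      · simpa using hz
      · simp
    have hNz : N (z - u) ≤ (g z).toReal - Gu := csInf_le (hbdd _) helem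
    have h3 : W (z - u) ≤ (g z).toReal - Gu := le_trans (hw (z - u)) hNz
    have h4 : Gu + W (z - u) ≤ (g z).toReal := by linarith
    rw [hGu, ← EReal.coe_add, ← EReal.coe_toReal hz (hnb z)]
    exact_mod_cast h4

/-- If `f ∈ Γ(X)` on a Banach space, `ȳ* ∈ ∂f(x̄)`, and `∂f` is metrically
subregular at `x̄` for `ȳ*` with constant `κ` on the closed ball `B_a(x̄)`
(i.e. `d(x, (∂f)⁻¹(ȳ*)) ≤ κ·d(ȳ*, ∂f(x))`, stated pointwise over `y* ∈ ∂f(x)`), then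
for every `0 < c < 1/(4κ)` the quadratic growth condition
`f(x) ≥ f(x̄) + ⟨ȳ*, x - x̄⟩ + c·d(x, (∂f)⁻¹(ȳ*))²` holds on the closed ball `B_{2a/3}(x̄)`. -/
theorem stmt_1 {X : Type*} [NormedAddCommGroup X] [NormedSpace ℝ X] [CompleteSpace X]
    (f : X → EReal)
    (hproper : ∃ x, f x ≠ ⊤) (hne_bot : ∀ x, f x ≠ ⊥)
    (hlsc : LowerSemicontinuous f)
    (hconv : ∀ x y : X, ∀ a b : ℝ, 0 ≤ a → 0 ≤ b → a + b = 1 →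
      f (a • x + b • y) ≤ (a : EReal) * f x + (b : EReal) * f y)
    (xbar : X) (ybar : X →L[ℝ] ℝ) (hybar : ybar ∈ subdiff f xbar)
    (κ a : ℝ) (hκ : 0 < κ) (ha : 0 < a)
    (hsubreg : ∀ x ∈ closedBall xbar a, ∀ y ∈ subdiff f x,
      infDist x {z | ybar ∈ subdiff f z} ≤ κ * ‖y - ybar‖) :
    ∀ c : ℝ, 0 < c → c < 1 / (4 * κ) →
      ∀ x ∈ closedBall xbar (2 * a / 3),
        f xbar + ((ybar (x - xbar) + c * (infDist x {z | ybar ∈ subdiff f z}) ^ 2 : ℝ) : EReal)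
          ≤ f x := by
  obtain ⟨hfxt, hyb2⟩ := hybar
  set S : Set X := {z | ybar ∈ subdiff f z} with hSdef
  have hxbarS : xbar ∈ S := ⟨hfxt, hyb2⟩
  obtain ⟨Fb, hFb⟩ : ∃ v : ℝ, v = (f xbar).toReal := ⟨_, rfl⟩
  have hfx : f xbar = ((Fb : ℝ) : EReal) := by
    rw [hFb]; exact (EReal.coe_toReal hfxt (hne_bot _)).symm
  obtain ⟨φ, hφdef⟩ : ∃ φ : X → ℝ, φ = fun z => -(Fb + ybar (z - xbar)) := ⟨_, rfl⟩
  obtain ⟨g, hgdef⟩ : ∃ g : X → EReal, g = fun z => f z + ((φ z : ℝ) : EReal) := ⟨_, rfl⟩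
  have hgz : ∀ z, g z = f z + ((φ z : ℝ) : EReal) := fun z => by rw [hgdef]
  have hgnb : ∀ z, g z ≠ ⊥ := by
    intro z
    simp [hgz z, EReal.add_eq_bot_iff, hne_bot z]
  have hg0 : ∀ z, (0 : EReal) ≤ g z := by
    intro z
    have h1 := hyb2 z
    rw [hfx, ← EReal.coe_add] at h1
    have h0 : (0:EReal) = ((0:ℝ):EReal) := rfl
    rw [hgz z, h0, ereal_coe_le_add_iff]
    have heq : (0 : ℝ) - φ z = Fb + ybar (z - xbar) := by simp [hφdef]
    rw [heq]
    exact h1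
  have hφcont : Continuous φ := by
    rw [hφdef]
    exact (continuous_const.add (ybar.continuous.comp
      (continuous_id.sub continuous_const))).neg
  have hglsc : LowerSemicontinuous g := by
    intro x₀ y hy
    rw [hgz x₀] at hy
    induction y using EReal.rec with
    | bot =>
      filter_upwards with z
      exact bot_lt_iff_ne_bot.mpr (hgnb z)
    | top => exact absurd hy (not_top_lt)
    | coe y =>
      obtain ⟨A, η, hη, hA, hAy⟩ : ∃ A η : ℝ, 0 < η ∧ ((A:ℝ):EReal) < f x₀ ∧
          y ≤ A + (φ x₀ - η) := by
        by_cases ht : f x₀ = ⊤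
        · exact ⟨y - φ x₀ + 1, 1, one_pos, ht ▸ EReal.coe_lt_top _, by ring_nf; rfl⟩
        · have hB : f x₀ = (((f x₀).toReal : ℝ) : EReal) :=
            (EReal.coe_toReal ht (hne_bot _)).symm
          obtain ⟨B, hBdef⟩ : ∃ v : ℝ, v = (f x₀).toReal := ⟨_, rfl⟩
          rw [← hBdef] at hB
          have hyB : y < B + φ x₀ := by
            have h2 : (y:EReal) < ((B + φ x₀ : ℝ):EReal) := by
              rw [EReal.coe_add, ← hB]
              exact hy
            exact EReal.coe_lt_coe_iff.mp h2
          refine ⟨B - (B + φ x₀ - y)/2, (B + φ x₀ - y)/2, by linarith, ?_, by linarith⟩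
          rw [hB]
          exact_mod_cast (by linarith [hyB] : B - (B + φ x₀ - y)/2 < B)
      have hev1 : ∀ᶠ z in 𝓝 x₀, ((A:ℝ):EReal) < f z := hlsc x₀ A hA
      have hev2 : ∀ᶠ z in 𝓝 x₀, φ x₀ - η < φ z :=
        (hφcont.tendsto x₀).eventually_const_lt (by linarith)
      filter_upwards [hev1, hev2] with z h1 h2
      have h3 : ((A:EReal)) + ((φ x₀ - η:ℝ):EReal) < f z + ((φ z:ℝ):EReal) :=
        EReal.add_lt_add h1 (by exact_mod_cast h2)
      rw [hgz z]
      calc (y : EReal) ≤ ((A + (φ x₀ - η) : ℝ):EReal) := by exact_mod_cast hAy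
        _ = ((A:ℝ):EReal) + ((φ x₀ - η:ℝ):EReal) := EReal.coe_add _ _
        _ < f z + ((φ z:ℝ):EReal) := h3
  have hgconv : ∀ x' y' : X, ∀ p q : ℝ, 0 ≤ p → 0 ≤ q → p + q = 1 →
      g (p • x' + q • y') ≤ (p:EReal) * g x' + (q:EReal) * g y' := by
    intro x' y' p q hp hq hpq
    have hφa : φ (p • x' + q • y') = p * φ x' + q * φ y' := by
      simp only [hφdef, map_add, map_sub, map_smul, smul_eq_mul]
      have : q = 1 - p := by linarith
      subst this
      ring
    calc g (p • x' + q • y') = f (p • x' + q • y') + ((φ (p • x' + q • y') : ℝ) : EReal) := hgz _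
      _ ≤ ((p:EReal) * f x' + (q:EReal) * f y') + ((p * φ x' + q * φ y' : ℝ) : EReal) := by
          rw [hφa]
          exact add_le_add_left (hconv x' y' p q hp hq hpq) _
      _ = ((p:EReal) * f x' + ((p * φ x' : ℝ):EReal)) + ((q:EReal) * f y' + ((q * φ y' : ℝ):EReal)) := by
          rw [ereal_rearrange _ _ (ereal_mul_ne_bot p hp _ (hne_bot x'))
            (ereal_mul_ne_bot q hq _ (hne_bot y'))]
      _ = (p:EReal) * g x' + (q:EReal) * g y' := by
          rw [hgz x', hgz y',
            ereal_mul_add_coe p hp _ (hne_bot x'), ereal_mul_add_coe q hq _ (hne_bot y')]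
  -- main part
  intro c hc hcu x hx
  obtain ⟨r, hrdef⟩ : ∃ v : ℝ, v = infDist x S := ⟨_, rfl⟩
  rw [show infDist x S = r from hrdef.symm]
  have hr0 : 0 ≤ r := hrdef ▸ infDist_nonneg
  have hxball : dist x xbar ≤ 2 * a / 3 := mem_closedBall.mp hx
  have hra : r ≤ 2 * a / 3 := le_trans (hrdef ▸ infDist_le_dist_of_mem hxbarS) hxball
  suffices hsuff : ((c * r ^ 2 : ℝ) : EReal) ≤ g x by
    have h4 : ((c * r ^ 2 - φ x : ℝ) : EReal) ≤ f x := by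
      rw [hgz x, ereal_coe_le_add_iff] at hsuff
      exact hsuff
    have h5 : c * r ^ 2 - φ x = Fb + (ybar (x - xbar) + c * r ^ 2) := by
      simp [hφdef]; ring
    calc f xbar + ((ybar (x - xbar) + c * r ^ 2 : ℝ) : EReal)
        = ((Fb + (ybar (x - xbar) + c * r ^ 2) : ℝ) : EReal) := by rw [hfx, ← EReal.coe_add]
      _ = ((c * r ^ 2 - φ x : ℝ) : EReal) := by rw [h5]
      _ ≤ f x := h4
  rcases eq_or_lt_of_le hr0 with hr | hr
  · rw [← hr]
    norm_num
    exact hg0 x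
  by_contra hcon
  have hgx : g x < ((c * r ^ 2 : ℝ) : EReal) := not_le.mp hcon
  obtain ⟨δ, hδdef⟩ : ∃ v : ℝ, v = 2 * c * r := ⟨_, rfl⟩
  obtain ⟨lam, hlamdef⟩ : ∃ v : ℝ, v = r / 2 := ⟨_, rfl⟩
  have hδ : 0 < δ := by rw [hδdef]; positivity
  have hlam : 0 < lam := by rw [hlamdef]; positivity
  have hδlam : δ * lam = c * r ^ 2 := by rw [hδdef, hlamdef]; ring
  obtain ⟨u, Gu, hGu, hgu_le, hdu, hEk⟩ :=
    ekeland_ereal g hglsc hg0 x δ lam hδ hlam (by rw [hδlam]; exact hgx)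
  obtain ⟨w, hwn, hwsub⟩ :=
    exists_small_subgrad g hgnb hgconv u Gu hGu δ hδ.le hEk
  have hfu_ne_top : f u ≠ ⊤ := by
    intro htop
    rw [hgz u] at hGu
    rw [htop, EReal.top_add_coe] at hGu
    exact EReal.coe_ne_top Gu hGu.symm
  have hy_mem : (w + ybar) ∈ subdiff f u := by
    refine ⟨hfu_ne_top, fun z => ?_⟩
    have h5 := hwsub z
    rw [hgz u, hgz z] at h5
    rw [ereal_add_coe_coe, ereal_add_coe_le_iff] at h5
    have h6 : φ u + w (z - u) - φ z = (w + ybar) (z - u) := by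
      simp [hφdef, map_sub]
      ring
    rwa [h6] at h5
  have hu_ball : u ∈ closedBall xbar a := by
    rw [mem_closedBall]
    have h7 : dist u xbar ≤ dist u x + dist x xbar := dist_triangle _ _ _
    rw [hlamdef] at hdu
    linarith
  have hsr := hsubreg u hu_ball (w + ybar) hy_mem
  have h8 : (w + ybar) - ybar = w := by abel
  rw [h8] at hsr
  have h9 : infDist u S ≤ κ * δ := le_trans hsr (by nlinarith [norm_nonneg w])
  have h10 : r ≤ infDist u S + dist x u := hrdef ▸ infDist_le_infDist_add_dist
  have h11 : dist x u ≤ r / 2 := by rw [dist_comm]; rw [hlamdef] at hdu; exact hdu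
  have h12 : c * (4 * κ) < 1 := (lt_div_iff₀ (by positivity)).mp hcu
  rw [hδdef] at h9
  nlinarith
end

section
/- Let X be a real Banach space and let f : X → ℝ ∪ {∞} be a proper lower semicontinuous function (not necessarily convex). Let x̄ ∈ X and ȳ* ∈ X* with ȳ* ∈ ∂f(x̄), where ∂f denotes the convex subdifferential. Suppose there exist a neighborhood U of x̄ and a constant c > 0 such that f(x) ≥ f(x̄) + ⟨ȳ*, x − x̄⟩ + c·d(x, (∂f)⁻¹(ȳ*))² for all x ∈ U. Then d(x, (∂f)⁻¹(ȳ*)) ≤ (1/c)·d(ȳ*, ∂f(x)) for all x ∈ U; that is, ∂f is metrically subregular at x̄ for ȳ* with constant 1/c. -/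
open Topology Filter Metric Set

/-- Let `f` be a proper lower semicontinuous (not necessarily convex) function
on a Banach space `X`, and let `ȳ* ∈ ∂f(x̄)` (convex subdifferential). If the quadratic
growth condition `f(x) ≥ f(x̄) + ⟨ȳ*, x - x̄⟩ + c·d(x, (∂f)⁻¹(ȳ*))²` holds on a neighborhood
`U` of `x̄`, then `d(x, (∂f)⁻¹(ȳ*)) ≤ (1/c)·d(ȳ*, ∂f(x))` for all `x ∈ U` (stated pointwise
over `y* ∈ ∂f(x)`, matching the convention `d(ȳ*, ∅) = ∞`), i.e. `∂f` is metrically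
subregular at `x̄` for `ȳ*` with constant `1/c`. -/
theorem stmt_2 {X : Type*} [NormedAddCommGroup X] [NormedSpace ℝ X] [CompleteSpace X]
    (f : X → EReal)
    (hproper : ∃ x, f x ≠ ⊤) (hne_bot : ∀ x, f x ≠ ⊥)
    (hlsc : LowerSemicontinuous f)
    (xbar : X) (ybar : X →L[ℝ] ℝ) (hybar : ybar ∈ subdiff f xbar)
    (U : Set X) (hU : U ∈ 𝓝 xbar) (c : ℝ) (hc : 0 < c)
    (growth : ∀ x ∈ U,
      f xbar + ((ybar (x - xbar) + c * (infDist x {z | ybar ∈ subdiff f z}) ^ 2 : ℝ) : EReal)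
        ≤ f x) :
    ∀ x ∈ U, ∀ y ∈ subdiff f x,
      infDist x {z | ybar ∈ subdiff f z} ≤ (1 / c) * ‖y - ybar‖ := by
  intro x hx y hy
  set S : Set X := {z | ybar ∈ subdiff f z} with hS
  have hxbarS : xbar ∈ S := hybar
  have hSne : S.Nonempty := ⟨xbar, hxbarS⟩
  set d := infDist x S with hd
  have hd0 : 0 ≤ d := infDist_nonneg
  set n := y - ybar with hn
  have hn0 : 0 ≤ ‖n‖ := norm_nonneg _
  -- key pointwise inequality
  have key : ∀ z ∈ S, c * d ^ 2 ≤ n (x - z) := by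
    intro z hz
    have hfz_top : f z ≠ ⊤ := hz.1
    have hfx_top : f x ≠ ⊤ := hy.1
    have hfxbar_top : f xbar ≠ ⊤ := hybar.1
    obtain ⟨A, hA⟩ : ∃ A : ℝ, f xbar = (A : EReal) :=
      ⟨(f xbar).toReal, (EReal.coe_toReal hfxbar_top (hne_bot _)).symm⟩
    obtain ⟨B, hB⟩ : ∃ B : ℝ, f x = (B : EReal) :=
      ⟨(f x).toReal, (EReal.coe_toReal hfx_top (hne_bot _)).symm⟩
    obtain ⟨E, hE⟩ : ∃ E : ℝ, f z = (E : EReal) :=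
      ⟨(f z).toReal, (EReal.coe_toReal hfz_top (hne_bot _)).symm⟩
    have h1 : A + (ybar (x - xbar) + c * d ^ 2) ≤ B := by
      have := growth x hx
      rw [hA, hB, ← EReal.coe_add] at this
      exact_mod_cast this
    have h2 : B + y (z - x) ≤ E := by
      have := hy.2 z
      rw [hB, hE, ← EReal.coe_add] at this
      exact_mod_cast this
    have h3 : E + ybar (xbar - z) ≤ A := by
      have := hz.2 xbar
      rw [hE, hA, ← EReal.coe_add] at this
      exact_mod_cast this
    have e1 : n (x - z) = y (x - z) - ybar (x - z) := by
      simp [hn, ContinuousLinearMap.sub_apply]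
    have e2 : ybar (x - xbar) + ybar (xbar - z) = ybar (x - z) := by
      rw [← map_add, sub_add_sub_cancel]
    have e3 : y (z - x) = - y (x - z) := by rw [← map_neg, neg_sub]
    linarith
  -- hence c d² ≤ ‖n‖ d
  have hle : c * d ^ 2 ≤ ‖n‖ * d := by
    refine le_of_forall_pos_le_add ?_
    intro ε hε
    have hlt : infDist x S < d + ε / (‖n‖ + 1) := by
      rw [← hd]
      have : 0 < ε / (‖n‖ + 1) := by positivity
      linarith
    obtain ⟨z, hzS, hzd⟩ := (infDist_lt_iff hSne).1 hlt
    have h1 : c * d ^ 2 ≤ n (x - z) := key z hzS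
    have h2 : n (x - z) ≤ ‖n‖ * ‖x - z‖ := by
      calc n (x - z) ≤ ‖n (x - z)‖ := le_abs_self _
        _ ≤ ‖n‖ * ‖x - z‖ := ContinuousLinearMap.le_opNorm _ _
    have h3 : ‖x - z‖ < d + ε / (‖n‖ + 1) := by rwa [← dist_eq_norm]
    have h4 : ‖n‖ * (ε / (‖n‖ + 1)) ≤ ε := by
      rw [div_eq_inv_mul, ← mul_assoc]
      have : ‖n‖ * (‖n‖ + 1)⁻¹ ≤ 1 := by
        rw [mul_inv_le_iff₀ (by positivity)]
        linarith
      nlinarith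
    nlinarith
  rcases eq_or_lt_of_le hd0 with h | h
  · rw [← h]; positivity
  · have hcd : c * d ≤ ‖n‖ := by nlinarith
    rw [one_div, inv_mul_eq_div, le_div_iff₀ hc]
    linarith [mul_comm d c]
end

section
/- Let X be a real Banach space, let f ∈ Γ(X), and let x̄ ∈ X, ȳ* ∈ X* with ȳ* ∈ ∂f(x̄). Suppose there exist a neighborhood U of x̄ and a constant c > 0 such that f(x) ≥ f(x̄) + ⟨ȳ*, x − x̄⟩ + c·‖x − x̄‖² for all x ∈ U. Then ∂f is strongly metrically subregular at x̄ for ȳ* with constant 1/c: there is a neighborhood U' of x̄ such that ‖x − x̄‖ ≤ (1/c)·d(ȳ*, ∂f(x)) for all x ∈ U'. -/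
open Topology Filter Metric Set

/-- If `f ∈ Γ(X)` on a Banach space, `ȳ* ∈ ∂f(x̄)`, and the quadratic growth
condition `f(x) ≥ f(x̄) + ⟨ȳ*, x - x̄⟩ + c·‖x - x̄‖²` holds on a neighborhood `U` of `x̄`,
then `∂f` is strongly metrically subregular at `x̄` for `ȳ*` with constant `1/c`: there is
a neighborhood `U'` of `x̄` with `‖x - x̄‖ ≤ (1/c)·d(ȳ*, ∂f(x))` for all `x ∈ U'` (stated
pointwise over `y* ∈ ∂f(x)`, matching the convention `d(ȳ*, ∅) = ∞`). -/
theorem stmt_3 {X : Type*} [NormedAddCommGroup X] [NormedSpace ℝ X] [CompleteSpace X]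
    (f : X → EReal)
    (hproper : ∃ x, f x ≠ ⊤) (hne_bot : ∀ x, f x ≠ ⊥)
    (hlsc : LowerSemicontinuous f)
    (hconv : ∀ x y : X, ∀ a b : ℝ, 0 ≤ a → 0 ≤ b → a + b = 1 →
      f (a • x + b • y) ≤ (a : EReal) * f x + (b : EReal) * f y)
    (xbar : X) (ybar : X →L[ℝ] ℝ) (hybar : ybar ∈ subdiff f xbar)
    (U : Set X) (hU : U ∈ 𝓝 xbar) (c : ℝ) (hc : 0 < c)
    (growth : ∀ x ∈ U,
      f xbar + ((ybar (x - xbar) + c * ‖x - xbar‖ ^ 2 : ℝ) : EReal) ≤ f x) :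
    ∃ U' ∈ 𝓝 xbar, ∀ x ∈ U', ∀ y ∈ subdiff f x,
      ‖x - xbar‖ ≤ (1 / c) * ‖y - ybar‖ := by
  refine ⟨U, hU, fun x hx y hy => ?_⟩
  set a := (f x).toReal with ha
  set b := (f xbar).toReal with hb
  have hfx : f x = (a : EReal) := (EReal.coe_toReal hy.1 (hne_bot x)).symm
  have hfxbar : f xbar = (b : EReal) := (EReal.coe_toReal hybar.1 (hne_bot xbar)).symm
  have h1 := growth x hx
  have h2 := hy.2 xbar
  rw [hfx, hfxbar, ← EReal.coe_add, EReal.coe_le_coe_iff] at h1 h2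
  -- h1 : b + (ybar (x - xbar) + c * ‖x - xbar‖ ^ 2) ≤ a
  -- h2 : a + y (xbar - x) ≤ b
  have key : c * ‖x - xbar‖ ^ 2 ≤ (y - ybar) (x - xbar) := by
    rw [show xbar - x = -(x - xbar) by abel, map_neg] at h2
    simp only [ContinuousLinearMap.sub_apply]
    linarith
  have hbound : (y - ybar) (x - xbar) ≤ ‖y - ybar‖ * ‖x - xbar‖ :=
    le_trans (Real.le_norm_self _) ((y - ybar).le_opNorm (x - xbar))
  rcases eq_or_lt_of_le (norm_nonneg (x - xbar)) with h0 | h0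
  · rw [← h0]
    positivity
  · rw [div_mul_eq_mul_div, le_div_iff₀ hc]
    nlinarith [key.trans hbound]
end

section
/- Let X be a real Banach space, let f ∈ Γ(X), and let x̄ ∈ X, ȳ* ∈ X* with ȳ* ∈ ∂f(x̄). Suppose ∂f is strongly metrically subregular at x̄ for ȳ* with constant κ > 0, i.e., there is a neighborhood U of x̄ such that ‖x − x̄‖ ≤ κ·d(ȳ*, ∂f(x)) for all x ∈ U. Then for every constant c with 0 < c < 1/(4κ) there exists a neighborhood U' of x̄ such that f(x) ≥ f(x̄) + ⟨ȳ*, x − x̄⟩ + c·‖x − x̄‖² for all x ∈ U'. -/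
open Topology Filter Metric Set

lemma my_ekeland {X : Type*} [MetricSpace X] [CompleteSpace X] (G : X → ℝ)
    (hlsc : LowerSemicontinuous G) (hnn : ∀ z, 0 ≤ G z) (r : ℝ) (hr : 0 < r) (v : X) :
    ∃ u, G u + r * dist u v ≤ G v ∧ ∀ z, G u ≤ G z + r * dist z u := by
  classical
  -- the set of "better" points
  set S : X → Set X := fun w => {z | G z + r * dist z w ≤ G w} with hS
  have hself : ∀ w, w ∈ S w := by intro w; simp [hS]
  have hne : ∀ w, (G '' S w).Nonempty := fun w => ⟨G w, w, hself w, rfl⟩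
  have hbdd : ∀ w, BddBelow (G '' S w) := by
    intro w; exact ⟨0, by rintro x ⟨z, _, rfl⟩; exact hnn z⟩
  set m : X → ℝ := fun w => sInf (G '' S w) with hm
  have hpick : ∀ w (n : ℕ), ∃ z, z ∈ S w ∧ G z ≤ m w + (1/2)^n := by
    intro w n
    obtain ⟨x, ⟨z, hz, rfl⟩, hlt⟩ := Real.lt_sInf_add_pos (hne w)
      (show (0:ℝ) < (1/2)^n by positivity)
    exact ⟨z, hz, hlt.le⟩
  choose pick hpick1 hpick2 using hpick
  -- the sequence
  let seq : ℕ → X := fun n => Nat.rec v (fun n w => pick w n) n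
  have hseq0 : seq 0 = v := rfl
  have hseqS : ∀ n, seq (n+1) = pick (seq n) n := fun n => rfl
  have hstep : ∀ n, G (seq (n+1)) + r * dist (seq (n+1)) (seq n) ≤ G (seq n) := by
    intro n; rw [hseqS]; exact hpick1 (seq n) n
  have hmono : ∀ n k, n ≤ k → G (seq k) + r * dist (seq k) (seq n) ≤ G (seq n) := by
    intro n k hk
    induction k with
    | zero => simp_all
    | succ k ih =>
      rcases Nat.lt_or_ge n (k+1) with h | h
      · have hnk : n ≤ k := Nat.lt_succ_iff.mp h
        have h1 := hstep k
        have h2 := ih hnk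
        have := dist_triangle (seq (k+1)) (seq k) (seq n)
        nlinarith [dist_nonneg (x := seq (k+1)) (y := seq k)]
      · have : n = k + 1 := le_antisymm hk h
        subst this; simp
  have hGanti : Antitone fun n => G (seq n) := by
    apply antitone_nat_of_succ_le
    intro n
    have := hstep n
    nlinarith [dist_nonneg (x := seq (n+1)) (y := seq n)]
  -- summability of distances
  have hsum : Summable fun n => dist (seq n) (seq (n+1)) := by
    apply summable_of_sum_range_le (c := G v / r) (fun n => dist_nonneg)
    intro n
    have key : ∀ k, r * (∑ i ∈ Finset.range k, dist (seq i) (seq (i+1))) ≤ G v - G (seq k) := by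
      intro k
      induction k with
      | zero => simp [hseq0]
      | succ k ih =>
        rw [Finset.sum_range_succ]
        have := hstep k
        rw [dist_comm (seq k)]
        nlinarith
    have := key n
    have h0 := hnn (seq n)
    rw [le_div_iff₀ hr]
    nlinarith
  obtain ⟨u, hu⟩ := cauchySeq_tendsto_of_complete (cauchySeq_of_summable_dist hsum)
  -- limit of G values
  have hGbdd : BddBelow (range fun n => G (seq n)) := ⟨0, by rintro x ⟨n, rfl⟩; exact hnn _⟩
  set L : ℝ := ⨅ n, G (seq n) with hL
  have hGtend : Tendsto (fun n => G (seq n)) atTop (𝓝 L) :=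
    tendsto_atTop_ciInf hGanti hGbdd
  have hLle : ∀ n, L + r * dist u (seq n) ≤ G (seq n) := by
    intro n
    have : Tendsto (fun k => G (seq k) + r * dist (seq k) (seq n)) atTop
        (𝓝 (L + r * dist u (seq n))) := by
      exact hGtend.add (((hu.dist tendsto_const_nhds)).const_mul r)
    refine le_of_tendsto this ?_
    filter_upwards [eventually_ge_atTop n] with k hk using hmono n k hk
  have hGu : G u ≤ L := by
    by_contra h
    push_neg at h
    obtain ⟨y, hy1, hy2⟩ := exists_between h
    have h1 : ∀ᶠ n in atTop, y < G (seq n) := hu.eventually (hlsc u y hy2)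
    have h2 : ∀ᶠ n in atTop, G (seq n) < y := hGtend.eventually (Filter.Tendsto.eventually_lt_const hy1 tendsto_id) |>.mono (fun n hn => hn)
    obtain ⟨n, hn1, hn2⟩ := (h1.and h2).exists
    exact absurd hn1 (not_lt.2 hn2.le)
  refine ⟨u, ?_, ?_⟩
  · have := hLle 0
    rw [hseq0] at this
    linarith
  · intro z
    by_contra hz
    push_neg at hz
    -- z is in every S (seq n)
    have hzS : ∀ n, z ∈ S (seq n) := by
      intro n
      have h1 := hLle n
      have htri := dist_triangle z u (seq n)
      simp only [hS, mem_setOf_eq]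
      have hd : dist z (seq n) ≤ dist z u + dist u (seq n) := htri
      nlinarith [dist_nonneg (x := z) (y := u)]
    have hzm : ∀ n, m (seq n) ≤ G z := fun n => csInf_le (hbdd _) ⟨z, hzS n, rfl⟩
    -- but m (seq n) → L ≥ G u
    have hmn : ∀ n, G (seq (n+1)) - (1/2)^n ≤ G z := by
      intro n
      have := hpick2 (seq n) n
      rw [← hseqS] at this
      linarith [hzm n]
    have : Tendsto (fun n => G (seq (n+1)) - (1/2:ℝ)^n) atTop (𝓝 (L - 0)) :=
      (hGtend.comp (tendsto_add_atTop_nat 1)).sub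
        (tendsto_pow_atTop_nhds_zero_of_lt_one (by norm_num) (by norm_num))
    have hLz : L ≤ G z := by
      have := le_of_tendsto this (Eventually.of_forall hmn)
      simpa using this
    nlinarith [dist_nonneg (x := z) (y := u)]

lemma my_subgrad {X : Type*} [NormedAddCommGroup X] [NormedSpace ℝ X]
    (g : X → EReal) (hgnn : ∀ z, 0 ≤ g z)
    (conv : ∀ v w : X, ∀ a b : ℝ, 0 ≤ a → 0 ≤ b → a + b = 1 → ∀ gv gw : ℝ,
      g v = (gv : EReal) → g w = (gw : EReal) →
      g (a • v + b • w) ≤ ((a * gv + b * gw : ℝ) : EReal))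
    (u : X) (gu : ℝ) (hgu : g u = (gu : EReal)) (r : ℝ) (hr : 0 < r)
    (hek : ∀ z : X, ∀ gz : ℝ, g z = (gz : EReal) → gu ≤ gz + r * ‖z - u‖) :
    ∃ y : X →L[ℝ] ℝ, ‖y‖ ≤ r ∧ ∀ z, ((gu : ℝ) : EReal) + ((y (z - u) : ℝ) : EReal) ≤ g z := by
  classical
  set S : X → Set ℝ := fun v => {x : ℝ | ∃ t : ℝ, 0 < t ∧ ∃ a b : X, a + b = v ∧
    ∃ gta : ℝ, g (u + t • a) = (gta : EReal) ∧ x = (gta - gu)/t + r * ‖b‖} with hSdef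
  have hne : ∀ v, r * ‖v‖ ∈ S v := by
    intro v
    refine ⟨1, one_pos, 0, v, by simp, gu, by simpa using hgu, by simp⟩
  have hlb : ∀ v, ∀ x ∈ S v, -(r * ‖v‖) ≤ x := by
    rintro v x ⟨t, ht, a, b, hab, gta, hgta, rfl⟩
    have h1 := hek (u + t • a) gta hgta
    have h2 : ‖u + t • a - u‖ = t * ‖a‖ := by
      simp [norm_smul, abs_of_pos ht]
    rw [h2] at h1
    have h3 : -(r * ‖a‖) ≤ (gta - gu)/t := by
      rw [le_div_iff₀ ht]; nlinarith
    have h4 : ‖a‖ ≤ ‖v‖ + ‖b‖ := by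
      have ha : a = v - b := by rw [← hab]; abel
      rw [ha]; exact norm_sub_le v b
    nlinarith [norm_nonneg b]
  have hbdd : ∀ v, BddBelow (S v) := fun v => ⟨-(r * ‖v‖), hlb v⟩
  set p : X → ℝ := fun v => sInf (S v) with hpdef
  have hp_le_norm : ∀ v, p v ≤ r * ‖v‖ := fun v => csInf_le (hbdd v) (hne v)
  have hp_le_diff : ∀ z : X, ∀ gz : ℝ, g z = (gz : EReal) → p (z - u) ≤ gz - gu := by
    intro z gz hgz
    refine csInf_le (hbdd _) ⟨1, one_pos, z - u, 0, by simp, gz, ?_, by simp⟩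
    simpa using hgz
  -- positive homogeneity (one-sided suffices to get both)
  have hhom_le : ∀ c : ℝ, 0 < c → ∀ v, p (c • v) ≤ c * p v := by
    intro c hc v
    have key : ∀ x ∈ S v, c * x ∈ S (c • v) := by
      rintro x ⟨t, ht, a, b, hab, gta, hgta, rfl⟩
      refine ⟨t/c, by positivity, c • a, c • b, by rw [← hab]; module, gta, ?_, ?_⟩
      · rw [smul_smul]; rw [div_mul_cancel₀ _ hc.ne']; exact hgta
      · rw [norm_smul, Real.norm_eq_abs, abs_of_pos hc]
        field_simp
    have h1 : ∀ x ∈ S v, p (c • v) ≤ c * x := fun x hx => csInf_le (hbdd _) (key x hx)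
    have h2 : p (c • v) / c ≤ p v := by
      apply le_csInf ⟨_, hne v⟩
      intro x hx
      rw [div_le_iff₀ hc, mul_comm]
      exact h1 x hx
    calc p (c • v) = c * (p (c • v) / c) := by field_simp
    _ ≤ c * p v := by nlinarith
  have hhom : ∀ c : ℝ, 0 < c → ∀ v, p (c • v) = c * p v := by
    intro c hc v
    refine le_antisymm (hhom_le c hc v) ?_
    have := hhom_le c⁻¹ (by positivity) (c • v)
    rw [inv_smul_smul₀ hc.ne'] at this
    calc c * p v ≤ c * (c⁻¹ * p (c • v)) := by nlinarith
    _ = p (c • v) := by field_simp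
  -- subadditivity
  have hadd : ∀ v w, p (v + w) ≤ p v + p w := by
    intro v w
    have key : ∀ x ∈ S v, ∀ x' ∈ S w, p (v + w) ≤ x + x' := by
      rintro x ⟨t, ht, a, b, hab, G1, hG1, rfl⟩ x' ⟨s, hs, a', b', hab', G2, hG2, rfl⟩
      have hst : 0 < s + t := by linarith
      set lam := s / (s + t) with hlam
      set mu := t / (s + t) with hmu
      have hlam0 : 0 ≤ lam := by positivity
      have hmu0 : 0 ≤ mu := by positivity
      have hlm : lam + mu = 1 := by rw [hlam, hmu]; field_simp
      have hcomb := conv (u + t • a) (u + s • a') lam mu hlam0 hmu0 hlm G1 G2 hG1 hG2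
      have hpt : lam • (u + t • a) + mu • (u + s • a') = u + (s * t / (s + t)) • (a + a') := by
        rw [hlam, hmu]
        match_scalars <;> field_simp <;> ring
      rw [hpt] at hcomb
      -- extract a real value
      have hnb : g (u + (s * t / (s + t)) • (a + a')) ≠ ⊥ := by
        intro h
        have := hgnn (u + (s * t / (s + t)) • (a + a'))
        rw [h] at this
        simp at this
      have hnt : g (u + (s * t / (s + t)) • (a + a')) ≠ ⊤ := by
        intro h
        rw [h] at hcomb
        exact absurd (top_le_iff.mp hcomb) (EReal.coe_ne_top _)
      set G3 : ℝ := (g (u + (s * t / (s + t)) • (a + a'))).toReal with hG3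
      have hG3' : g (u + (s * t / (s + t)) • (a + a')) = (G3 : EReal) :=
        (EReal.coe_toReal hnt hnb).symm
      rw [hG3'] at hcomb
      have hG3le : G3 ≤ lam * G1 + mu * G2 := EReal.coe_le_coe_iff.mp hcomb
      -- the candidate element
      have hmem : (G3 - gu)/(s * t / (s + t)) + r * ‖b + b'‖ ∈ S (v + w) := by
        refine ⟨s * t / (s + t), by positivity, a + a', b + b', ?_, G3, hG3', rfl⟩
        rw [← hab, ← hab']; abel
      refine (csInf_le (hbdd _) hmem).trans ?_
      have harith : (lam * G1 + mu * G2 - gu)/(s * t / (s + t)) =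
          (G1 - gu)/t + (G2 - gu)/s := by
        rw [hlam, hmu]
        field_simp
        ring
      have h5 : (G3 - gu)/(s * t / (s + t)) ≤ (G1 - gu)/t + (G2 - gu)/s := by
        rw [← harith]
        apply div_le_div_of_nonneg_right ?_ (by positivity) |>.trans_eq rfl
        · linarith
      have h6 : ‖b + b'‖ ≤ ‖b‖ + ‖b'‖ := norm_add_le b b'
      nlinarith
    have h1 : ∀ x ∈ S v, p (v + w) - x ≤ p w := by
      intro x hx
      apply le_csInf ⟨_, hne w⟩
      intro x' hx'
      linarith [key x hx x' hx']
    have h2 : p (v + w) - p w ≤ p v := by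
      apply le_csInf ⟨_, hne v⟩
      intro x hx
      linarith [h1 x hx]
    linarith
  -- Hahn-Banach
  obtain ⟨y, -, hy⟩ := exists_extension_of_le_sublinear ⟨⊥, 0⟩ p
    (fun c hc x => hhom c hc x) hadd
    (by rintro ⟨x, hx⟩
        simp only [Submodule.mem_bot] at hx
        subst hx
        have h0 : p 0 ≤ 0 := by simpa using hp_le_norm 0
        have h00 : -(r * ‖(0:X)‖) ≤ p 0 := le_csInf ⟨_, hne 0⟩ (hlb 0)
        simp only [LinearPMap.mk_apply, LinearMap.zero_apply]
        simpa using h00)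
  have hybound : ∀ v, |y v| ≤ r * ‖v‖ := by
    intro v
    rw [abs_le]
    constructor
    · have := (hy (-v)).trans (hp_le_norm (-v))
      rw [map_neg, norm_neg] at this
      linarith
    · exact (hy v).trans (hp_le_norm v)
  set Y : X →L[ℝ] ℝ := y.mkContinuous r (fun v => by rw [Real.norm_eq_abs]; exact hybound v)
    with hY
  refine ⟨Y, y.mkContinuous_norm_le hr.le _, ?_⟩
  intro z
  rcases eq_or_ne (g z) ⊤ with h | h
  · rw [h]; exact le_top
  · have hnb : g z ≠ ⊥ := by
      intro hb
      have := hgnn z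
      rw [hb] at this
      simp at this
    set gz : ℝ := (g z).toReal with hgz
    have hgz' : g z = (gz : EReal) := (EReal.coe_toReal h hnb).symm
    rw [hgz', ← EReal.coe_add, EReal.coe_le_coe_iff]
    have : Y (z - u) = y (z - u) := rfl
    rw [this]
    linarith [(hy (z - u)).trans (hp_le_diff z gz hgz')]

set_option maxHeartbeats 2000000 in
/-- If `f ∈ Γ(X)` on a Banach space, `ȳ* ∈ ∂f(x̄)`, and `∂f` is strongly
metrically subregular at `x̄` for `ȳ*` with constant `κ > 0`, i.e. there is a neighborhood
`U` of `x̄` with `‖x - x̄‖ ≤ κ·d(ȳ*, ∂f(x))` for all `x ∈ U` (stated pointwise over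
`y* ∈ ∂f(x)`, matching the convention `d(ȳ*, ∅) = ∞`), then for every `0 < c < 1/(4κ)`
there is a neighborhood `U'` of `x̄` on which
`f(x) ≥ f(x̄) + ⟨ȳ*, x - x̄⟩ + c·‖x - x̄‖²` holds. -/
theorem stmt_4 {X : Type*} [NormedAddCommGroup X] [NormedSpace ℝ X] [CompleteSpace X]
    (f : X → EReal)
    (hproper : ∃ x, f x ≠ ⊤) (hne_bot : ∀ x, f x ≠ ⊥)
    (hlsc : LowerSemicontinuous f)
    (hconv : ∀ x y : X, ∀ a b : ℝ, 0 ≤ a → 0 ≤ b → a + b = 1 →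
      f (a • x + b • y) ≤ (a : EReal) * f x + (b : EReal) * f y)
    (xbar : X) (ybar : X →L[ℝ] ℝ) (hybar : ybar ∈ subdiff f xbar)
    (κ : ℝ) (hκ : 0 < κ) (U : Set X) (hU : U ∈ 𝓝 xbar)
    (hsubreg : ∀ x ∈ U, ∀ y ∈ subdiff f x, ‖x - xbar‖ ≤ κ * ‖y - ybar‖) :
    ∀ c : ℝ, 0 < c → c < 1 / (4 * κ) →
      ∃ U' ∈ 𝓝 xbar, ∀ x ∈ U',
        f xbar + ((ybar (x - xbar) + c * ‖x - xbar‖ ^ 2 : ℝ) : EReal) ≤ f x := by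
  intro c hc hc'
  obtain ⟨hfxt, hybar2⟩ := hybar
  set r0 : ℝ := (f xbar).toReal with hr0
  have hf0 : f xbar = (r0 : EReal) := (EReal.coe_toReal hfxt (hne_bot xbar)).symm
  set g : X → EReal := fun v => f (xbar + v) + ((-(r0 + ybar v) : ℝ) : EReal) with hgdef
  -- nonnegativity of g
  have hgnn : ∀ v, 0 ≤ g v := by
    intro v
    have h1 := hybar2 (xbar + v)
    rw [hf0] at h1
    have h2 : xbar + v - xbar = v := by abel
    rw [h2, ← EReal.coe_add] at h1
    have h3 := add_le_add_left h1 ((-(r0 + ybar v) : ℝ) : EReal)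
    rw [← EReal.coe_add] at h3
    have h4 : (r0 + ybar v) + -(r0 + ybar v) = 0 := by ring
    rw [h4] at h3
    exact_mod_cast h3
  -- value transfer lemmas
  have hval : ∀ (v : X) (s : ℝ), ∀ _ : f (xbar + v) = (s : EReal),
      g v = ((s - (r0 + ybar v) : ℝ) : EReal) := by
    intro v s hs
    show f (xbar + v) + ((-(r0 + ybar v) : ℝ) : EReal) = _
    rw [hs, ← EReal.coe_add, sub_eq_add_neg]
  have hfin : ∀ v : X, g v ≠ ⊤ →
      ∃ s : ℝ, f (xbar + v) = (s : EReal) ∧ g v = ((s - (r0 + ybar v) : ℝ) : EReal) := by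
    intro v hv
    have hft : f (xbar + v) ≠ ⊤ := by
      intro h
      apply hv
      show f (xbar + v) + ((-(r0 + ybar v) : ℝ) : EReal) = ⊤
      rw [h]
      exact EReal.top_add_coe _
    exact ⟨(f (xbar + v)).toReal, (EReal.coe_toReal hft (hne_bot _)).symm,
      hval _ _ ((EReal.coe_toReal hft (hne_bot _)).symm)⟩
  have hval' : ∀ v : X, ∀ t : ℝ, g v = (t : EReal) →
      f (xbar + v) = ((t + (r0 + ybar v) : ℝ) : EReal) := by
    intro v t hgt
    obtain ⟨s, hs1, hs2⟩ := hfin v (by rw [hgt]; exact EReal.coe_ne_top t)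
    rw [hgt] at hs2
    have h : t = s - (r0 + ybar v) := EReal.coe_eq_coe_iff.mp hs2
    rw [hs1]
    congr 1
    linarith
  -- convexity transfer
  have hconv' : ∀ v w : X, ∀ a b : ℝ, 0 ≤ a → 0 ≤ b → a + b = 1 → ∀ gv gw : ℝ,
      g v = (gv : EReal) → g w = (gw : EReal) →
      g (a • v + b • w) ≤ ((a * gv + b * gw : ℝ) : EReal) := by
    intro v w a b ha hb hab gv gw hgv hgw
    have h1 := hval' v gv hgv
    have h2 := hval' w gw hgw
    have h3 := hconv (xbar + v) (xbar + w) a b ha hb hab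
    rw [h1, h2] at h3
    have h4 : a • (xbar + v) + b • (xbar + w) = xbar + (a • v + b • w) := by
      have h5 : a • (xbar + v) + b • (xbar + w) = (a + b) • xbar + (a • v + b • w) := by
        module
      rw [h5, hab, one_smul]
    rw [h4, ← EReal.coe_mul, ← EReal.coe_mul, ← EReal.coe_add] at h3
    have h5 := add_le_add_left h3 ((-(r0 + ybar (a • v + b • w)) : ℝ) : EReal)
    rw [← EReal.coe_add] at h5
    have h6 : g (a • v + b • w) =
        f (xbar + (a • v + b • w)) + ((-(r0 + ybar (a • v + b • w)) : ℝ) : EReal) := rfl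
    rw [h6]
    refine h5.trans (le_of_eq ?_)
    rw [EReal.coe_eq_coe_iff]
    have h7 : ybar (a • v + b • w) = a * ybar v + b * ybar w := by
      simp [map_add, map_smul, smul_eq_mul]
    rw [h7]
    linear_combination r0 * hab
  -- lower semicontinuity transfer
  have glsc : ∀ v0 : X, ∀ y : ℝ, (y : EReal) < g v0 → ∀ᶠ v in 𝓝 v0, (y : EReal) < g v := by
    intro v0 y hy
    obtain ⟨t, δ, hδ, ht, hyt⟩ : ∃ t δ : ℝ, 0 < δ ∧ (t : EReal) < f (xbar + v0) ∧
        y < t + -(r0 + ybar v0) - δ := by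
      rcases eq_or_ne (f (xbar + v0)) ⊤ with h | h
      · exact ⟨y - -(r0 + ybar v0) + 2, 1, one_pos, by rw [h]; exact EReal.coe_lt_top _,
          by ring_nf; linarith⟩
      · obtain ⟨s, hs⟩ : ∃ s : ℝ, f (xbar + v0) = (s : EReal) :=
          ⟨_, (EReal.coe_toReal h (hne_bot _)).symm⟩
        have hys : y < s + -(r0 + ybar v0) := by
          have hgv := hval v0 s hs
          rw [hgv] at hy
          have := EReal.coe_lt_coe_iff.mp hy
          linarith
        refine ⟨s - (s + -(r0 + ybar v0) - y)/3, (s + -(r0 + ybar v0) - y)/3,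
          by linarith, ?_, by linarith⟩
        rw [hs]
        exact_mod_cast (by linarith : s - (s + -(r0 + ybar v0) - y)/3 < s)
    have E1 : ∀ᶠ v in 𝓝 v0, (t : EReal) < f (xbar + v) := by
      have hcont : Tendsto (fun v : X => xbar + v) (𝓝 v0) (𝓝 (xbar + v0)) :=
        (continuous_const.add continuous_id).tendsto v0
      exact hcont.eventually (hlsc (xbar + v0) t ht)
    have E2 : ∀ᶠ v in 𝓝 v0, -(r0 + ybar v0) - δ < -(r0 + ybar v) := by
      have hcont : ContinuousAt (fun v : X => -(r0 + ybar v)) v0 :=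
        ((continuous_const.add ybar.continuous).neg).continuousAt
      exact hcont.eventually_mem (Ioi_mem_nhds (by linarith))
    filter_upwards [E1, E2] with v h1 h2
    have h3 : ((t : ℝ) : EReal) + ((-(r0 + ybar v) : ℝ) : EReal) < g v :=
      EReal.add_lt_add_right_coe h1 _
    rw [← EReal.coe_add] at h3
    refine lt_trans ?_ h3
    exact_mod_cast (by linarith : y < t + -(r0 + ybar v))
  -- neighborhood setup
  obtain ⟨δU, hδpos, hδU⟩ := Metric.mem_nhds_iff.mp hU
  refine ⟨Metric.ball xbar (δU/2), Metric.ball_mem_nhds _ (by linarith), ?_⟩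
  intro x hx
  by_contra hcon
  rw [not_le] at hcon
  set v0 : X := x - xbar with hv0
  -- f x is finite
  have hfx_ne_top : f x ≠ ⊤ := by
    intro h
    rw [h] at hcon
    exact not_top_lt hcon
  obtain ⟨s, hs⟩ : ∃ s : ℝ, f x = (s : EReal) := ⟨_, (EReal.coe_toReal hfx_ne_top (hne_bot _)).symm⟩
  have hxv : xbar + v0 = x := by rw [hv0]; abel
  have hgv0 : g v0 = ((s - (r0 + ybar v0) : ℝ) : EReal) := hval v0 s (by rw [hxv]; exact hs)
  set ε : ℝ := c * ‖v0‖ ^ 2 with hε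
  set gv0 : ℝ := s - (r0 + ybar v0) with hgv0def
  have hgv0lt : gv0 < ε := by
    rw [hs, hf0, ← EReal.coe_add] at hcon
    have := EReal.coe_lt_coe_iff.mp hcon
    rw [hgv0def, hε]
    linarith
  have hgv0nn : 0 ≤ gv0 := by
    have := hgnn v0
    rw [hgv0] at this
    exact_mod_cast this
  have hv0pos : 0 < ‖v0‖ := by
    rcases (norm_nonneg v0).lt_or_eq with h | h
    · exact h
    · exfalso
      rw [hε, ← h] at hgv0lt
      simp at hgv0lt
      linarith
  have hεpos : 0 < ε := by rw [hε]; positivity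
  set r : ℝ := 2 * c * ‖v0‖ with hrdef
  have hrpos : 0 < r := by rw [hrdef]; positivity
  -- truncated real-valued function
  set G : X → ℝ := fun z => ((g z) ⊓ (ε : EReal)).toReal with hG
  have hGcoe : ∀ z, ((G z : ℝ) : EReal) = g z ⊓ (ε : EReal) := by
    intro z
    have h0 : (0 : EReal) ≤ g z ⊓ (ε : EReal) :=
      le_min (hgnn z) (by exact_mod_cast hεpos.le)
    exact EReal.coe_toReal
      (ne_top_of_le_ne_top (EReal.coe_ne_top ε) (min_le_right _ _))
      (ne_bot_of_le_ne_bot (by simp) h0)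
  have hGnn : ∀ z, 0 ≤ G z := by
    intro z
    have h0 : (0 : EReal) ≤ g z ⊓ (ε : EReal) :=
      le_min (hgnn z) (by exact_mod_cast hεpos.le)
    rw [← hGcoe z] at h0
    exact_mod_cast h0
  have hGle : ∀ (z : X) (gz : ℝ), g z = (gz : EReal) → G z ≤ gz := by
    intro z gz hgz
    have h1 := hGcoe z
    rw [hgz] at h1
    have h2 : ((G z : ℝ) : EReal) ≤ (gz : EReal) := h1.le.trans (min_le_left _ _)
    exact_mod_cast h2
  have hGlsc : LowerSemicontinuous G := by
    intro z0 y hy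
    rcases lt_or_ge y 0 with h | h
    · exact Eventually.of_forall fun z => lt_of_lt_of_le h (hGnn z)
    · have hyG : (y : EReal) < ((G z0 : ℝ) : EReal) := EReal.coe_lt_coe_iff.mpr hy
      have h1 : (y : EReal) < g z0 := lt_of_lt_of_le (hyG.trans_le (hGcoe z0).le) (min_le_left _ _)
      have hyε : y < ε := by
        have h2 : ((G z0 : ℝ) : EReal) ≤ (ε : EReal) := (hGcoe z0).le.trans (min_le_right _ _)
        have h3 : G z0 ≤ ε := by exact_mod_cast h2
        linarith
      filter_upwards [glsc z0 y h1] with z hz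
      have h4 : (y : EReal) < g z ⊓ (ε : EReal) := lt_min hz (by exact_mod_cast hyε)
      rw [← hGcoe z] at h4
      exact_mod_cast h4
  have hGv0 : G v0 = gv0 := by
    have h1 : g v0 ⊓ (ε : EReal) = ((gv0 : ℝ) : EReal) := by
      rw [hgv0]
      exact min_eq_left (by exact_mod_cast hgv0lt.le)
    have h2 := (hGcoe v0).trans h1
    exact_mod_cast h2
  -- Ekeland
  obtain ⟨u, hu1, hu2⟩ := my_ekeland G hGlsc hGnn r hrpos v0
  have hGu_lt : G u < ε := by
    have h1 : 0 ≤ r * dist u v0 := by positivity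
    rw [hGv0] at hu1
    linarith
  have hgu_fin : g u = ((G u : ℝ) : EReal) := by
    have h1 := hGcoe u
    have h2 : g u ⊓ (ε : EReal) < (ε : EReal) := by
      rw [← h1]
      exact_mod_cast hGu_lt
    have h3 : g u < (ε : EReal) := by
      by_contra hcc
      push_neg at hcc
      rw [min_eq_right hcc] at h2
      exact lt_irrefl _ h2
    exact (h1.trans (min_eq_left h3.le)).symm
  have hdist : dist u v0 < ‖v0‖ / 2 := by
    rw [hGv0] at hu1
    have h1 : r * dist u v0 ≤ gv0 := by linarith [hGnn u]
    have h2 : r * dist u v0 < ε := lt_of_le_of_lt h1 hgv0lt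
    rw [hrdef] at h2
    rw [hε] at h2
    nlinarith [dist_nonneg (x := u) (y := v0)]
  -- subgradient
  have hek : ∀ z : X, ∀ gz : ℝ, g z = (gz : EReal) → G u ≤ gz + r * ‖z - u‖ := by
    intro z gz hgz
    have h1 := hu2 z
    have h2 := hGle z gz hgz
    rw [dist_eq_norm] at h1
    linarith
  obtain ⟨y, hynorm, hysub⟩ := my_subgrad g hgnn hconv' u (G u) hgu_fin r hrpos hek
  -- y + ybar is a subgradient of f at xbar + u
  have hsub : (y + ybar) ∈ subdiff f (xbar + u) := by
    constructor
    · rw [hval' u (G u) hgu_fin]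
      exact EReal.coe_ne_top _
    · intro w
      rcases eq_or_ne (f w) ⊤ with h | h
      · rw [h]; exact le_top
      · obtain ⟨sw, hsw⟩ : ∃ sw : ℝ, f w = (sw : EReal) :=
          ⟨_, (EReal.coe_toReal h (hne_bot _)).symm⟩
        have hxw : xbar + (w - xbar) = w := by abel
        have hgw : g (w - xbar) = ((sw - (r0 + ybar (w - xbar)) : ℝ) : EReal) :=
          hval _ _ (by rw [hxw]; exact hsw)
        have h1 := hysub (w - xbar)
        rw [hgw, ← EReal.coe_add] at h1
        have h2 : G u + y ((w - xbar) - u) ≤ sw - (r0 + ybar (w - xbar)) :=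
          EReal.coe_le_coe_iff.mp h1
        rw [hval' u (G u) hgu_fin, hsw, ← EReal.coe_add, EReal.coe_le_coe_iff]
        have e0 : w - (xbar + u) = (w - xbar) - u := by abel
        have e1 : (y + ybar) (w - (xbar + u)) = y ((w - xbar) - u) + ybar ((w - xbar) - u) := by
          rw [e0]; simp
        rw [e1]
        have e2 : ybar (w - xbar - u) = ybar (w - xbar) - ybar u := map_sub _ _ _
        rw [e2]
        linarith
  -- apply subregularity
  have hmem : xbar + u ∈ U := by
    apply hδU
    rw [Metric.mem_ball, dist_eq_norm]
    have e2 : xbar + u - xbar = u := by abel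
    rw [e2]
    have h1 : ‖u‖ ≤ ‖v0‖ + dist u v0 := by
      rw [dist_eq_norm]
      calc ‖u‖ = ‖v0 + (u - v0)‖ := by congr 1; abel
      _ ≤ ‖v0‖ + ‖u - v0‖ := norm_add_le _ _
    have h2 : ‖v0‖ < δU / 2 := by
      rw [hv0, ← dist_eq_norm]
      exact Metric.mem_ball.mp hx
    linarith
  have hkey := hsubreg (xbar + u) hmem (y + ybar) hsub
  have e3 : xbar + u - xbar = u := by abel
  have e4 : y + ybar - ybar = y := by abel
  rw [e3, e4] at hkey
  -- contradiction
  have hlow : ‖v0‖ / 2 ≤ ‖u‖ := by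
    have h1 : ‖v0‖ ≤ ‖u‖ + dist u v0 := by
      rw [dist_eq_norm]
      calc ‖v0‖ = ‖u + (v0 - u)‖ := by congr 1; abel
      _ ≤ ‖u‖ + ‖v0 - u‖ := norm_add_le _ _
      _ = ‖u‖ + ‖u - v0‖ := by rw [norm_sub_rev]
    linarith
  have hup : ‖u‖ ≤ κ * r := le_trans hkey (by nlinarith [norm_nonneg y])
  have h4κ : c * (4 * κ) < 1 := (lt_div_iff₀ (by positivity)).mp hc'
  rw [hrdef] at hup
  nlinarith
end

section
/- Let X be a real Banach space, let f, g ∈ Γ(X), and let x̄ ∈ X and ȳ*, w̄* ∈ X* be such that ȳ* ∈ ∂f(x̄) and w̄* ∈ ∂g(x̄). If ∂f is strongly metrically subregular at x̄ for ȳ* and ∂g is strongly metrically subregular at x̄ for w̄*, then ∂(f + g) is strongly metrically subregular at x̄ for ȳ* + w̄*. -/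
open Topology Filter Metric Set

/-- A set-valued map `F : X ⇉ X*` is strongly metrically subregular at `x̄` for `ȳ*`:
`ȳ* ∈ F(x̄)` and for some `κ > 0` and some neighborhood `U` of `x̄`,
`‖x - x̄‖ ≤ κ·d(ȳ*, F(x))` for all `x ∈ U` (stated pointwise over `y ∈ F(x)`,
matching the convention `d(ȳ*, ∅) = ∞`). -/
def StrongSubreg {X : Type*} [NormedAddCommGroup X] [NormedSpace ℝ X]
    (F : X → Set (X →L[ℝ] ℝ)) (xbar : X) (ybar : X →L[ℝ] ℝ) : Prop :=
  ybar ∈ F xbar ∧ ∃ κ > (0 : ℝ), ∃ U ∈ 𝓝 xbar, ∀ x ∈ U, ∀ y ∈ F x,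
    ‖x - xbar‖ ≤ κ * ‖y - ybar‖

section AuxProofs
variable {X : Type*} [NormedAddCommGroup X] [NormedSpace ℝ X]

theorem ekeland_real_s5 {X : Type*} [NormedAddCommGroup X] [CompleteSpace X]
    (φ : X → ℝ) (hlsc : LowerSemicontinuous φ) (b : ℝ) (hb : ∀ z, b ≤ φ z)
    (α : ℝ) (hα : 0 < α) (x₀ : X) :
    ∃ u : X, φ u + α * ‖u - x₀‖ ≤ φ x₀ ∧ ∀ z, φ u ≤ φ z + α * ‖z - u‖ := by
  classical
  set S : X → Set X := fun x => {z | φ z + α * ‖z - x‖ ≤ φ x} with hS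
  have hS_self : ∀ x, x ∈ S x := by
    intro x; simp [hS]
  have hS_trans : ∀ {x y z}, z ∈ S y → y ∈ S x → z ∈ S x := by
    intro x y z hzy hyx
    simp only [hS, mem_setOf_eq] at *
    have h1 : ‖z - x‖ ≤ ‖z - y‖ + ‖y - x‖ := by
      simpa using norm_add_le (z - y) (y - x)
    nlinarith
  have hnext : ∀ (n : ℕ) (x : X), ∃ x', x' ∈ S x ∧ ∀ w ∈ S x, φ x' ≤ φ w + (1/2 : ℝ)^n := by
    intro n x
    have hne : (φ '' S x).Nonempty := ⟨φ x, x, hS_self x, rfl⟩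
    have hbdd : BddBelow (φ '' S x) := ⟨b, by rintro _ ⟨w, -, rfl⟩; exact hb w⟩
    have hlt : sInf (φ '' S x) < sInf (φ '' S x) + (1/2 : ℝ)^n := by
      have : (0:ℝ) < (1/2:ℝ)^n := by positivity
      linarith
    obtain ⟨a, ⟨w, hw, rfl⟩, ha⟩ := exists_lt_of_csInf_lt hne hlt
    exact ⟨w, hw, fun w' hw' => le_trans ha.le (by
      have := csInf_le hbdd ⟨w', hw', rfl⟩
      linarith)⟩
  choose next hnext₁ hnext₂ using hnext
  let seq : ℕ → X := fun n => Nat.rec x₀ (fun n x => next n x) n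
  have hseq0 : seq 0 = x₀ := rfl
  have hstep : ∀ n, seq (n+1) ∈ S (seq n) := fun n => hnext₁ n (seq n)
  have hchain : ∀ n m, n ≤ m → seq m ∈ S (seq n) := by
    intro n m hnm
    induction m with
    | zero => simp_all [Nat.le_zero.mp hnm, hS_self]
    | succ k ih =>
      rcases Nat.lt_or_ge n (k+1) with h | h
      · exact hS_trans (hstep k) (ih (Nat.lt_succ_iff.mp h))
      · have : n = k + 1 := le_antisymm hnm h
        subst this; exact hS_self _
  have hsum : ∀ n, α * (∑ k ∈ Finset.range n, ‖seq (k+1) - seq k‖) ≤ φ x₀ - φ (seq n) := by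
    intro n
    induction n with
    | zero => simp [hseq0]
    | succ k ih =>
      rw [Finset.sum_range_succ, mul_add]
      have := hstep k
      simp only [hS, mem_setOf_eq] at this
      linarith
  have hsummable : Summable (fun n => ‖seq (n+1) - seq n‖) := by
    apply summable_of_sum_range_le (c := (φ x₀ - b)/α) (fun n => norm_nonneg _)
    intro n
    have h1 := hsum n
    have h2 := hb (seq n)
    rw [le_div_iff₀ hα]
    nlinarith
  have hcauchy : CauchySeq seq := by
    apply cauchySeq_of_summable_dist
    simpa [dist_eq_norm, norm_sub_rev] using hsummable
  obtain ⟨u, hu⟩ := cauchySeq_tendsto_of_complete hcauchy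
  have hu_in : ∀ n, u ∈ S (seq n) := by
    intro n
    simp only [hS, mem_setOf_eq]
    apply le_of_forall_lt
    intro c hc
    have hψ : LowerSemicontinuousAt (fun w => φ w + α * ‖w - seq n‖) u := by
      exact (show LowerSemicontinuousAt φ u from hlsc u).add
        (((continuous_const.mul ((continuous_id.sub continuous_const).norm)).lowerSemicontinuous) u)
    have hev : ∀ᶠ m in atTop, c < φ (seq m) + α * ‖seq m - seq n‖ :=
      hu.eventually (hψ c hc)
    obtain ⟨m, hm1, hm2⟩ := (hev.and (eventually_ge_atTop n)).exists
    have := hchain n m hm2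
    simp only [hS, mem_setOf_eq] at this
    linarith
  refine ⟨u, by simpa [hS, hseq0] using hu_in 0, ?_⟩
  intro z
  by_contra hcon
  push_neg at hcon
  have hz_in : ∀ n, z ∈ S (seq n) := by
    intro n
    have h1 := hu_in n
    simp only [hS, mem_setOf_eq] at h1 ⊢
    have h2 : ‖z - seq n‖ ≤ ‖z - u‖ + ‖u - seq n‖ := by
      simpa using norm_add_le (z - u) (u - seq n)
    nlinarith
  have hkey : ∀ n : ℕ, φ u ≤ φ z + (1/2:ℝ)^n := by
    intro n
    have h1 := hnext₂ n (seq n) z (hz_in n)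
    have h2 := hu_in (n+1)
    simp only [hS, mem_setOf_eq] at h2
    have h3 : α * ‖u - seq (n+1)‖ ≥ 0 := by positivity
    have : φ (next n (seq n)) = φ (seq (n+1)) := rfl
    linarith [this ▸ h1]
  have hle : φ u ≤ φ z := by
    apply le_of_forall_pos_le_add
    intro ε hε
    obtain ⟨n, hn⟩ := exists_pow_lt_of_lt_one hε (by norm_num : (1/2:ℝ) < 1)
    linarith [hkey n]
  have : α * ‖z - u‖ ≥ 0 := by positivity
  linarith

-- helpers
lemma ereal_add_coe_cancel (a : EReal) (r : ℝ) : a + (r:EReal) + ((-r : ℝ):EReal) = a := by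
  rw [add_assoc, ← EReal.coe_add]
  simp

lemma ereal_le_of_add_coe_le {a b : EReal} {r : ℝ} (h : a + (r:EReal) ≤ b + (r:EReal)) : a ≤ b := by
  have := add_le_add_left h (((-r):ℝ):EReal)
  rwa [ereal_add_coe_cancel, ereal_add_coe_cancel] at this

lemma ereal_ne_bot_add_coe {a : EReal} (ha : a ≠ ⊥) (r : ℝ) : a + (r:EReal) ≠ ⊥ := by
  simp [EReal.add_eq_bot_iff, ha]

theorem ekeland_ereal_s5 {X : Type*} [NormedAddCommGroup X] [CompleteSpace X]
    (h : X → EReal) (hlsc : LowerSemicontinuous h) (hbot : ∀ z, h z ≠ ⊥)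
    (b : ℝ) (hb : ∀ z, (b:EReal) ≤ h z) (x₀ : X) (ε α : ℝ)
    (hε : 0 < ε) (hα : 0 < α) (hx₀ : h x₀ ≤ ((b + ε : ℝ):EReal)) :
    ∃ u : X, ‖u - x₀‖ ≤ ε / α ∧ h u ≤ h x₀ ∧
      ∀ z, h u ≤ h z + ((α * ‖z - u‖ : ℝ):EReal) := by
  classical
  set C : ℝ := b + ε + 1 with hC
  set m : X → EReal := fun z => min (h z) ((C:ℝ):EReal) with hm
  have hm_ne_top : ∀ z, m z ≠ ⊤ := fun z => ne_top_of_le_ne_top (EReal.coe_ne_top C) (min_le_right _ _)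
  have hm_ne_bot : ∀ z, m z ≠ ⊥ := fun z => by
    simp [hm, hbot z]
  set φ : X → ℝ := fun z => (m z).toReal with hφ
  have hφm : ∀ z, ((φ z : ℝ):EReal) = m z := fun z => EReal.coe_toReal (hm_ne_top z) (hm_ne_bot z)
  have hφlsc : LowerSemicontinuous φ := by
    intro z c hc
    have hmlsc : LowerSemicontinuousAt m z := by
      intro y hy
      simp only [hm, lt_min_iff] at hy
      filter_upwards [hlsc z y hy.1] with w hw
      simp only [hm, lt_min_iff]
      exact ⟨hw, hy.2⟩
    have : ((c:ℝ):EReal) < m z := by rw [← hφm z]; exact_mod_cast hc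
    filter_upwards [hmlsc _ this] with w hw
    have := hφm w ▸ hw
    exact_mod_cast this
  have hφb : ∀ z, b ≤ φ z := by
    intro z
    have h1 : ((b:ℝ):EReal) ≤ m z := le_min (hb z) (by exact_mod_cast (by linarith : b ≤ C))
    have := EReal.toReal_le_toReal h1 (EReal.coe_ne_bot b) (hm_ne_top z)
    simpa using this
  have hx₀fin : h x₀ ≠ ⊤ := ne_top_of_le_ne_top (EReal.coe_ne_top _) hx₀
  have hmx₀ : m x₀ = h x₀ := min_eq_left (le_trans hx₀ (by exact_mod_cast (by linarith : b + ε ≤ C)))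
  have hφx₀ : φ x₀ ≤ b + ε := by
    have := EReal.toReal_le_toReal hx₀ (hbot x₀) (EReal.coe_ne_top _)
    rw [EReal.toReal_coe] at this
    simpa [hφ, hmx₀] using this
  obtain ⟨u, hu1, hu2⟩ := ekeland_real_s5 φ hφlsc b hφb α hα x₀
  have hφu : φ u ≤ b + ε := by
    have h0 : 0 ≤ α * ‖u - x₀‖ := by positivity
    linarith
  have hmu : m u = h u := by
    by_contra hne
    have : m u = ((C:ℝ):EReal) := by
      rcases min_cases (h u) ((C:ℝ):EReal) with ⟨h1, h2⟩ | ⟨h1, h2⟩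
      · exact absurd h1 hne
      · exact h1
    have : φ u = C := by simp [hφ, this]
    rw [hC] at this; linarith
  have huu : h u ≤ h x₀ := by
    have : ((φ u : ℝ):EReal) ≤ ((φ x₀ : ℝ):EReal) := by
      exact_mod_cast (by linarith [hu1, mul_nonneg hα.le (norm_nonneg (u - x₀))] : φ u ≤ φ x₀)
    rwa [hφm, hφm, hmu, hmx₀] at this
  refine ⟨u, ?_, huu, ?_⟩
  · rw [le_div_iff₀ hα]
    have := hφb x₀
    nlinarith [hu1, hφb u, hφx₀]
  · intro z
    rcases le_or_gt ((C:ℝ):EReal) (h z) with hz | hz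
    · calc h u ≤ ((b + ε : ℝ):EReal) := by rw [← hmu, ← hφm u]; exact_mod_cast hφu
        _ ≤ ((C:ℝ):EReal) := by exact_mod_cast (by linarith : b + ε ≤ C)
        _ ≤ h z := hz
        _ ≤ h z + ((α * ‖z - u‖ : ℝ):EReal) := by
            nth_rewrite 1 [← add_zero (h z)]
            exact add_le_add_right (by exact_mod_cast (by positivity : (0:ℝ) ≤ α * ‖z - u‖)) _
    · have hmz : m z = h z := min_eq_left hz.le
      have h1 : φ u ≤ φ z + α * ‖z - u‖ := hu2 z
      calc h u = ((φ u : ℝ):EReal) := by rw [hφm, hmu]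
        _ ≤ ((φ z + α * ‖z - u‖ : ℝ):EReal) := by exact_mod_cast h1
        _ = ((φ z : ℝ):EReal) + ((α * ‖z - u‖ : ℝ):EReal) := by rw [EReal.coe_add]
        _ = h z + _ := by rw [hφm, hmz]

theorem exists_subgrad_of_approx_min {X : Type*} [NormedAddCommGroup X] [NormedSpace ℝ X]
    (f : X → EReal) (hbot : ∀ z, f z ≠ ⊥)
    (hconv : ∀ x y : X, ∀ a b : ℝ, 0 < a → 0 < b → a + b = 1 →
      f (a • x + b • y) ≤ (a : EReal) * f x + (b : EReal) * f y)
    (u : X) (hu : f u ≠ ⊤) (α : ℝ) (hα : 0 ≤ α)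
    (hmin : ∀ z, f u ≤ f z + ((α * ‖z - u‖ : ℝ):EReal)) :
    ∃ p : X →L[ℝ] ℝ, ‖p‖ ≤ α ∧ p ∈ subdiff f u := by
  classical
  set fu : ℝ := (f u).toReal with hfu
  have hfu' : ((fu:ℝ):EReal) = f u := EReal.coe_toReal hu (hbot u)
  set Q : X → Set ℝ := fun v => {s | ∃ t : ℝ, 0 < t ∧ ∃ w : X, f (u + t • w) ≠ ⊤ ∧
    s = ((f (u + t • w)).toReal - fu)/t + α * ‖v - w‖} with hQ
  -- lower bound on elements of Q v
  have hlb : ∀ v : X, ∀ s ∈ Q v, -(α * ‖v‖) ≤ s := by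
    rintro v s ⟨t, ht, w, hw, rfl⟩
    set A : ℝ := (f (u + t • w)).toReal with hA
    have h1 : f u ≤ f (u + t • w) + ((α * ‖(u + t • w) - u‖ : ℝ):EReal) := hmin _
    have h2 : fu ≤ A + α * ‖(u + t • w) - u‖ := by
      have hne : f (u + t • w) + ((α * ‖(u + t • w) - u‖ : ℝ):EReal) ≠ ⊤ :=
        (EReal.add_lt_top hw (EReal.coe_ne_top _)).ne
      have := EReal.toReal_le_toReal h1 (hbot u) hne
      rwa [EReal.toReal_add hw (hbot _) (EReal.coe_ne_top _) (EReal.coe_ne_bot _),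
        EReal.toReal_coe] at this
    have h3 : ‖(u + t • w) - u‖ = t * ‖w‖ := by
      rw [add_sub_cancel_left, norm_smul, Real.norm_eq_abs, abs_of_pos ht]
    rw [h3] at h2
    have h4 : -(α * ‖w‖) ≤ (A - fu)/t := by
      rw [le_div_iff₀ ht]; nlinarith
    have h5 : ‖w‖ ≤ ‖v - w‖ + ‖v‖ := by
      calc ‖w‖ = ‖(w - v) + v‖ := by rw [sub_add_cancel]
        _ ≤ ‖w - v‖ + ‖v‖ := norm_add_le _ _
        _ = ‖v - w‖ + ‖v‖ := by rw [norm_sub_rev]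
    nlinarith [mul_nonneg hα (norm_nonneg (v - w))]
  have hQne : ∀ v : X, (α * ‖v‖) ∈ Q v := by
    intro v
    refine ⟨1, one_pos, 0, by simpa using hu, ?_⟩
    norm_num [hfu]
  have hbdd : ∀ v : X, BddBelow (Q v) := fun v => ⟨-(α * ‖v‖), fun s hs => hlb v s hs⟩
  set q : X → ℝ := fun v => sInf (Q v) with hq
  have hqub : ∀ v, q v ≤ α * ‖v‖ := fun v => csInf_le (hbdd v) (hQne v)
  have hqlb : ∀ v, -(α * ‖v‖) ≤ q v := fun v => le_csInf ⟨_, hQne v⟩ (hlb v)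
  have hqval : ∀ v, f (u + v) ≠ ⊤ → q v ≤ (f (u + v)).toReal - fu := by
    intro v hv
    refine csInf_le (hbdd v) ⟨1, one_pos, v, by simpa using hv, by simp⟩
  -- subadditivity
  have hqadd : ∀ v₁ v₂, q (v₁ + v₂) ≤ q v₁ + q v₂ := by
    intro v₁ v₂
    have key : ∀ s₁ ∈ Q v₁, ∀ s₂ ∈ Q v₂, q (v₁ + v₂) ≤ s₁ + s₂ := by
      rintro s₁ ⟨t₁, ht₁, w₁, hw₁, rfl⟩ s₂ ⟨t₂, ht₂, w₂, hw₂, rfl⟩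
      set A₁ : ℝ := (f (u + t₁ • w₁)).toReal
      set A₂ : ℝ := (f (u + t₂ • w₂)).toReal
      set t : ℝ := t₁ * t₂ / (t₁ + t₂) with htdef
      have htpos : 0 < t := by positivity
      set a : ℝ := t₂ / (t₁ + t₂) with hadef
      set b : ℝ := t₁ / (t₁ + t₂) with hbdef
      have ha : 0 < a := by positivity
      have hb' : 0 < b := by positivity
      have ht12 : t₁ + t₂ ≠ 0 := by positivity
      have hab : a + b = 1 := by
        rw [hadef, hbdef, ← add_div, add_comm, div_self ht12]
      have hpt : u + t • (w₁ + w₂) = a • (u + t₁ • w₁) + b • (u + t₂ • w₂) := by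
        rw [htdef, hadef, hbdef]
        match_scalars <;> field_simp <;> ring
      have hcv : f (u + t • (w₁ + w₂)) ≤ ((a * A₁ + b * A₂ : ℝ):EReal) := by
        rw [hpt]
        refine le_trans (hconv _ _ a b ha hb' hab) ?_
        rw [← EReal.coe_toReal hw₁ (hbot _), ← EReal.coe_toReal hw₂ (hbot _),
          ← EReal.coe_mul, ← EReal.coe_mul, ← EReal.coe_add]
      have hne : f (u + t • (w₁ + w₂)) ≠ ⊤ := ne_top_of_le_ne_top (EReal.coe_ne_top _) hcv
      have hAle : (f (u + t • (w₁ + w₂))).toReal ≤ a * A₁ + b * A₂ := by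
        have := EReal.toReal_le_toReal hcv (hbot _) (EReal.coe_ne_top _)
        rwa [EReal.toReal_coe] at this
      have hmem : ((f (u + t • (w₁ + w₂))).toReal - fu)/t + α * ‖(v₁ + v₂) - (w₁ + w₂)‖ ∈ Q (v₁ + v₂) :=
        ⟨t, htpos, w₁ + w₂, hne, rfl⟩
      refine le_trans (csInf_le (hbdd _) hmem) ?_
      have hquot : ((f (u + t • (w₁ + w₂))).toReal - fu)/t ≤ (A₁ - fu)/t₁ + (A₂ - fu)/t₂ := by
        rw [div_le_iff₀ htpos]
        have e1 : ((A₁ - fu)/t₁ + (A₂ - fu)/t₂) * t = (a * A₁ + b * A₂) - fu := by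
          rw [htdef, hadef, hbdef]
          field_simp
          ring
        rw [e1]
        linarith
      have hnorm : ‖(v₁ + v₂) - (w₁ + w₂)‖ ≤ ‖v₁ - w₁‖ + ‖v₂ - w₂‖ := by
        calc ‖(v₁ + v₂) - (w₁ + w₂)‖ = ‖(v₁ - w₁) + (v₂ - w₂)‖ := by
              rw [show (v₁ + v₂) - (w₁ + w₂) = (v₁ - w₁) + (v₂ - w₂) by abel]
          _ ≤ _ := norm_add_le _ _
      nlinarith [mul_le_mul_of_nonneg_left hnorm hα]
    have step : ∀ s₁ ∈ Q v₁, q (v₁ + v₂) - s₁ ≤ q v₂ := by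
      intro s₁ hs₁
      refine le_csInf ⟨_, hQne v₂⟩ (fun s₂ hs₂ => by linarith [key s₁ hs₁ s₂ hs₂])
    have : q (v₁ + v₂) - q v₂ ≤ q v₁ :=
      le_csInf ⟨_, hQne v₁⟩ (fun s₁ hs₁ => by linarith [step s₁ hs₁])
    linarith
  -- positive homogeneity
  have hqhom : ∀ c : ℝ, 0 < c → ∀ v, q (c • v) = c * q v := by
    intro c hc v
    have hmap : ∀ s ∈ Q v, c * s ∈ Q (c • v) := by
      rintro s ⟨t, ht, w, hw, rfl⟩
      refine ⟨t/c, by positivity, c • w, ?_, ?_⟩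
      · rwa [smul_smul, div_mul_cancel₀ _ (ne_of_gt hc)]
      · rw [smul_smul, div_mul_cancel₀ _ (ne_of_gt hc), ← smul_sub, norm_smul,
          Real.norm_eq_abs, abs_of_pos hc]
        field_simp
    have hmap' : ∀ s ∈ Q (c • v), s / c ∈ Q v := by
      rintro s ⟨t, ht, w, hw, rfl⟩
      refine ⟨t*c, by positivity, (c⁻¹) • w, ?_, ?_⟩
      · rwa [smul_smul, mul_assoc, mul_inv_cancel₀ (ne_of_gt hc), mul_one]
      · rw [smul_smul, mul_assoc, mul_inv_cancel₀ (ne_of_gt hc), mul_one]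
        have : ‖v - c⁻¹ • w‖ = c⁻¹ * ‖c • v - w‖ := by
          rw [← norm_smul_of_nonneg (by positivity : (0:ℝ) ≤ c⁻¹), smul_sub, smul_smul,
            inv_mul_cancel₀ (ne_of_gt hc), one_smul]
        rw [this]
        field_simp
    apply le_antisymm
    · have : q (c • v) / c ≤ q v := by
        refine le_csInf ⟨_, hQne v⟩ (fun s hs => ?_)
        have := csInf_le (hbdd (c • v)) (hmap s hs)
        rw [div_le_iff₀ hc]; linarith [this]
      calc q (c • v) = (q (c • v) / c) * c := by field_simp
        _ ≤ q v * c := by nlinarith [this]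
        _ = c * q v := mul_comm _ _
    · refine le_csInf ⟨_, hQne (c • v)⟩ (fun s hs => ?_)
      have h1 : q v ≤ s / c := csInf_le (hbdd v) (hmap' s hs)
      calc c * q v ≤ c * (s / c) := by nlinarith
        _ = s := by field_simp
  -- Hahn-Banach extension
  obtain ⟨g, -, hg⟩ := exists_extension_of_le_sublinear ⟨⊥, 0⟩ q
    (fun c hc v => hqhom c hc v) hqadd
    (by rintro ⟨x, hx⟩
        have : x = 0 := by simpa using hx
        subst this
        simpa using le_trans (by simp : (0:ℝ) ≤ -(α * ‖(0:X)‖)) (hqlb 0))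
  have hgb : ∀ v, ‖g v‖ ≤ α * ‖v‖ := by
    intro v
    rw [Real.norm_eq_abs, abs_le]
    constructor
    · have := le_trans (hg (-v)) (hqub (-v))
      rw [map_neg, norm_neg] at this
      linarith
    · exact le_trans (hg v) (hqub v)
  refine ⟨g.mkContinuous α hgb, LinearMap.mkContinuous_norm_le g hα hgb, hu, ?_⟩
  intro z
  rcases eq_or_ne (f z) ⊤ with hz | hz
  · rw [hz]; exact le_top
  have h1 : g (z - u) ≤ (f z).toReal - fu := by
    have := le_trans (hg (z - u)) (hqval (z - u) (by rwa [add_sub_cancel]))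
    rwa [add_sub_cancel] at this
  have h2 : ((fu + g (z - u) : ℝ):EReal) ≤ (((f z).toReal : ℝ):EReal) := by
    exact_mod_cast (by linarith : fu + g (z - u) ≤ (f z).toReal)
  calc f u + ((g.mkContinuous α hgb) (z - u) : EReal) = ((fu + g (z - u) : ℝ):EReal) := by
        rw [← hfu', ← EReal.coe_add]; rfl
    _ ≤ (((f z).toReal : ℝ):EReal) := h2
    _ = f z := EReal.coe_toReal hz (hbot z)

lemma ereal_mul_add_coe_s5 (a s : ℝ) (x : EReal) (ha : 0 < a) (hx : x ≠ ⊥) :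
    (a:EReal) * (x + (s:EReal)) = (a:EReal) * x + ((a*s : ℝ):EReal) := by
  induction x with
  | bot => exact absurd rfl hx
  | coe r => norm_cast; ring_nf
  | top =>
    rw [EReal.top_add_coe, EReal.mul_top_of_pos (by exact_mod_cast ha), EReal.top_add_coe]

theorem growth_of_subreg [CompleteSpace X]
    (f : X → EReal) (hbot : ∀ z, f z ≠ ⊥) (hlsc : LowerSemicontinuous f)
    (hconv : ∀ x y : X, ∀ a b : ℝ, 0 ≤ a → 0 ≤ b → a + b = 1 →
      f (a • x + b • y) ≤ (a : EReal) * f x + (b : EReal) * f y)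
    (xbar : X) (ybar : X →L[ℝ] ℝ) (hybar : ybar ∈ subdiff f xbar)
    (κ r : ℝ) (hκ : 0 < κ) (hr : 0 < r)
    (hsub : ∀ x, ‖x - xbar‖ < r → ∀ y ∈ subdiff f x, ‖x - xbar‖ ≤ κ * ‖y - ybar‖) :
    ∀ x, ‖x - xbar‖ < r/3 →
      f xbar + ((ybar (x - xbar) + (1/(8*κ)) * ‖x - xbar‖^2 : ℝ):EReal) ≤ f x := by
  classical
  obtain ⟨hfxb_top, hybar2⟩ := hybar
  set ψ : X → ℝ := fun z => ybar (xbar - z) with hψ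
  set h : X → EReal := fun z => f z + ((ψ z : ℝ):EReal) with hh
  have hψ_cancel : ∀ z : X, ψ z + ybar (z - xbar) = 0 := by
    intro z; simp only [hψ, map_sub]; ring
  have hbot' : ∀ z, h z ≠ ⊥ := by
    intro z; simp [hh, EReal.add_eq_bot_iff, hbot z]
  set Fb : ℝ := (f xbar).toReal with hFb
  have hFb' : ((Fb:ℝ):EReal) = f xbar := EReal.coe_toReal hfxb_top (hbot xbar)
  -- f = h + ybar(· - xbar)
  have hfh : ∀ z, f z = h z + ((ybar (z - xbar) : ℝ):EReal) := by
    intro z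
    rw [hh]
    have := ereal_add_coe_cancel (f z) (ψ z)
    rw [show (-(ψ z) : ℝ) = ybar (z - xbar) by simp only [hψ, map_sub]; ring] at this
    exact this.symm
  -- lower bound: Fb ≤ h z
  have key0 : ∀ z, ((Fb:ℝ):EReal) ≤ h z := by
    intro z
    have h1 : f xbar + ((ybar (z - xbar) : ℝ):EReal) ≤ f z := hybar2 z
    have h2 := add_le_add_left h1 ((ψ z : ℝ):EReal)
    rw [add_assoc, ← EReal.coe_add] at h2
    rw [show ybar (z - xbar) + ψ z = 0 by have := hψ_cancel z; linarith] at h2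
    rw [show ((0:ℝ):EReal) = 0 from rfl, add_zero, ← hFb'] at h2
    exact h2
  -- lsc of h
  have hlsc' : LowerSemicontinuous h := by
    intro z
    apply LowerSemicontinuousAt.add' (hlsc z)
    · exact ((continuous_coe_real_ereal.comp
        (ybar.continuous.comp (continuous_const.sub continuous_id))).lowerSemicontinuous z)
    · exact EReal.continuousAt_add (Or.inr (EReal.coe_ne_bot _)) (Or.inr (EReal.coe_ne_top _))
  -- convexity of h
  have hconv' : ∀ x y : X, ∀ a b : ℝ, 0 < a → 0 < b → a + b = 1 →
      h (a • x + b • y) ≤ (a : EReal) * h x + (b : EReal) * h y := by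
    intro x y a b ha hb hab
    have h1 : ψ (a • x + b • y) = a * ψ x + b * ψ y := by
      simp only [hψ]
      have e : xbar = a • xbar + b • xbar := by rw [← add_smul, hab, one_smul]
      have this2 : xbar - (a • x + b • y) = a • (xbar - x) + b • (xbar - y) := by
        nth_rewrite 1 [e]
        rw [smul_sub, smul_sub]; abel
      rw [this2, map_add, map_smul, map_smul]
      rfl
    rw [hh]
    simp only
    rw [h1]
    calc f (a • x + b • y) + ((a * ψ x + b * ψ y : ℝ):EReal)
        ≤ ((a:EReal) * f x + (b:EReal) * f y) + ((a * ψ x + b * ψ y : ℝ):EReal) :=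
          add_le_add_left (hconv x y a b ha.le hb.le hab) _
      _ = ((a:EReal) * f x + ((a * ψ x:ℝ):EReal)) + ((b:EReal) * f y + ((b * ψ y:ℝ):EReal)) := by
          rw [EReal.coe_add]
          abel
      _ = (a:EReal) * h x + (b:EReal) * h y := by
          rw [← ereal_mul_add_coe_s5 a (ψ x) (f x) ha (hbot x),
            ← ereal_mul_add_coe_s5 b (ψ y) (f y) hb (hbot y)]
  -- main argument
  intro x hx
  rcases eq_or_ne (f x) ⊤ with hfx | hfx
  · rw [hfx]; exact le_top
  rcases eq_or_ne x xbar with hxx | hxx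
  · subst hxx
    simp only [sub_self, map_zero, norm_zero]
    norm_num
  have hρ : 0 < ‖x - xbar‖ := by
    rw [norm_pos_iff]; exact sub_ne_zero_of_ne hxx
  set ρ : ℝ := ‖x - xbar‖ with hρdef
  have hhx_top : h x ≠ ⊤ := by
    rw [hh]; exact (EReal.add_lt_top hfx (EReal.coe_ne_top _)).ne
  have hhx : ((h x).toReal : EReal) = h x := EReal.coe_toReal hhx_top (hbot' x)
  set m : ℝ := (h x).toReal - Fb with hm
  have hm0 : 0 ≤ m := by
    have := EReal.toReal_le_toReal (key0 x) (EReal.coe_ne_bot _) hhx_top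
    simp only [EReal.toReal_coe] at this
    simp [hm]; linarith
  suffices hgoal : 1/(8*κ) * ρ^2 ≤ m by
    rw [hfh x, ← hFb', ← hhx, ← EReal.coe_add, ← EReal.coe_add, EReal.coe_le_coe_iff]
    simp only [hm] at hgoal
    linarith
  by_contra hcon
  push_neg at hcon
  rcases eq_or_lt_of_le hm0 with hmz | hmpos
  · -- m = 0 : x is a global minimizer of h, so ybar ∈ subdiff f x
    have hhx_le : ∀ z, h x ≤ h z := by
      intro z
      calc h x = ((h x).toReal : EReal) := hhx.symm
        _ = ((Fb : ℝ) : EReal) := by rw [show (h x).toReal = Fb by simp [hm] at hmz ⊢; linarith]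
        _ ≤ h z := key0 z
    have hmem : ybar ∈ subdiff f x := by
      refine ⟨hfx, fun z => ?_⟩
      have h1 := add_le_add_left (hhx_le z) ((ybar (z - xbar) : ℝ):EReal)
      rw [← hfh z] at h1
      rw [hfh x, add_assoc, ← EReal.coe_add,
        show ybar (x - xbar) + ybar (z - x) = ybar (z - xbar) by simp only [map_sub]; ring]
      exact h1
    have := hsub x (by linarith [hx] : ‖x - xbar‖ < r) ybar hmem
    simp only [sub_self, norm_zero, mul_zero] at this
    linarith
  · -- m > 0 : Ekeland + approximate subgradient
    have hαpos : 0 < 2*m/ρ := by positivity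
    obtain ⟨u, hu1, hu2, hu3⟩ := ekeland_ereal_s5 h hlsc' hbot' Fb key0 x m (2*m/ρ)
      hmpos hαpos (by rw [← hhx]
                      exact_mod_cast (le_of_eq (by rw [hm]; ring) : (h x).toReal ≤ Fb + m))
    have hmρ : m / (2*m/ρ) = ρ/2 := by
      rw [div_div_eq_mul_div, mul_comm m ρ, mul_div_mul_right _ _ (ne_of_gt hmpos)]
    rw [hmρ] at hu1
    have hu_top : h u ≠ ⊤ := ne_top_of_le_ne_top hhx_top hu2
    obtain ⟨p, hp1, hp2, hp3⟩ := exists_subgrad_of_approx_min h hbot' hconv' u hu_top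
      (2*m/ρ) hαpos.le hu3
    -- p + ybar ∈ subdiff f u
    have hfu_top : f u ≠ ⊤ := by
      intro hfu
      rw [hh] at hu_top
      simp only [hfu] at hu_top
      exact hu_top (EReal.top_add_coe _)
    have hmem : p + ybar ∈ subdiff f u := by
      refine ⟨hfu_top, fun z => ?_⟩
      have h1 := add_le_add_left (hp3 z) ((ybar (z - xbar) : ℝ):EReal)
      rw [← hfh z, add_assoc, ← EReal.coe_add] at h1
      rw [hfh u, add_assoc, ← EReal.coe_add,
        show ybar (u - xbar) + (p + ybar) (z - u) = p (z - u) + ybar (z - xbar) by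
          simp only [ContinuousLinearMap.add_apply, map_sub]; ring]
      exact h1
    have hur : ‖u - xbar‖ < r := by
      have : ‖u - xbar‖ ≤ ‖u - x‖ + ‖x - xbar‖ := by
        simpa using norm_add_le (u - x) (x - xbar)
      have hr3 : ρ < r/3 := hx
      calc ‖u - xbar‖ ≤ ‖u - x‖ + ρ := this
        _ ≤ ρ/2 + ρ := by linarith [hu1]
        _ < r := by linarith
    have hineq := hsub u hur (p + ybar) hmem
    rw [show p + ybar - ybar = p by abel] at hineq
    have hlow : ρ/2 ≤ ‖u - xbar‖ := by
      have h1 : ρ ≤ ‖x - u‖ + ‖u - xbar‖ := by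
        simpa using norm_add_le (x - u) (u - xbar)
      have h2 : ‖x - u‖ = ‖u - x‖ := norm_sub_rev _ _
      linarith [hu1, h1, h2]
    have hfinal : ρ/2 ≤ κ * (2*m/ρ) := le_trans hlow (le_trans hineq
      (by nlinarith [hp1, norm_nonneg p, hκ]))
    have heq : ρ * (κ * (2*m/ρ)) = 2*κ*m := by field_simp
    have h2 : ρ * (ρ/2) ≤ 2*κ*m := by
      rw [← heq]; nlinarith [hfinal, hρ]
    have h8 : (0:ℝ) < 8*κ := by positivity
    have hcon' : m * (8*κ) < ρ^2 := by
      calc m * (8*κ) < (1/(8*κ) * ρ^2) * (8*κ) := by nlinarith [hcon, h8]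
        _ = ρ^2 := by field_simp
    nlinarith [h2, hcon', hρ]

end AuxProofs

/-- Sum of strongly subregular subdifferentials. If `f, g ∈ Γ(X)` on a Banach
space, `ȳ* ∈ ∂f(x̄)`, `w̄* ∈ ∂g(x̄)`, and `∂f` (resp. `∂g`) is strongly metrically
subregular at `x̄` for `ȳ*` (resp. for `w̄*`), then `∂(f + g)` is strongly metrically
subregular at `x̄` for `ȳ* + w̄*`. -/
theorem stmt_5 {X : Type*} [NormedAddCommGroup X] [NormedSpace ℝ X] [CompleteSpace X]
    (f g : X → EReal)
    (hfproper : ∃ x, f x ≠ ⊤) (hfne_bot : ∀ x, f x ≠ ⊥)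
    (hflsc : LowerSemicontinuous f)
    (hfconv : ∀ x y : X, ∀ a b : ℝ, 0 ≤ a → 0 ≤ b → a + b = 1 →
      f (a • x + b • y) ≤ (a : EReal) * f x + (b : EReal) * f y)
    (hgproper : ∃ x, g x ≠ ⊤) (hgne_bot : ∀ x, g x ≠ ⊥)
    (hglsc : LowerSemicontinuous g)
    (hgconv : ∀ x y : X, ∀ a b : ℝ, 0 ≤ a → 0 ≤ b → a + b = 1 →
      g (a • x + b • y) ≤ (a : EReal) * g x + (b : EReal) * g y)
    (xbar : X) (ybar wbar : X →L[ℝ] ℝ)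
    (hybar : ybar ∈ subdiff f xbar) (hwbar : wbar ∈ subdiff g xbar)
    (hf : StrongSubreg (subdiff f) xbar ybar)
    (hg : StrongSubreg (subdiff g) xbar wbar) :
    StrongSubreg (subdiff (fun x => f x + g x)) xbar (ybar + wbar) := by
  classical
  obtain ⟨-, κ₁, hκ₁, U₁, hU₁, hsub₁⟩ := hf
  obtain ⟨-, κ₂, hκ₂, U₂, hU₂, hsub₂⟩ := hg
  obtain ⟨r₁, hr₁, hball₁⟩ := Metric.mem_nhds_iff.mp hU₁
  obtain ⟨r₂, hr₂, hball₂⟩ := Metric.mem_nhds_iff.mp hU₂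
  have hsubf : ∀ x, ‖x - xbar‖ < r₁ → ∀ y ∈ subdiff f x, ‖x - xbar‖ ≤ κ₁ * ‖y - ybar‖ := by
    intro x hx y hy
    exact hsub₁ x (hball₁ (by rwa [mem_ball, dist_eq_norm])) y hy
  have hsubg : ∀ x, ‖x - xbar‖ < r₂ → ∀ y ∈ subdiff g x, ‖x - xbar‖ ≤ κ₂ * ‖y - wbar‖ := by
    intro x hx y hy
    exact hsub₂ x (hball₂ (by rwa [mem_ball, dist_eq_norm])) y hy
  have G₁ := growth_of_subreg f hfne_bot hflsc hfconv xbar ybar hybar κ₁ r₁ hκ₁ hr₁ hsubf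
  have G₂ := growth_of_subreg g hgne_bot hglsc hgconv xbar wbar hwbar κ₂ r₂ hκ₂ hr₂ hsubg
  set c₁ : ℝ := 1/(8*κ₁) with hc₁
  set c₂ : ℝ := 1/(8*κ₂) with hc₂
  have hc₁p : 0 < c₁ := by positivity
  have hc₂p : 0 < c₂ := by positivity
  -- finiteness at xbar
  have hfxb := hybar.1
  have hgxb := hwbar.1
  set Fb : ℝ := (f xbar).toReal with hFbdef
  set Gb : ℝ := (g xbar).toReal with hGbdef
  have hFb : ((Fb:ℝ):EReal) = f xbar := EReal.coe_toReal hfxb (hfne_bot xbar)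
  have hGb : ((Gb:ℝ):EReal) = g xbar := EReal.coe_toReal hgxb (hgne_bot xbar)
  constructor
  · -- membership
    refine ⟨(EReal.add_lt_top hfxb hgxb).ne, fun z => ?_⟩
    have h1 := hybar.2 z
    have h2 := hwbar.2 z
    calc f xbar + g xbar + (((ybar + wbar) (z - xbar) : ℝ):EReal)
        = (f xbar + ((ybar (z - xbar) : ℝ):EReal)) + (g xbar + ((wbar (z - xbar) : ℝ):EReal)) := by
          rw [show ((ybar + wbar) (z - xbar) : ℝ) = ybar (z - xbar) + wbar (z - xbar) from rfl,
            EReal.coe_add]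
          abel
      _ ≤ f z + g z := add_le_add h1 h2
  · refine ⟨(c₁ + c₂)⁻¹, by positivity, ball xbar (min (r₁/3) (r₂/3)),
      ball_mem_nhds _ (by positivity), ?_⟩
    intro x hx y hy
    rw [mem_ball, dist_eq_norm, lt_min_iff] at hx
    obtain ⟨hy1, hy2⟩ := hy
    set ρ : ℝ := ‖x - xbar‖ with hρdef
    rcases eq_or_lt_of_le (norm_nonneg (x - xbar)) with hρ0 | hρ0
    · rw [hρdef, ← hρ0]; positivity
    -- finiteness at x
    have hfx : f x ≠ ⊤ := by
      intro hfx
      exact hy1 (by simp only [hfx]; exact EReal.top_add_of_ne_bot (hgne_bot x))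
    have hgx : g x ≠ ⊤ := by
      intro hgx
      exact hy1 (by simp only [hgx]; exact EReal.add_top_of_ne_bot (hfne_bot x))
    set Fx : ℝ := (f x).toReal with hFxdef
    set Gx : ℝ := (g x).toReal with hGxdef
    have hFx : ((Fx:ℝ):EReal) = f x := EReal.coe_toReal hfx (hfne_bot x)
    have hGx : ((Gx:ℝ):EReal) = g x := EReal.coe_toReal hgx (hgne_bot x)
    -- real inequality from y ∈ subdiff (f+g) x at z = xbar
    have RA : Fx + Gx + y (xbar - x) ≤ Fb + Gb := by
      have h1 : f x + g x + ((y (xbar - x) : ℝ):EReal) ≤ f xbar + g xbar := hy2 xbar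
      rw [← hFx, ← hGx, ← hFb, ← hGb, ← EReal.coe_add, ← EReal.coe_add, ← EReal.coe_add] at h1
      exact_mod_cast h1
    -- growth inequalities
    have RB : Fb + ybar (x - xbar) + c₁ * ρ^2 ≤ Fx := by
      have h1 := G₁ x hx.1
      rw [← hFx, ← hFb, ← EReal.coe_add] at h1
      have h2 : Fb + (ybar (x - xbar) + c₁ * ‖x - xbar‖^2) ≤ Fx := by exact_mod_cast h1
      rw [← hρdef] at h2
      linarith
    have RC : Gb + wbar (x - xbar) + c₂ * ρ^2 ≤ Gx := by
      have h1 := G₂ x hx.2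
      rw [← hGx, ← hGb, ← EReal.coe_add] at h1
      have h2 : Gb + (wbar (x - xbar) + c₂ * ‖x - xbar‖^2) ≤ Gx := by exact_mod_cast h1
      rw [← hρdef] at h2
      linarith
    -- combine
    have hop : (y - (ybar + wbar)) (x - xbar) ≤ ‖y - (ybar + wbar)‖ * ρ := by
      calc (y - (ybar + wbar)) (x - xbar) ≤ |(y - (ybar + wbar)) (x - xbar)| := le_abs_self _
        _ = ‖(y - (ybar + wbar)) (x - xbar)‖ := rfl
        _ ≤ ‖y - (ybar + wbar)‖ * ‖x - xbar‖ := ContinuousLinearMap.le_opNorm _ _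
    have happ : (y - (ybar + wbar)) (x - xbar) =
        y (x - xbar) - ybar (x - xbar) - wbar (x - xbar) := by
      simp only [ContinuousLinearMap.sub_apply, ContinuousLinearMap.add_apply]
      ring
    have hyx : y (xbar - x) = -(y (x - xbar)) := by
      rw [show xbar - x = -(x - xbar) by abel, map_neg]
    have hsum : (c₁ + c₂) * ρ^2 ≤ ‖y - (ybar + wbar)‖ * ρ := by
      rw [happ] at hop
      rw [hyx] at RA
      linarith [RA, RB, RC, hop]
    rw [show (c₁ + c₂)⁻¹ * ‖y - (ybar + wbar)‖ = ‖y - (ybar + wbar)‖ / (c₁ + c₂) by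
      rw [div_eq_mul_inv]; ring]
    rw [le_div_iff₀ (by positivity : (0:ℝ) < c₁ + c₂)]
    have := mul_le_mul_of_nonneg_right hsum (le_of_lt (by positivity : (0:ℝ) < ρ⁻¹))
    calc ρ * (c₁ + c₂) = ((c₁ + c₂) * ρ^2) * ρ⁻¹ := by
          field_simp
      _ ≤ (‖y - (ybar + wbar)‖ * ρ) * ρ⁻¹ := this
      _ = ‖y - (ybar + wbar)‖ := mul_inv_cancel_right₀ (ne_of_gt hρ0) _
end

section
/- Let X be a real Banach space, let f ∈ Γ(X), and let x̄ ∈ X, ȳ* ∈ X* with ȳ* ∈ ∂f(x̄). Suppose ∂f is strongly metrically subregular at x̄ for ȳ*. Then there exists a constant c > 0 such that the contingent derivative D∂f(x̄|ȳ*) is positive-definite with modulus c, that is, ⟨z*, w⟩ ≥ c·‖w‖² for every w ∈ X and every z* ∈ D∂f(x̄|ȳ*)(w). -/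
open Topology Filter Metric Set

/-- The contingent (Bouligand) cone to `K` at `z`: vectors `v` for which there are
sequences `τₙ ↓ 0` and `wₙ → v` with `z + τₙ • wₙ ∈ K`. -/
def contingentCone {Z : Type*} [NormedAddCommGroup Z] [NormedSpace ℝ Z]
    (K : Set Z) (z : Z) : Set Z :=
  {v | ∃ τ : ℕ → ℝ, ∃ w : ℕ → Z, (∀ n, 0 < τ n) ∧
      Filter.Tendsto τ Filter.atTop (𝓝 0) ∧
      Filter.Tendsto w Filter.atTop (𝓝 v) ∧ ∀ n, z + τ n • w n ∈ K}

private lemma ereal_ne_bot_of_nonneg {g : EReal} (h : 0 ≤ g) : g ≠ ⊥ :=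
  fun hb => by simp [hb] at h

/-- Ekeland-type variational principle for nonnegative lsc EReal functions. -/
theorem ekeland_aux {X : Type*} [NormedAddCommGroup X] [NormedSpace ℝ X] [CompleteSpace X]
    (g : X → EReal) (hlsc : LowerSemicontinuous g)
    (hg0 : ∀ v, 0 ≤ g v) (α : ℝ) (hα : 0 < α) (x : X) (hx : g x ≠ ⊤) :
    ∃ u : X, g u + ((α * ‖u - x‖ : ℝ) : EReal) ≤ g x ∧
      ∀ v : X, g u ≤ g v + ((α * ‖v - u‖ : ℝ) : EReal) := by
  have hbot : ∀ v, g v ≠ ⊥ := fun v => ereal_ne_bot_of_nonneg (hg0 v)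
  set F : X → Set X := fun u => {v | g v + ((α * ‖v - u‖ : ℝ) : EReal) ≤ g u} with hF
  have hmemself : ∀ u, u ∈ F u := by
    intro u; simp [hF]
  have hFle : ∀ u v, v ∈ F u → g v ≤ g u := by
    intro u v hv
    refine le_trans ?_ hv
    refine le_add_of_nonneg_right ?_
    exact_mod_cast mul_nonneg hα.le (norm_nonneg _)
  have hFtrans : ∀ a b v, b ∈ F a → v ∈ F b → v ∈ F a := by
    intro a b v hb hv
    have htri : α * ‖v - a‖ ≤ α * ‖v - b‖ + α * ‖b - a‖ := by
      rw [← mul_add]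
      refine mul_le_mul_of_nonneg_left ?_ hα.le
      simpa [dist_eq_norm] using dist_triangle v b a
    calc g v + ((α * ‖v - a‖ : ℝ) : EReal)
        ≤ g v + ((α * ‖v - b‖ + α * ‖b - a‖ : ℝ) : EReal) := by
          exact add_le_add_right (EReal.coe_le_coe_iff.2 htri) _
      _ = g v + ((α * ‖v - b‖ : ℝ) : EReal) + ((α * ‖b - a‖ : ℝ) : EReal) := by
          rw [EReal.coe_add, add_assoc]
      _ ≤ g b + ((α * ‖b - a‖ : ℝ) : EReal) := add_le_add_left hv _
      _ ≤ g a := hb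
  -- approximate minimizer selection
  have key : ∀ u : X, g u ≠ ⊤ → ∀ ε : ℝ, 0 < ε →
      ∃ v ∈ F u, ∀ w ∈ F u, g v ≤ g w + (ε : EReal) := by
    intro u hu ε hε
    set m : EReal := ⨅ w ∈ F u, g w with hm
    have hmle : m ≤ g u := by
      refine iInf₂_le _ (hmemself u)
    have hm0 : (0 : EReal) ≤ m := le_iInf₂ fun w _ => hg0 w
    have hmtop : m ≠ ⊤ := fun h => hu (top_le_iff.1 (h ▸ hmle))
    have hmbot : m ≠ ⊥ := ereal_ne_bot_of_nonneg hm0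
    have hlt : m < m + (ε : EReal) := by
      rw [← EReal.coe_toReal hmtop hmbot, ← EReal.coe_add]
      exact_mod_cast lt_add_of_pos_right _ hε
    rw [hm, iInf_lt_iff] at hlt
    obtain ⟨v, hv⟩ := hlt
    rw [iInf_lt_iff] at hv
    obtain ⟨hvF, hv⟩ := hv
    refine ⟨v, hvF, fun w hw => le_trans hv.le ?_⟩
    exact add_le_add_left (iInf₂_le _ hw) _
  -- the iterative sequence
  let u : ℕ → X := fun n => Nat.rec x
    (fun n v => if h : g v ≠ ⊤ then (key v h ((1/2)^n) (by positivity)).choose else v) n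
  have hrec : ∀ n, u (n+1) =
      if h : g (u n) ≠ ⊤ then (key (u n) h ((1/2)^n) (by positivity)).choose else u n :=
    fun n => rfl
  have hu0 : u 0 = x := rfl
  have htop : ∀ n, g (u n) ≠ ⊤ := by
    intro n; induction n with
    | zero => exact hx
    | succ n ih =>
      rw [hrec n, dif_pos ih]
      obtain ⟨h1, -⟩ := (key (u n) ih ((1/2)^n) (by positivity)).choose_spec
      exact fun h => ih (top_le_iff.1 (h ▸ hFle _ _ h1))
  have hQ : ∀ n, u (n+1) ∈ F (u n) ∧
      ∀ w ∈ F (u n), g (u (n+1)) ≤ g w + (((1/2:ℝ)^n : ℝ) : EReal) := by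
    intro n
    rw [hrec n, dif_pos (htop n)]
    exact (key (u n) (htop n) ((1/2)^n) (by positivity)).choose_spec
  have hchain : ∀ n m, n ≤ m → u m ∈ F (u n) := by
    intro n m hnm
    induction m with
    | zero =>
      have : n = 0 := Nat.le_zero.1 hnm
      subst this; exact hmemself _
    | succ m ih =>
      rcases Nat.lt_or_ge n (m+1) with h | h
      · exact hFtrans _ _ _ (ih (Nat.lt_succ_iff.1 h)) (hQ m).1
      · have : n = m + 1 := le_antisymm hnm h
        subst this; exact hmemself _
  set r : ℕ → ℝ := fun n => (g (u n)).toReal with hr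
  have hcoe : ∀ n, g (u n) = ((r n : ℝ) : EReal) :=
    fun n => (EReal.coe_toReal (htop n) (hbot _)).symm
  have hstep : ∀ n m, n ≤ m → r m + α * ‖u m - u n‖ ≤ r n := by
    intro n m hnm
    have := hchain n m hnm
    rw [hF] at this
    simp only [Set.mem_setOf_eq, hcoe n, hcoe m, ← EReal.coe_add,
      EReal.coe_le_coe_iff] at this
    exact this
  have hranti : Antitone r := by
    intro n m hnm
    have := hstep n m hnm
    nlinarith [mul_nonneg hα.le (norm_nonneg (u m - u n))]
  have hrnonneg : ∀ n, 0 ≤ r n := fun n => by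
    have := hg0 (u n)
    rw [hcoe n] at this
    exact_mod_cast this
  have hbdd : BddBelow (Set.range r) := ⟨0, fun s ⟨n, hn⟩ => hn ▸ hrnonneg n⟩
  set L : ℝ := ⨅ n, r n with hL
  have hLle : ∀ n, L ≤ r n := fun n => ciInf_le hbdd n
  have hrtendsto : Tendsto r atTop (𝓝 L) := tendsto_atTop_ciInf hranti hbdd
  -- Cauchy
  have hcauchy : CauchySeq u := by
    rw [Metric.cauchySeq_iff']
    intro ε hε
    have : L < L + α * ε := by nlinarith
    obtain ⟨N, hN⟩ := exists_lt_of_ciInf_lt (hL ▸ this)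
    refine ⟨N, fun n hn => ?_⟩
    have h1 := hstep N n hn
    have h2 := hLle n
    rw [dist_eq_norm]
    nlinarith
  obtain ⟨ub, hub⟩ := cauchySeq_tendsto_of_complete hcauchy
  -- g ub ≤ L
  have hgub : g ub ≤ ((L : ℝ) : EReal) := by
    by_contra h
    push_neg at h
    obtain ⟨y, hy1, hy2⟩ := EReal.lt_iff_exists_real_btwn.1 h
    have := hlsc ub _ hy2
    obtain ⟨M, hM⟩ := (hub.eventually this).exists_forall_of_atTop
    have hyL : y ≤ L := by
      refine le_ciInf fun n => ?_
      have h3 := hM (max n M) (le_max_right _ _)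
      simp only at h3; rw [hcoe] at h3
      have : y < r (max n M) := EReal.coe_lt_coe_iff.1 h3
      have := hranti (le_max_left n M)
      linarith
    exact absurd hy1 (not_lt.2 (EReal.coe_le_coe_iff.2 hyL))
  -- ub ∈ F (u n)
  have hubF : ∀ n, ub ∈ F (u n) := by
    intro n
    have hlim : Tendsto (fun m => r m + α * ‖u m - u n‖) atTop (𝓝 (L + α * ‖ub - u n‖)) := by
      exact hrtendsto.add (((hub.sub_const (u n)).norm).const_mul α)
    have hle : L + α * ‖ub - u n‖ ≤ r n :=
      le_of_tendsto hlim (eventually_atTop.2 ⟨n, fun m hm => hstep n m hm⟩)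
    show g ub + ((α * ‖ub - u n‖ : ℝ) : EReal) ≤ g (u n)
    calc g ub + ((α * ‖ub - u n‖ : ℝ) : EReal)
        ≤ ((L : ℝ) : EReal) + ((α * ‖ub - u n‖ : ℝ) : EReal) := add_le_add_left hgub _
      _ = ((L + α * ‖ub - u n‖ : ℝ) : EReal) := by rw [← EReal.coe_add]
      _ ≤ ((r n : ℝ) : EReal) := EReal.coe_le_coe_iff.2 hle
      _ = g (u n) := (hcoe n).symm
  refine ⟨ub, by exact hubF 0, ?_⟩
  intro v
  by_contra hcon
  push_neg at hcon
  have hvF : v ∈ F ub := le_of_lt hcon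
  have hgvtop : g v ≠ ⊤ := by
    intro h
    rw [h] at hcon
    rw [EReal.top_add_coe] at hcon
    exact absurd hcon (not_lt.2 le_top)
  have hcoev : g v = (((g v).toReal : ℝ) : EReal) := (EReal.coe_toReal hgvtop (hbot v)).symm
  have hvFn : ∀ n, v ∈ F (u n) := fun n => hFtrans _ _ _ (hubF n) hvF
  have hrv : ∀ n, r (n+1) ≤ (g v).toReal + (1/2:ℝ)^n := by
    intro n
    have := (hQ n).2 v (hvFn n)
    rw [hcoe (n+1), hcoev, ← EReal.coe_add, EReal.coe_le_coe_iff] at this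
    exact this
  have hLv : L ≤ (g v).toReal := by
    refine le_of_forall_pos_le_add fun ε hε => ?_
    obtain ⟨n, hn⟩ := exists_pow_lt_of_lt_one hε (by norm_num : (1/2:ℝ) < 1)
    have := hrv n
    have := hLle (n+1)
    linarith
  have h1 : g ub ≤ g v := hgub.trans (hcoev ▸ EReal.coe_le_coe_iff.2 hLv)
  have h2 : g v ≤ g v + ((α * ‖v - ub‖ : ℝ) : EReal) :=
    le_add_of_nonneg_right (by exact_mod_cast mul_nonneg hα.le (norm_nonneg _))
  exact absurd (h2.trans_lt (hcon.trans_le h1)) (lt_irrefl _)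

theorem exists_subgrad {X : Type*} [NormedAddCommGroup X] [NormedSpace ℝ X]
    (g : X → EReal) (hbot : ∀ v, g v ≠ ⊥)
    (hconv : ∀ x y : X, ∀ a b : ℝ, 0 ≤ a → 0 ≤ b → a + b = 1 →
      g (a • x + b • y) ≤ (a : EReal) * g x + (b : EReal) * g y)
    (u : X) (hu : g u ≠ ⊤) (lam : ℝ) (hlam : 0 ≤ lam)
    (hmin : ∀ v, g u ≤ g v + ((lam * ‖v - u‖ : ℝ) : EReal)) :
    ∃ y : X →L[ℝ] ℝ, ‖y‖ ≤ lam ∧ y ∈ subdiff g u := by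
  have hgu : g u = (((g u).toReal : ℝ) : EReal) := (EReal.coe_toReal hu (hbot u)).symm
  set G : ℝ := (g u).toReal with hG
  set S : X → Set ℝ := fun w => {s | ∃ a t z, 0 < t ∧
    g (u + t • z) ≤ g u + ((t * a : ℝ) : EReal) ∧ s = a + lam * ‖w - z‖} with hS
  have hmem0 : ∀ w, lam * ‖w‖ ∈ S w := by
    intro w
    exact ⟨0, 1, 0, one_pos, by simp, by simp⟩
  have hSne : ∀ w, (S w).Nonempty := fun w => ⟨_, hmem0 w⟩
  -- lower bound on a
  have ha_lb : ∀ a t z, 0 < t → g (u + t • z) ≤ g u + ((t * a : ℝ) : EReal) →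
      -(lam * ‖z‖) ≤ a := by
    intro a t z ht hgz
    have h1 := hmin (u + t • z)
    have h2 : g u ≤ g u + ((t * a : ℝ) : EReal) + ((lam * ‖u + t • z - u‖ : ℝ) : EReal) :=
      h1.trans (add_le_add_left hgz _)
    have h3 : ‖u + t • z - u‖ = t * ‖z‖ := by
      simp [norm_smul, abs_of_pos ht]
    rw [h3, hgu, ← EReal.coe_add, ← EReal.coe_add, EReal.coe_le_coe_iff] at h2
    have : 0 ≤ t * a + lam * (t * ‖z‖) := by linarith
    have h4 : 0 ≤ t * (a + lam * ‖z‖) := by ring_nf; ring_nf at this; linarith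
    nlinarith [nonneg_of_mul_nonneg_right h4 ht]
  have hbdd : ∀ w, ∀ s ∈ S w, -(lam * ‖w‖) ≤ s := by
    intro w s ⟨a, t, z, ht, hgz, hs⟩
    have h1 := ha_lb a t z ht hgz
    have h2 : ‖z‖ ≤ ‖w - z‖ + ‖w‖ := by
      calc ‖z‖ = ‖w - (w - z)‖ := by congr 1; abel
        _ ≤ ‖w‖ + ‖w - z‖ := norm_sub_le _ _
        _ = ‖w - z‖ + ‖w‖ := by ring
    have h3 : lam * ‖z‖ ≤ lam * ‖w - z‖ + lam * ‖w‖ := by nlinarith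
    rw [hs]; linarith
  have hbddB : ∀ w, BddBelow (S w) := fun w => ⟨_, hbdd w⟩
  set N : X → ℝ := fun w => sInf (S w) with hN
  have hNle : ∀ w s, s ∈ S w → N w ≤ s := fun w s hs => csInf_le (hbddB w) hs
  have hNge : ∀ w, -(lam * ‖w‖) ≤ N w := fun w => le_csInf (hSne w) (hbdd w)
  have hNub : ∀ w, N w ≤ lam * ‖w‖ := fun w => hNle w _ (hmem0 w)
  -- scaling
  have hscale : ∀ c : ℝ, 0 < c → ∀ w, ∀ s ∈ S w, c * s ∈ S (c • w) := by
    intro c hc w s ⟨a, t, z, ht, hgz, hs⟩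
    refine ⟨c * a, t / c, c • z, div_pos ht hc, ?_, ?_⟩
    · have : (t / c) • (c • z) = t • z := by
        rw [smul_smul]; congr 1; field_simp
      rw [this]
      have : (t / c) * (c * a) = t * a := by field_simp
      rw [this]; exact hgz
    · rw [hs, ← smul_sub, norm_smul, Real.norm_eq_abs, abs_of_pos hc]; ring
  have hNhom_le : ∀ c : ℝ, 0 < c → ∀ w, N (c • w) ≤ c * N w := by
    intro c hc w
    have : N (c • w) / c ≤ N w := by
      refine le_csInf (hSne w) fun s hs => ?_
      have := hNle (c • w) _ (hscale c hc w s hs)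
      rw [div_le_iff₀ hc]; linarith [this]
    calc N (c • w) = c * (N (c • w) / c) := by field_simp
      _ ≤ c * N w := by nlinarith
  have hNhom : ∀ c : ℝ, 0 < c → ∀ w, N (c • w) = c * N w := by
    intro c hc w
    refine le_antisymm (hNhom_le c hc w) ?_
    have h1 := hNhom_le c⁻¹ (inv_pos.2 hc) (c • w)
    rw [inv_smul_smul₀ hc.ne' w] at h1
    calc c * N w ≤ c * (c⁻¹ * N (c • w)) := by nlinarith
      _ = N (c • w) := by field_simp
  -- subadditivity
  have hNadd : ∀ w₁ w₂, N (w₁ + w₂) ≤ N w₁ + N w₂ := by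
    intro w₁ w₂
    have key : ∀ s₁ ∈ S w₁, ∀ s₂ ∈ S w₂, N (w₁ + w₂) ≤ s₁ + s₂ := by
      intro s₁ ⟨a₁, t₁, z₁, ht₁, hg₁, hs₁⟩ s₂ ⟨a₂, t₂, z₂, ht₂, hg₂, hs₂⟩
      set t : ℝ := t₁ * t₂ / (t₁ + t₂) with hts
      have htsum : 0 < t₁ + t₂ := by linarith
      have ht : 0 < t := by positivity
      set μ : ℝ := t₂ / (t₁ + t₂) with hμ
      set ν : ℝ := t₁ / (t₁ + t₂) with hν
      have hμpos : 0 < μ := by positivity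
      have hνpos : 0 < ν := by positivity
      have hμν : μ + ν = 1 := by rw [hμ, hν]; field_simp; ring
      have hμt : μ * t₁ = t := by rw [hμ, hts]; ring
      have hνt : ν * t₂ = t := by rw [hν, hts]; ring
      have hvec : u + t • (z₁ + z₂) = μ • (u + t₁ • z₁) + ν • (u + t₂ • z₂) := by
        have : μ • (u + t₁ • z₁) + ν • (u + t₂ • z₂)
            = (μ + ν) • u + (μ * t₁) • z₁ + (ν * t₂) • z₂ := by module
        rw [this, hμν, hμt, hνt, one_smul, add_assoc, ← smul_add]
      -- bound values
      have haddtop : ∀ p : ℝ, g u + (p : EReal) ≠ ⊤ := by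
        intro p h
        rw [hgu, ← EReal.coe_add] at h
        exact EReal.coe_ne_top _ h
      have hcoe1 : g (u + t₁ • z₁) ≠ ⊤ := by
        intro h; rw [h] at hg₁
        exact haddtop _ (top_le_iff.1 hg₁)
      have hcoe2 : g (u + t₂ • z₂) ≠ ⊤ := by
        intro h; rw [h] at hg₂
        exact haddtop _ (top_le_iff.1 hg₂)
      set G₁ : ℝ := (g (u + t₁ • z₁)).toReal with hG₁
      set G₂ : ℝ := (g (u + t₂ • z₂)).toReal with hG₂
      have hco1 : g (u + t₁ • z₁) = ((G₁ : ℝ) : EReal) := (EReal.coe_toReal hcoe1 (hbot _)).symm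
      have hco2 : g (u + t₂ • z₂) = ((G₂ : ℝ) : EReal) := (EReal.coe_toReal hcoe2 (hbot _)).symm
      have hr1 : G₁ ≤ G + t₁ * a₁ := by
        rw [hco1, hgu, ← EReal.coe_add, EReal.coe_le_coe_iff] at hg₁; exact hg₁
      have hr2 : G₂ ≤ G + t₂ * a₂ := by
        rw [hco2, hgu, ← EReal.coe_add, EReal.coe_le_coe_iff] at hg₂; exact hg₂
      have hcv := hconv (u + t₁ • z₁) (u + t₂ • z₂) μ ν hμpos.le hνpos.le hμν
      rw [← hvec, hco1, hco2] at hcv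
      have hcv2 : g (u + t • (z₁ + z₂)) ≤ ((μ * G₁ + ν * G₂ : ℝ) : EReal) := by
        push_cast
        exact hcv
      have harith : μ * G₁ + ν * G₂ ≤ G + t * (a₁ + a₂) := by
        have e1 : μ * G₁ ≤ μ * (G + t₁ * a₁) := by nlinarith
        have e2 : ν * G₂ ≤ ν * (G + t₂ * a₂) := by nlinarith
        have : μ * (G + t₁ * a₁) + ν * (G + t₂ * a₂) = (μ + ν) * G + (μ * t₁) * a₁ + (ν * t₂) * a₂ := by ring
        rw [hμt, hνt, hμν, one_mul] at this
        linarith [e1, e2, this.le]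
      have hmemS : (a₁ + a₂) + lam * ‖(w₁ + w₂) - (z₁ + z₂)‖ ∈ S (w₁ + w₂) := by
        refine ⟨a₁ + a₂, t, z₁ + z₂, ht, ?_, rfl⟩
        refine hcv2.trans ?_
        rw [hgu, ← EReal.coe_add, EReal.coe_le_coe_iff]
        exact harith
      have htr : ‖(w₁ + w₂) - (z₁ + z₂)‖ ≤ ‖w₁ - z₁‖ + ‖w₂ - z₂‖ := by
        calc ‖(w₁ + w₂) - (z₁ + z₂)‖ = ‖(w₁ - z₁) + (w₂ - z₂)‖ := by congr 1; abel
          _ ≤ _ := norm_add_le _ _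
      have := hNle (w₁ + w₂) _ hmemS
      rw [hs₁, hs₂]
      nlinarith
    -- infimize
    have step1 : ∀ s₁ ∈ S w₁, N (w₁ + w₂) - s₁ ≤ N w₂ := by
      intro s₁ hs₁
      refine le_csInf (hSne w₂) fun s₂ hs₂ => ?_
      linarith [key s₁ hs₁ s₂ hs₂]
    have step2 : N (w₁ + w₂) - N w₂ ≤ N w₁ := by
      refine le_csInf (hSne w₁) fun s₁ hs₁ => ?_
      linarith [step1 s₁ hs₁]
    linarith
  -- Hahn-Banach
  obtain ⟨y, -, hy⟩ := exists_extension_of_le_sublinear ⟨⊥, 0⟩ N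
    (fun c hc x => hNhom c hc x) hNadd (by
      rintro ⟨x, hx⟩
      have : x = 0 := by simpa using hx
      subst this
      have h0 : (0:ℝ) ≤ N 0 := by simpa using hNge 0
      simpa using h0)
  have hybound : ∀ w, |y w| ≤ lam * ‖w‖ := by
    intro w
    have h1 : y w ≤ lam * ‖w‖ := (hy w).trans (hNub w)
    have h2 : y (-w) ≤ lam * ‖-w‖ := (hy (-w)).trans (hNub (-w))
    rw [map_neg, norm_neg] at h2
    rw [abs_le]; constructor <;> linarith
  set y' : X →L[ℝ] ℝ := y.mkContinuous lam (fun w => by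
    rw [Real.norm_eq_abs]; exact hybound w) with hy'
  refine ⟨y', LinearMap.mkContinuous_norm_le _ hlam _, hu, fun v => ?_⟩
  rcases eq_or_ne (g v) ⊤ with hv | hv
  · rw [hv]; exact le_top
  · have hcov : g v = (((g v).toReal : ℝ) : EReal) := (EReal.coe_toReal hv (hbot v)).symm
    obtain ⟨ρ, hρ⟩ : ∃ ρ : ℝ, g v = (ρ : EReal) := ⟨_, hcov⟩
    have hval : u + (1:ℝ) • (v - u) = v := by rw [one_smul]; abel
    have hmemv : ρ - G ∈ S (v - u) := by
      refine ⟨ρ - G, 1, v - u, one_pos, ?_, by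
        rw [sub_self (v - u), norm_zero, mul_zero, add_zero]⟩
      rw [hval, hρ, hgu, ← EReal.coe_add, one_mul]
      exact EReal.coe_le_coe_iff.2 (by ring_nf; exact le_refl _)
    have h1 : y (v - u) ≤ ρ - G := (hy (v - u)).trans (hNle _ _ hmemv)
    have happ : y' (v - u) = y (v - u) := rfl
    rw [hgu, hρ, happ, ← EReal.coe_add, EReal.coe_le_coe_iff]
    linarith

private lemma add3coe (F : EReal) (A B C : ℝ) :
    ((F + (A : EReal)) + (B : EReal)) + (C : EReal) = F + ((A + B + C : ℝ) : EReal) := by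
  rw [add_assoc, add_assoc, ← EReal.coe_add, ← EReal.coe_add, ← add_assoc A B C]

theorem growth_lemma {X : Type*} [NormedAddCommGroup X] [NormedSpace ℝ X] [CompleteSpace X]
    (f : X → EReal) (hne_bot : ∀ x, f x ≠ ⊥) (hlsc : LowerSemicontinuous f)
    (hconv : ∀ x y : X, ∀ a b : ℝ, 0 ≤ a → 0 ≤ b → a + b = 1 →
      f (a • x + b • y) ≤ (a : EReal) * f x + (b : EReal) * f y)
    (xbar : X) (ybar : X →L[ℝ] ℝ) (hybar : ybar ∈ subdiff f xbar)
    (hsubreg : ∃ κ > (0 : ℝ), ∃ U ∈ 𝓝 xbar, ∀ x ∈ U, ∀ y ∈ subdiff f x,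
      ‖x - xbar‖ ≤ κ * ‖y - ybar‖) :
    ∃ c > (0 : ℝ), ∃ r > (0 : ℝ), ∀ x : X, ‖x - xbar‖ < r →
      (((f xbar).toReal + ybar (x - xbar) + c * ‖x - xbar‖ ^ 2 : ℝ) : EReal) ≤ f x := by
  set fb : ℝ := (f xbar).toReal with hfbdef
  have hfb : f xbar = ((fb : ℝ) : EReal) := (EReal.coe_toReal hybar.1 (hne_bot xbar)).symm
  set g : X → EReal := fun v => f (xbar + v) + ((-fb - ybar v : ℝ) : EReal) with hg
  have hgbot : ∀ v, g v ≠ ⊥ := by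
    intro v h
    rw [hg] at h
    rcases EReal.add_eq_bot_iff.1 h with h | h
    · exact hne_bot _ h
    · exact EReal.coe_ne_bot _ h
  have hg0 : ∀ v, 0 ≤ g v := by
    intro v
    have h := hybar.2 (xbar + v)
    rw [add_sub_cancel_left] at h
    have h2 := add_le_add_left h ((-fb - ybar v : ℝ) : EReal)
    refine le_trans (le_of_eq ?_) h2
    rw [hfb, ← EReal.coe_add, ← EReal.coe_add]
    norm_cast
    ring
  -- lower semicontinuity of g
  have hccont : Continuous (fun v : X => -fb - ybar v) :=
    continuous_const.sub ybar.continuous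
  have hglsc : LowerSemicontinuous g := by
    intro v y hy
    obtain ⟨m, hm1, hm2⟩ := EReal.lt_iff_exists_real_btwn.1 hy
    set cv : ℝ := -fb - ybar v with hcv
    obtain ⟨K, δ, hδ, hK1, hK2⟩ : ∃ K δ : ℝ, 0 < δ ∧ ((K : ℝ) : EReal) < f (xbar + v) ∧
        m ≤ K + cv - δ := by
      rcases eq_or_ne (f (xbar + v)) ⊤ with htop | htop
      · exact ⟨m - cv + 1, 1, one_pos, by rw [htop]; exact EReal.coe_lt_top _, by ring_nf; rfl⟩
      · have hfv : f (xbar + v) = (((f (xbar + v)).toReal : ℝ) : EReal) :=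
          (EReal.coe_toReal htop (hne_bot _)).symm
        set T : ℝ := (f (xbar + v)).toReal
        have hmT : m < T + cv := by
          rw [hg] at hm2
          simp only at hm2
          rw [hfv, ← EReal.coe_add, EReal.coe_lt_coe_iff] at hm2
          exact hm2
        refine ⟨m - cv + (T + cv - m)/2, (T + cv - m)/2, by linarith, ?_, by ring_nf; rfl⟩
        rw [hfv, EReal.coe_lt_coe_iff]
        linarith
    have hf1 : ∀ᶠ v' in 𝓝 v, ((K : ℝ) : EReal) < f (xbar + v') := by
      have h1 := hlsc (xbar + v) _ hK1
      have hcont : Continuous (fun v' : X => xbar + v') := continuous_const.add continuous_id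
      exact (hcont.tendsto v).eventually h1
    have hf2 : ∀ᶠ v' in 𝓝 v, cv - δ < -fb - ybar v' :=
      (hccont.tendsto v).eventually (eventually_gt_nhds (by linarith))
    filter_upwards [hf1, hf2] with v' h1 h2
    have h3 : ((K + (cv - δ) : ℝ) : EReal) < f (xbar + v') + ((-fb - ybar v' : ℝ) : EReal) := by
      rw [EReal.coe_add]
      exact EReal.add_lt_add h1 (EReal.coe_lt_coe_iff.2 h2)
    refine hm1.trans_le (le_trans ?_ h3.le)
    exact EReal.coe_le_coe_iff.2 (by linarith)
  -- distributivity helper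
  have hdistr : ∀ (a : ℝ), 0 ≤ a → ∀ (F : EReal), F ≠ ⊥ → ∀ p : ℝ,
      (a : EReal) * (F + (p : EReal)) = (a : EReal) * F + ((a * p : ℝ) : EReal) := by
    intro a ha F hF p
    rcases eq_or_lt_of_le ha with h0 | hpos
    · rw [← h0]
      simp
    · rcases eq_or_ne F ⊤ with ht | ht
      · rw [ht, EReal.top_add_coe, EReal.coe_mul_top_of_pos hpos, EReal.top_add_coe]
      · have hFr : F = ((F.toReal : ℝ) : EReal) := (EReal.coe_toReal ht hF).symm
        rw [hFr, ← EReal.coe_add, ← EReal.coe_mul, ← EReal.coe_mul, ← EReal.coe_add]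
        norm_cast
        ring
  -- convexity of g
  have hgconv : ∀ x y : X, ∀ a b : ℝ, 0 ≤ a → 0 ≤ b → a + b = 1 →
      g (a • x + b • y) ≤ (a : EReal) * g x + (b : EReal) * g y := by
    intro v w a b ha hb hab
    have hvec : xbar + (a • v + b • w) = a • (xbar + v) + b • (xbar + w) := by
      have h : a • (xbar + v) + b • (xbar + w) = (a + b) • xbar + (a • v + b • w) := by module
      rw [h, hab, one_smul]
    have hYlin : ybar (a • v + b • w) = a * ybar v + b * ybar w := by
      rw [map_add, map_smul, map_smul, smul_eq_mul, smul_eq_mul]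
    have hlin : -fb - ybar (a • v + b • w) = a * (-fb - ybar v) + b * (-fb - ybar w) := by
      rw [hYlin]
      linear_combination fb * hab
    calc g (a • v + b • w)
        = f (a • (xbar + v) + b • (xbar + w)) +
            ((a * (-fb - ybar v) + b * (-fb - ybar w) : ℝ) : EReal) := by
          rw [hg]
          simp only
          rw [hvec, hlin]
      _ ≤ ((a : EReal) * f (xbar + v) + (b : EReal) * f (xbar + w)) +
            (((a * (-fb - ybar v) : ℝ) : EReal) + ((b * (-fb - ybar w) : ℝ) : EReal)) := by
          rw [EReal.coe_add]
          exact add_le_add_left (hconv _ _ a b ha hb hab) _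
      _ = ((a : EReal) * f (xbar + v) + ((a * (-fb - ybar v) : ℝ) : EReal)) +
            ((b : EReal) * f (xbar + w) + ((b * (-fb - ybar w) : ℝ) : EReal)) := by
          exact add_add_add_comm _ _ _ _
      _ = (a : EReal) * g v + (b : EReal) * g w := by
          rw [hg]
          simp only
          rw [hdistr a ha _ (hne_bot _), hdistr b hb _ (hne_bot _)]
  -- subdifferential transfer
  have htrans : ∀ (u : X) (y : X →L[ℝ] ℝ), y ∈ subdiff g u →
      (ybar + y) ∈ subdiff f (xbar + u) := by
    intro u y ⟨hgu, hineq⟩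
    have hftop : f (xbar + u) ≠ ⊤ := by
      intro h
      apply hgu
      rw [hg]
      simp only
      rw [h, EReal.top_add_coe]
    refine ⟨hftop, fun z => ?_⟩
    have h := hineq (z - xbar)
    rw [hg] at h
    simp only at h
    have hz : xbar + (z - xbar) = z := by abel
    rw [hz] at h
    have e1 : (-fb - ybar u) + y (z - xbar - u) + (fb + ybar (z - xbar)) =
        (ybar + y) (z - (xbar + u)) := by
      simp only [ContinuousLinearMap.add_apply, map_sub, map_add, sub_sub]
      ring
    calc f (xbar + u) + (((ybar + y) (z - (xbar + u)) : ℝ) : EReal)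
        = ((f (xbar + u) + ((-fb - ybar u : ℝ) : EReal)) + ((y (z - xbar - u) : ℝ) : EReal)) +
            ((fb + ybar (z - xbar) : ℝ) : EReal) := by rw [add3coe, e1]
      _ ≤ (f z + ((-fb - ybar (z - xbar) : ℝ) : EReal)) + ((fb + ybar (z - xbar) : ℝ) : EReal) :=
          add_le_add_left h _
      _ = f z := by
          rw [add_assoc, ← EReal.coe_add,
            (by ring : (-fb - ybar (z - xbar)) + (fb + ybar (z - xbar)) = 0),
            EReal.coe_zero, add_zero]
  -- main argument
  obtain ⟨κ, hκ, U, hU, hsub⟩ := hsubreg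
  obtain ⟨ε, hε, hball⟩ := Metric.mem_nhds_iff.1 hU
  refine ⟨1/(5*κ), by positivity, ε/2, by positivity, ?_⟩
  intro x hx
  set c : ℝ := 1/(5*κ) with hc
  have hcpos : 0 < c := by positivity
  set w : X := x - xbar with hw
  by_contra hcon
  push_neg at hcon
  have hxw : xbar + w = x := by rw [hw]; abel
  have hgw : g w < ((c * ‖w‖^2 : ℝ) : EReal) := by
    have h1 := EReal.add_lt_add_right_coe hcon (-fb - ybar w)
    calc g w = f x + ((-fb - ybar w : ℝ) : EReal) := by rw [hg]; simp only; rw [hxw]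
      _ < ((fb + ybar w + c * ‖w‖^2 : ℝ) : EReal) + ((-fb - ybar w : ℝ) : EReal) := h1
      _ = ((c * ‖w‖^2 : ℝ) : EReal) := by
          rw [← EReal.coe_add]
          norm_cast
          ring
  have hw0 : w ≠ 0 := by
    intro h0
    rw [h0] at hgw
    rw [norm_zero] at hgw
    have : g (0 : X) < ((0:ℝ) : EReal) := by simpa using hgw
    exact absurd this (not_lt.2 (by simpa using hg0 0))
  have hwpos : 0 < ‖w‖ := norm_pos_iff.2 hw0
  set α : ℝ := 2 * c * ‖w‖ with hα
  have hαpos : 0 < α := by positivity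
  have hgwtop : g w ≠ ⊤ := (hgw.trans_le le_top).ne
  obtain ⟨u, hu1, hu2⟩ := ekeland_aux g hglsc hg0 α hαpos w hgwtop
  have hd : α * ‖u - w‖ < c * ‖w‖^2 := by
    have h1 : ((α * ‖u - w‖ : ℝ) : EReal) ≤ g w := le_trans (le_add_of_nonneg_left (hg0 u)) hu1
    exact_mod_cast h1.trans_lt hgw
  have huw : ‖u - w‖ < ‖w‖/2 := by
    have h2 : α * (‖w‖/2) = c * ‖w‖^2 := by rw [hα]; ring
    nlinarith
  have hunorm1 : ‖w‖/2 < ‖u‖ := by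
    have h := norm_sub_norm_le w u
    have h2 : ‖w - u‖ = ‖u - w‖ := norm_sub_rev _ _
    linarith
  have hunorm2 : ‖u‖ < ε := by
    have h : ‖u‖ ≤ ‖u - w‖ + ‖w‖ := by simpa using norm_add_le (u - w) w
    have hx2 : ‖w‖ < ε/2 := hx
    linarith
  have hgule : g u ≤ g w :=
    le_trans (le_add_of_nonneg_right (by exact_mod_cast mul_nonneg hαpos.le (norm_nonneg _))) hu1
  have hgutop : g u ≠ ⊤ := fun h => hgwtop (top_le_iff.1 (h ▸ hgule))
  obtain ⟨y, hynorm, hysub⟩ := exists_subgrad g hgbot hgconv u hgutop α hαpos.le hu2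
  have hmemU : xbar + u ∈ U := by
    apply hball
    rw [Metric.mem_ball, dist_eq_norm, add_sub_cancel_left]
    exact hunorm2
  have hsubf := htrans u y hysub
  have h1 := hsub (xbar + u) hmemU (ybar + y) hsubf
  rw [add_sub_cancel_left, add_sub_cancel_left] at h1
  have h2 : ‖u‖ ≤ κ * α := h1.trans (mul_le_mul_of_nonneg_left hynorm hκ.le)
  have hκα : κ * α = (2/5) * ‖w‖ := by
    rw [hα, hc]
    field_simp
  nlinarith

/-- If `f ∈ Γ(X)` on a Banach space, `ȳ* ∈ ∂f(x̄)`, and `∂f` is strongly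
metrically subregular at `x̄` for `ȳ*` (for some constant `κ > 0` and neighborhood `U`,
`‖x - x̄‖ ≤ κ·d(ȳ*, ∂f(x))` on `U`, stated pointwise over `y ∈ ∂f(x)`), then there is a
constant `c > 0` such that the contingent derivative `D∂f(x̄|ȳ*)` is positive-definite
with modulus `c`: `⟨z*, w⟩ ≥ c·‖w‖²` for all `w ∈ X` and `z* ∈ D∂f(x̄|ȳ*)(w)`. -/
theorem stmt_8 {X : Type*} [NormedAddCommGroup X] [NormedSpace ℝ X] [CompleteSpace X]
    (f : X → EReal)
    (hproper : ∃ x, f x ≠ ⊤) (hne_bot : ∀ x, f x ≠ ⊥)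
    (hlsc : LowerSemicontinuous f)
    (hconv : ∀ x y : X, ∀ a b : ℝ, 0 ≤ a → 0 ≤ b → a + b = 1 →
      f (a • x + b • y) ≤ (a : EReal) * f x + (b : EReal) * f y)
    (xbar : X) (ybar : X →L[ℝ] ℝ) (hybar : ybar ∈ subdiff f xbar)
    (hsubreg : ∃ κ > (0 : ℝ), ∃ U ∈ 𝓝 xbar, ∀ x ∈ U, ∀ y ∈ subdiff f x,
      ‖x - xbar‖ ≤ κ * ‖y - ybar‖) :
    ∃ c > (0 : ℝ), ∀ (w : X) (z : X →L[ℝ] ℝ),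
      (w, z) ∈ contingentCone {p : X × (X →L[ℝ] ℝ) | p.2 ∈ subdiff f p.1} (xbar, ybar) →
      c * ‖w‖ ^ 2 ≤ z w := by
  obtain ⟨c, hcpos, r, hrpos, hgrow⟩ :=
    growth_lemma f hne_bot hlsc hconv xbar ybar hybar hsubreg
  refine ⟨c, hcpos, ?_⟩
  rintro w z ⟨τ, p, hτpos, hτ0, hp, hmem⟩
  set fb : ℝ := (f xbar).toReal with hfbdef
  have hfb : f xbar = ((fb : ℝ) : EReal) := (EReal.coe_toReal hybar.1 (hne_bot xbar)).symm
  have hw1 : Tendsto (fun n => (p n).1) atTop (𝓝 w) := (continuous_fst.tendsto (w, z)).comp hp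
  have hz1 : Tendsto (fun n => (p n).2) atTop (𝓝 z) := (continuous_snd.tendsto (w, z)).comp hp
  have hprod : Tendsto (fun n => τ n * ‖(p n).1‖) atTop (𝓝 0) := by
    have := hτ0.mul hw1.norm
    simpa using this
  have hev : ∀ᶠ n in atTop, τ n * ‖(p n).1‖ < r := hprod.eventually_lt_const hrpos
  have hkey : ∀ᶠ n in atTop, c * ‖(p n).1‖ ^ 2 ≤ (p n).2 ((p n).1) := by
    filter_upwards [hev] with n hn
    set wn : X := (p n).1 with hwn
    set zn : X →L[ℝ] ℝ := (p n).2 with hzn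
    set t : ℝ := τ n with ht
    have htpos : 0 < t := hτpos n
    have hmem2 : (ybar + t • zn) ∈ subdiff f (xbar + t • wn) := by
      have h := hmem n
      simpa [Set.mem_setOf_eq, Prod.fst_add, Prod.snd_add, Prod.smul_fst, Prod.smul_snd,
        ← hwn, ← hzn] using h
    obtain ⟨hft, hineq⟩ := hmem2
    set Fn : ℝ := (f (xbar + t • wn)).toReal with hFndef
    have hfneq : f (xbar + t • wn) = ((Fn : ℝ) : EReal) :=
      (EReal.coe_toReal hft (hne_bot _)).symm
    have hnorm : ‖xbar + t • wn - xbar‖ = t * ‖wn‖ := by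
      rw [add_sub_cancel_left, norm_smul, Real.norm_eq_abs, abs_of_pos htpos]
    have hA := hgrow (xbar + t • wn) (by rw [hnorm]; exact hn)
    have hAreal : fb + t * ybar wn + c * (t * ‖wn‖) ^ 2 ≤ Fn := by
      rw [hfneq, EReal.coe_le_coe_iff] at hA
      have e1 : ybar (xbar + t • wn - xbar) = t * ybar wn := by
        rw [add_sub_cancel_left, map_smul, smul_eq_mul]
      rw [e1, hnorm] at hA
      exact hA
    have hB := hineq xbar
    have hBval : (ybar + t • zn) (xbar - (xbar + t • wn)) =
        -(t * ybar wn) - t ^ 2 * zn wn := by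
      have e0 : xbar - (xbar + t • wn) = -(t • wn) := by abel
      rw [e0, map_neg, ContinuousLinearMap.add_apply, ContinuousLinearMap.smul_apply,
        map_smul, map_smul, smul_eq_mul, smul_eq_mul, smul_eq_mul]
      ring
    rw [hBval, hfneq, hfb, ← EReal.coe_add, EReal.coe_le_coe_iff] at hB
    have h3 : c * (t * ‖wn‖) ^ 2 ≤ t ^ 2 * zn wn := by linarith
    have h4 : t ^ 2 * (c * ‖wn‖ ^ 2) ≤ t ^ 2 * zn wn := by nlinarith
    exact le_of_mul_le_mul_left h4 (pow_pos htpos 2)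
  have hlim1 : Tendsto (fun n => c * ‖(p n).1‖ ^ 2) atTop (𝓝 (c * ‖w‖ ^ 2)) :=
    (hw1.norm.pow 2).const_mul c
  have hlim2 : Tendsto (fun n => (p n).2 ((p n).1)) atTop (𝓝 (z w)) := by
    have hcont : Continuous (fun q : (X →L[ℝ] ℝ) × X => q.1 q.2) :=
      isBoundedBilinearMap_apply.continuous
    have hpair : Tendsto (fun n => ((p n).2, (p n).1)) atTop (𝓝 (z, w)) :=
      hz1.prodMk_nhds hw1
    exact (hcont.tendsto (z, w)).comp hpair
  exact le_of_tendsto_of_tendsto hlim1 hlim2 hkey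
end

section
/- Let X be a finite-dimensional real normed space, let f ∈ Γ(X), and let x̄ ∈ X, ȳ* ∈ X* with ȳ* ∈ ∂f(x̄). Suppose there is a constant c > 0 such that ⟨z*, w⟩ ≥ c·‖w‖² for every w ∈ X and every z* ∈ D∂f(x̄|ȳ*)(w). Then for every κ > 1/c there exist neighborhoods U of x̄ and V of ȳ* such that ‖x − x̄‖ ≤ κ·‖y* − ȳ*‖ whenever (x, y*) ∈ gph ∂f ∩ (U × V); in particular, ∂f is strongly metrically subregular at x̄ for ȳ* with any constant κ > 1/c. -/
open Topology Filter Metric Set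

/-- Let `X` be finite-dimensional, `f ∈ Γ(X)`, `ȳ* ∈ ∂f(x̄)`, and suppose
there is `c > 0` such that `⟨z*, w⟩ ≥ c·‖w‖²` for every `w ∈ X` and
`z* ∈ D∂f(x̄|ȳ*)(w)` (contingent derivative). Then for every `κ > 1/c` there are
neighborhoods `U` of `x̄` and `V` of `ȳ*` with `‖x - x̄‖ ≤ κ·‖y* - ȳ*‖` whenever
`(x, y*) ∈ gph ∂f ∩ (U × V)`; in particular `∂f` is strongly metrically subregular
at `x̄` for `ȳ*` with any constant `κ > 1/c`. -/
theorem stmt_9 {X : Type*} [NormedAddCommGroup X] [NormedSpace ℝ X] [FiniteDimensional ℝ X]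
    (f : X → EReal)
    (hproper : ∃ x, f x ≠ ⊤) (hne_bot : ∀ x, f x ≠ ⊥)
    (hlsc : LowerSemicontinuous f)
    (hconv : ∀ x y : X, ∀ a b : ℝ, 0 ≤ a → 0 ≤ b → a + b = 1 →
      f (a • x + b • y) ≤ (a : EReal) * f x + (b : EReal) * f y)
    (xbar : X) (ybar : X →L[ℝ] ℝ) (hybar : ybar ∈ subdiff f xbar)
    (c : ℝ) (hc : 0 < c)
    (hpos : ∀ (w : X) (z : X →L[ℝ] ℝ),
      (w, z) ∈ contingentCone {p : X × (X →L[ℝ] ℝ) | p.2 ∈ subdiff f p.1} (xbar, ybar) →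
      c * ‖w‖ ^ 2 ≤ z w) :
    ∀ κ : ℝ, 1 / c < κ →
      ∃ U ∈ 𝓝 xbar, ∃ V ∈ 𝓝 ybar, ∀ x ∈ U, ∀ y ∈ subdiff f x, y ∈ V →
        ‖x - xbar‖ ≤ κ * ‖y - ybar‖ := by

  intro κ hκ
  have hκpos : 0 < κ := lt_trans (by positivity) hκ
  by_contra hcon
  push_neg at hcon
  have key : ∀ n : ℕ, ∃ x : X, ∃ y : X →L[ℝ] ℝ, y ∈ subdiff f x ∧
      ‖x - xbar‖ < 1 / (n + 1) ∧ ‖y - ybar‖ < 1 / (n + 1) ∧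
      κ * ‖y - ybar‖ < ‖x - xbar‖ := by
    intro n
    have hr : (0 : ℝ) < 1 / (n + 1) := by positivity
    obtain ⟨x, hx, y, hy, hyV, hlt⟩ := hcon (Metric.ball xbar (1 / (n + 1)))
      (Metric.ball_mem_nhds _ hr) (Metric.ball ybar (1 / (n + 1)))
      (Metric.ball_mem_nhds _ hr)
    exact ⟨x, y, hy, by simpa [dist_eq_norm] using hx,
      by simpa [dist_eq_norm] using hyV, hlt⟩
  choose x y hy hxn hyn hlt using key
  set τ : ℕ → ℝ := fun n => ‖x n - xbar‖ with hτ
  have hτpos : ∀ n, 0 < τ n := fun n =>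
    lt_of_le_of_lt (by positivity) (hlt n)
  set w : ℕ → X := fun n => (τ n)⁻¹ • (x n - xbar) with hw
  set z : ℕ → (X →L[ℝ] ℝ) := fun n => (τ n)⁻¹ • (y n - ybar) with hz
  have hwnorm : ∀ n, ‖w n‖ = 1 := by
    intro n
    rw [hw]
    simp only [norm_smul, norm_inv, Real.norm_eq_abs,
      abs_of_pos (hτpos n)]
    exact inv_mul_cancel₀ (hτpos n).ne'
  have hznorm : ∀ n, ‖z n‖ ≤ 1 / κ := by
    intro n
    show ‖(τ n)⁻¹ • (y n - ybar)‖ ≤ 1 / κ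
    rw [norm_smul ((τ n)⁻¹) (y n - ybar), norm_inv, Real.norm_eq_abs, abs_of_pos (hτpos n)]
    rw [inv_mul_le_iff₀ (hτpos n), mul_one_div, le_div_iff₀ hκpos]
    nlinarith [(hlt n), norm_nonneg (y n - ybar)]
  set u : ℕ → X × (X →L[ℝ] ℝ) := fun n => (w n, z n) with hu
  have humem : ∀ n, u n ∈ Metric.closedBall (0 : X × (X →L[ℝ] ℝ)) (max 1 (1 / κ)) := by
    intro n
    simp only [Metric.mem_closedBall, dist_zero_right, hu, Prod.norm_def]
    exact max_le_max (le_of_eq (hwnorm n)) (hznorm n)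
  obtain ⟨p, hp, φ, hφ, hconvp⟩ :=
    (isCompact_closedBall (0 : X × (X →L[ℝ] ℝ)) (max 1 (1 / κ))).tendsto_subseq humem
  have hτ0 : Tendsto τ atTop (𝓝 0) := by
    have h1 : Tendsto (fun n : ℕ => 1 / ((n : ℝ) + 1)) atTop (𝓝 0) :=
      tendsto_one_div_add_atTop_nhds_zero_nat
    refine squeeze_zero (fun n => (hτpos n).le) (fun n => (hxn n).le) h1
  have hmemcone : p ∈ contingentCone
      {q : X × (X →L[ℝ] ℝ) | q.2 ∈ subdiff f q.1} (xbar, ybar) := by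
    refine ⟨τ ∘ φ, u ∘ φ, fun n => hτpos (φ n), hτ0.comp hφ.tendsto_atTop, hconvp, ?_⟩
    intro n
    have hne : τ (φ n) ≠ 0 := (hτpos (φ n)).ne'
    have hx' : xbar + τ (φ n) • w (φ n) = x (φ n) := by
      rw [hw]; simp [smul_smul, mul_inv_cancel₀ hne]
    have hy' : ybar + τ (φ n) • z (φ n) = y (φ n) := by
      rw [hz]; simp [smul_smul, mul_inv_cancel₀ hne]
    have heq : (xbar, ybar) + τ (φ n) • u (φ n) = (x (φ n), y (φ n)) := by
      simp only [hu, Prod.smul_mk, Prod.mk_add_mk, hx', hy']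
    show ((xbar, ybar) + τ (φ n) • u (φ n)) ∈
      {q : X × (X →L[ℝ] ℝ) | q.2 ∈ subdiff f q.1}
    rw [heq]
    exact hy (φ n)
  have hineq := hpos p.1 p.2 (by simpa using hmemcone)
  have hw1 : Tendsto (fun n => (u (φ n)).1) atTop (𝓝 p.1) :=
    (continuous_fst.tendsto p).comp hconvp
  have hz1 : Tendsto (fun n => (u (φ n)).2) atTop (𝓝 p.2) :=
    (continuous_snd.tendsto p).comp hconvp
  have hpnorm : ‖p.1‖ = 1 := by
    have := (hw1.norm)
    have hconst : Tendsto (fun n => ‖(u (φ n)).1‖) atTop (𝓝 1) := by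
      simpa [hu, hwnorm] using tendsto_const_nhds (α := ℝ) (x := (1:ℝ))
    exact tendsto_nhds_unique this hconst
  have hpznorm : ‖p.2‖ ≤ 1 / κ := by
    refine le_of_tendsto hz1.norm (Filter.Eventually.of_forall fun n => ?_)
    exact hznorm (φ n)
  have hap : p.2 p.1 ≤ ‖p.2‖ * ‖p.1‖ :=
    le_trans (le_abs_self _) (p.2.le_opNorm p.1)
  have h1κc : 1 / κ < c := by
    rw [div_lt_iff₀ hκpos]
    rw [div_lt_iff₀ hc] at hκ
    linarith [mul_comm c κ]
  rw [hpnorm] at hineq hap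
  simp only [one_pow, mul_one] at hineq hap
  linarith
end

section
/- Let X be a finite-dimensional real normed space, let f ∈ Γ(X), and let x̄ ∈ X be a point such that f is twice Fréchet differentiable on a neighborhood of x̄. Then the gradient mapping ∇f is strongly metrically subregular at x̄ for ∇f(x̄) (i.e., there exist κ > 0 and a neighborhood U of x̄ with ‖x − x̄‖ ≤ κ·‖∇f(x) − ∇f(x̄)‖ for all x ∈ U) if and only if there is a constant c > 0 such that the second derivative ∇²f(x̄) is positive-definite with modulus c, i.e., ⟨∇²f(x̄)u, u⟩ ≥ c·‖u‖² for all u ∈ X. -/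
open Topology Filter Metric Set

private lemma aux_mono_line {X : Type*} [NormedAddCommGroup X] [NormedSpace ℝ X]
    (xbar : X) (r : ℝ) (hr : 0 < r) (U0 : Set X) (hball : ball xbar r ⊆ U0)
    (φ : X → ℝ) (g : X → X →L[ℝ] ℝ)
    (hφconv : ConvexOn ℝ (ball xbar r) φ)
    (hderiv : ∀ x ∈ U0, HasFDerivAt φ (g x) x)
    (u : X) (t : ℝ) (ht : 0 < t) (hmem : xbar + t • u ∈ ball xbar r) :
    0 ≤ (g (xbar + t • u) - g xbar) u := by
  set A : ℝ →ᵃ[ℝ] X := AffineMap.lineMap xbar (xbar + u) with hA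
  have hAfun : ⇑A = fun s : ℝ => xbar + s • u := by
    funext s
    simp [hA, AffineMap.lineMap_apply]
    module
  have hψ : ConvexOn ℝ (A ⁻¹' ball xbar r) (φ ∘ A) := hφconv.comp_affineMap A
  rw [hAfun] at hψ
  have hd : ∀ s : ℝ, xbar + s • u ∈ ball xbar r →
      HasDerivAt (φ ∘ fun s : ℝ => xbar + s • u) (g (xbar + s • u) u) s := by
    intro s hs
    have h1 : HasDerivAt (fun s : ℝ => xbar + s • u) u s := by
      simpa using ((hasDerivAt_id s).smul_const u).const_add xbar
    exact (hderiv _ (hball hs)).comp_hasDerivAt s h1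
  have h0mem : (0:ℝ) ∈ (fun s : ℝ => xbar + s • u) ⁻¹' ball xbar r := by simp [hr]
  have htmem : t ∈ (fun s : ℝ => xbar + s • u) ⁻¹' ball xbar r := by simpa using hmem
  have h1 : g (xbar + (0:ℝ) • u) u ≤ slope (φ ∘ fun s : ℝ => xbar + s • u) 0 t :=
    hψ.le_slope_of_hasDerivAt h0mem htmem ht (hd 0 (by simpa using h0mem))
  have h2 : slope (φ ∘ fun s : ℝ => xbar + s • u) 0 t ≤ g (xbar + t • u) u :=
    hψ.slope_le_of_hasDerivAt h0mem htmem ht (hd t (by simpa using htmem))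
  have h3 := h1.trans h2
  rw [show xbar + (0:ℝ) • u = xbar by simp] at h3
  simpa [ContinuousLinearMap.sub_apply] using sub_nonneg.2 h3

private lemma aux_small_t {X : Type*} [NormedAddCommGroup X] [NormedSpace ℝ X]
    {g : X → X →L[ℝ] ℝ} {H : X →L[ℝ] X →L[ℝ] ℝ} {xbar : X}
    (hlo : (fun x => g x - g xbar - H (x - xbar)) =o[𝓝 xbar] fun x => x - xbar)
    {ε : ℝ} (hε : 0 < ε) (V : Set X) (hV : V ∈ 𝓝 xbar) (u : X) (hu : u ≠ 0) :
    ∃ t > (0:ℝ), xbar + t • u ∈ V ∧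
      ‖g (xbar + t • u) - g xbar - H (t • u)‖ ≤ ε * (t * ‖u‖) := by
  have hS : {x : X | ‖g x - g xbar - H (x - xbar)‖ ≤ ε * ‖x - xbar‖} ∩ V ∈ 𝓝 xbar :=
    Filter.inter_mem (hlo.def hε) hV
  obtain ⟨δ, hδ, hδball⟩ := Metric.mem_nhds_iff.1 hS
  have hnu : 0 < ‖u‖ := norm_pos_iff.2 hu
  refine ⟨δ / (2 * ‖u‖), by positivity, ?_, ?_⟩
  all_goals
    have hmem : xbar + (δ / (2 * ‖u‖)) • u ∈ ball xbar δ := by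
      rw [mem_ball, dist_eq_norm, add_sub_cancel_left, norm_smul, Real.norm_eq_abs,
        abs_of_pos (by positivity)]
      rw [div_mul_eq_mul_div, mul_comm (2:ℝ) ‖u‖, ← div_div, mul_div_assoc,
        div_self hnu.ne', mul_one]
      linarith
    have h := hδball hmem
  · exact h.2
  · have h1 := h.1
    rw [mem_setOf_eq, add_sub_cancel_left] at h1
    calc ‖g (xbar + (δ / (2 * ‖u‖)) • u) - g xbar - H ((δ / (2 * ‖u‖)) • u)‖
        ≤ ε * ‖(δ / (2 * ‖u‖)) • u‖ := h1
      _ = ε * (δ / (2 * ‖u‖) * ‖u‖) := by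
          rw [norm_smul, Real.norm_eq_abs, abs_of_pos (by positivity)]

set_option maxHeartbeats 2000000 in
/-- Let `X` be a finite-dimensional real normed space and `f ∈ Γ(X)`
(proper lsc convex, values in `ℝ ∪ {∞}`). Suppose `f` is twice Fréchet differentiable on a
neighborhood `U₀` of `x̄`: namely, `f` agrees on `U₀` with a real-valued function `φ`
having Fréchet derivative `g x` at every `x ∈ U₀`, and `g` has Fréchet derivative `H`
(the second derivative `∇²f(x̄)`) at `x̄`. Then `∇f = g` is strongly metrically subregular
at `x̄` for `∇f(x̄) = g x̄` (i.e. `‖x - x̄‖ ≤ κ·‖g x - g x̄‖` near `x̄` for some `κ > 0`)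
if and only if there is `c > 0` with `⟨H u, u⟩ ≥ c·‖u‖²` for all `u ∈ X`. -/
theorem stmt_10 {X : Type*} [NormedAddCommGroup X] [NormedSpace ℝ X]
    [FiniteDimensional ℝ X]
    (f : X → EReal)
    (hproper : ∃ x, f x ≠ ⊤) (hne_bot : ∀ x, f x ≠ ⊥)
    (hlsc : LowerSemicontinuous f)
    (hconv : ∀ x y : X, ∀ a b : ℝ, 0 ≤ a → 0 ≤ b → a + b = 1 →
      f (a • x + b • y) ≤ (a : EReal) * f x + (b : EReal) * f y)
    (xbar : X) (U0 : Set X) (hU0 : U0 ∈ 𝓝 xbar)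
    (φ : X → ℝ) (g : X → X →L[ℝ] ℝ) (H : X →L[ℝ] X →L[ℝ] ℝ)
    (hfφ : ∀ x ∈ U0, f x = (φ x : EReal))
    (hderiv : ∀ x ∈ U0, HasFDerivAt φ (g x) x)
    (hderiv2 : HasFDerivAt g H xbar) :
    (∃ κ > (0 : ℝ), ∃ U ∈ 𝓝 xbar, ∀ x ∈ U, ‖x - xbar‖ ≤ κ * ‖g x - g xbar‖) ↔
    (∃ c > (0 : ℝ), ∀ u : X, c * ‖u‖ ^ 2 ≤ H u u) := by
  obtain ⟨r, hr, hball⟩ := Metric.mem_nhds_iff.1 hU0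
  have hlo : (fun x => g x - g xbar - H (x - xbar)) =o[𝓝 xbar] fun x => x - xbar :=
    hderiv2.isLittleO
  constructor
  · rintro ⟨κ, hκ, U, hUmem, hsub⟩
    -- symmetry of H
    have hsymm : ∀ v w : X, H v w = H w v := fun v w =>
      second_derivative_symmetric_of_eventually
        (Filter.eventually_of_mem hU0 fun y hy => hderiv y hy) hderiv2 v w
    -- convexity of φ on the ball
    have hφconv : ConvexOn ℝ (ball xbar r) φ := by
      refine ⟨convex_ball _ _, fun x hx y hy a b ha hb hab => ?_⟩
      have h1 := hconv x y a b ha hb hab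
      rw [hfφ x (hball hx), hfφ y (hball hy),
        hfφ _ (hball ((convex_ball xbar r) hx hy ha hb hab))] at h1
      rw [← EReal.coe_mul, ← EReal.coe_mul, ← EReal.coe_add, EReal.coe_le_coe_iff] at h1
      simpa using h1
    -- positive semidefiniteness
    have hpsd : ∀ u : X, 0 ≤ H u u := by
      intro u
      rcases eq_or_ne u 0 with rfl | hu
      · simp
      have hnu : 0 < ‖u‖ := norm_pos_iff.2 hu
      have key : ∀ ε > (0:ℝ), 0 ≤ H u u + ε := by
        intro ε hε
        have hε' : 0 < ε / ‖u‖ ^ 2 := by positivity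
        obtain ⟨t, ht, htball, hterr⟩ := aux_small_t hlo hε' (ball xbar r)
          (Metric.ball_mem_nhds xbar hr) u hu
        have hmono : 0 ≤ (g (xbar + t • u) - g xbar) u :=
          aux_mono_line xbar r hr U0 hball φ g hφconv hderiv u t ht htball
        have hdecomp : (g (xbar + t • u) - g xbar) u
            = (g (xbar + t • u) - g xbar - H (t • u)) u + t * (H u u) := by
          simp [ContinuousLinearMap.sub_apply, map_smul, ContinuousLinearMap.smul_apply]
        have herr : |(g (xbar + t • u) - g xbar - H (t • u)) u|
            ≤ ε / ‖u‖ ^ 2 * (t * ‖u‖) * ‖u‖ := by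
          calc |(g (xbar + t • u) - g xbar - H (t • u)) u|
              ≤ ‖g (xbar + t • u) - g xbar - H (t • u)‖ * ‖u‖ := by
                rw [← Real.norm_eq_abs]
                exact (g (xbar + t • u) - g xbar - H (t • u)).le_opNorm u
            _ ≤ ε / ‖u‖ ^ 2 * (t * ‖u‖) * ‖u‖ :=
                mul_le_mul_of_nonneg_right hterr (norm_nonneg u)
        have hErleq : ε / ‖u‖ ^ 2 * (t * ‖u‖) * ‖u‖ = ε * t := by
          field_simp
        rw [hErleq] at herr
        rw [hdecomp] at hmono
        have habs : (g (xbar + t • u) - g xbar - H (t • u)) u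
            ≤ |(g (xbar + t • u) - g xbar - H (t • u)) u| := le_abs_self _
        have h2' : 0 ≤ ε * t + t * H u u := by linarith
        have h3 : t * 0 ≤ t * (ε + H u u) := by rw [mul_zero, mul_add]; linarith
        have h4 := le_of_mul_le_mul_left h3 ht
        linarith
      by_contra hneg
      push_neg at hneg
      have := key (-(H u u) / 2) (by linarith)
      linarith
    -- injectivity-type bound
    have hbound : ∀ u : X, ‖u‖ ≤ κ * ‖H u‖ := by
      intro u
      rcases eq_or_ne u 0 with rfl | hu
      · simp [mul_nonneg hκ.le (norm_nonneg _)]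
      have hnu : 0 < ‖u‖ := norm_pos_iff.2 hu
      refine le_of_forall_pos_le_add ?_
      intro ε hε
      have hε' : 0 < ε / (κ * ‖u‖) := by positivity
      obtain ⟨t, ht, htU, hterr⟩ := aux_small_t hlo hε' U hUmem u hu
      have h1 := hsub _ htU
      rw [add_sub_cancel_left, norm_smul, Real.norm_eq_abs, abs_of_pos ht] at h1
      have h2 : ‖g (xbar + t • u) - g xbar‖ ≤ t * ‖H u‖ + ε / (κ * ‖u‖) * (t * ‖u‖) := by
        have hid : g (xbar + t • u) - g xbar
            = (g (xbar + t • u) - g xbar - H (t • u)) + t • (H u) := by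
          rw [map_smul]; abel
        calc ‖g (xbar + t • u) - g xbar‖
            ≤ ‖g (xbar + t • u) - g xbar - H (t • u)‖ + ‖t • H u‖ := by
              conv_lhs => rw [hid]
              exact norm_add_le _ _
          _ ≤ ε / (κ * ‖u‖) * (t * ‖u‖) + t * ‖H u‖ := by
              rw [norm_smul t (H u), Real.norm_eq_abs, abs_of_pos ht]
              exact add_le_add_left hterr _
          _ = t * ‖H u‖ + ε / (κ * ‖u‖) * (t * ‖u‖) := by ring
      have h3 : t * ‖u‖ ≤ κ * (t * ‖H u‖) + ε * t := by
        have : κ * (ε / (κ * ‖u‖) * (t * ‖u‖)) = ε * t := by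
          field_simp
        calc t * ‖u‖ ≤ κ * ‖g (xbar + t • u) - g xbar‖ := h1
          _ ≤ κ * (t * ‖H u‖ + ε / (κ * ‖u‖) * (t * ‖u‖)) :=
              mul_le_mul_of_nonneg_left h2 hκ.le
          _ = κ * (t * ‖H u‖) + ε * t := by rw [mul_add, this]
      have h4 : t * ‖u‖ ≤ t * (κ * ‖H u‖ + ε) := by calc
        t * ‖u‖ ≤ κ * (t * ‖H u‖) + ε * t := h3
        _ = t * (κ * ‖H u‖ + ε) := by ring
      exact le_of_mul_le_mul_left (by linarith [h4]) ht
    -- definiteness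
    have hdef : ∀ u : X, u ≠ 0 → 0 < H u u := by
      intro u hu
      rcases (hpsd u).lt_or_eq with h | h
      · exact h
      exfalso
      have hHu : H u = 0 := by
        ext v
        have hq : ∀ s : ℝ, 0 ≤ 2 * s * H u v + s ^ 2 * H v v := by
          intro s
          have h0 := hpsd (u + s • v)
          have : H (u + s • v) (u + s • v)
              = H u u + s * H u v + s * H v u + s ^ 2 * H v v := by
            simp [map_add, map_smul, ContinuousLinearMap.add_apply,
              ContinuousLinearMap.smul_apply]
            ring
          rw [this, ← h, hsymm v u] at h0
          linarith
        by_contra hv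
        have hvne : H u v ≠ 0 := by simpa using hv
        set a := H u v with ha
        set b := H v v with hbdef
        have hb : 0 ≤ b := hpsd v
        have ha2 : 0 < a ^ 2 := by positivity
        rcases hb.eq_or_lt with hb0 | hbpos
        · have h5 := hq (-a)
          rw [← hb0] at h5
          nlinarith
        · have h5 : (2 * (-a / b) * a + (-a / b) ^ 2 * b) * b = -a ^ 2 := by
            field_simp
            ring
          have h6 := mul_nonneg (hq (-a / b)) hbpos.le
          rw [h5] at h6
          nlinarith
      have := hbound u
      rw [hHu] at this
      simp at this
      exact hu this
    -- compactness: uniform positive definiteness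
    by_cases hX : ∃ u : X, u ≠ (0:X)
    · obtain ⟨u1, hu1⟩ := hX
      have hsne : (sphere (0:X) 1).Nonempty := by
        refine ⟨‖u1‖⁻¹ • u1, ?_⟩
        simp [norm_smul, inv_mul_cancel₀ (norm_ne_zero_iff.2 hu1)]
      have hcont : Continuous fun u : X => H u u := by fun_prop
      obtain ⟨w, hw, hmin⟩ :=
        (isCompact_sphere (0:X) 1).exists_isMinOn hsne hcont.continuousOn
      have hw1 : ‖w‖ = 1 := mem_sphere_zero_iff_norm.1 hw
      have hw0 : w ≠ 0 := by
        intro h; rw [h] at hw1; simp at hw1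
      refine ⟨H w w, hdef w hw0, fun u => ?_⟩
      rcases eq_or_ne u 0 with rfl | hu
      · simp
      have hnu : 0 < ‖u‖ := norm_pos_iff.2 hu
      have hmem : ‖u‖⁻¹ • u ∈ sphere (0:X) 1 := by
        simp [norm_smul, inv_mul_cancel₀ hnu.ne']
      have hrep : u = ‖u‖ • (‖u‖⁻¹ • u) := by
        rw [smul_smul, mul_inv_cancel₀ hnu.ne', one_smul]
      set v : X := ‖u‖⁻¹ • u with hvdef
      have e0 : H (‖u‖ • v) = ‖u‖ • H v := map_smul H ‖u‖ v
      have e0' : (H v) (‖u‖ • v) = ‖u‖ • (H v v) := map_smul (H v) ‖u‖ v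
      have e1 : H (‖u‖ • v) (‖u‖ • v) = ‖u‖ * (‖u‖ * H v v) := by
        rw [e0, ContinuousLinearMap.smul_apply, e0', smul_eq_mul, smul_eq_mul]
      have hcalc : H u u = ‖u‖ ^ 2 * H v v := by
        conv_lhs => rw [hrep]
        rw [e1]; ring
      rw [hcalc]
      have hmv : H w w ≤ H v v := isMinOn_iff.mp hmin v hmem
      calc H w w * ‖u‖ ^ 2 ≤ H v v * ‖u‖ ^ 2 :=
            mul_le_mul_of_nonneg_right hmv (sq_nonneg _)
        _ = ‖u‖ ^ 2 * H v v := mul_comm _ _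
    · push_neg at hX
      refine ⟨1, one_pos, fun u => ?_⟩
      rw [hX u]
      simp
  · rintro ⟨c, hc, hpos⟩
    have hev : ∀ᶠ x in 𝓝 xbar,
        ‖g x - g xbar - H (x - xbar)‖ ≤ c / 2 * ‖x - xbar‖ := hlo.def (half_pos hc)
    refine ⟨2 / c, by positivity,
      {x : X | ‖g x - g xbar - H (x - xbar)‖ ≤ c / 2 * ‖x - xbar‖}, hev, ?_⟩
    intro x hx
    rcases (norm_nonneg (x - xbar)).eq_or_lt with h0 | h0
    · rw [← h0]; positivity
    have h1 : c * ‖x - xbar‖ ^ 2 ≤ H (x - xbar) (x - xbar) := hpos _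
    have h2 : H (x - xbar) (x - xbar)
        = (g x - g xbar) (x - xbar) - (g x - g xbar - H (x - xbar)) (x - xbar) := by
      simp [ContinuousLinearMap.sub_apply]
    have h3 : (g x - g xbar) (x - xbar) ≤ ‖g x - g xbar‖ * ‖x - xbar‖ := by
      calc (g x - g xbar) (x - xbar) ≤ |(g x - g xbar) (x - xbar)| := le_abs_self _
        _ ≤ ‖g x - g xbar‖ * ‖x - xbar‖ := by
            rw [← Real.norm_eq_abs]; exact (g x - g xbar).le_opNorm _
    have h4 : -((g x - g xbar - H (x - xbar)) (x - xbar))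
        ≤ c / 2 * ‖x - xbar‖ * ‖x - xbar‖ := by
      calc -((g x - g xbar - H (x - xbar)) (x - xbar))
          ≤ |(g x - g xbar - H (x - xbar)) (x - xbar)| := neg_le_abs _
        _ ≤ ‖g x - g xbar - H (x - xbar)‖ * ‖x - xbar‖ := by
            rw [← Real.norm_eq_abs]; exact (g x - g xbar - H (x - xbar)).le_opNorm _
        _ ≤ c / 2 * ‖x - xbar‖ * ‖x - xbar‖ :=
            mul_le_mul_of_nonneg_right hx (norm_nonneg _)
    set n : ℝ := ‖x - xbar‖ with hn
    set G : ℝ := ‖g x - g xbar‖ with hG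
    set A : ℝ := (g x - g xbar) (x - xbar) with hA
    set B : ℝ := (g x - g xbar - H (x - xbar)) (x - xbar) with hB
    set Q : ℝ := H (x - xbar) (x - xbar) with hQ
    have hnn : n ^ 2 = n * n := sq n
    have h6 : c / 2 * n * n ≤ G * n := by nlinarith [h1, h2, h3, h4, hnn]
    have h5 : c / 2 * n ≤ G := le_of_mul_le_mul_right h6 h0
    rw [div_mul_eq_mul_div, le_div_iff₀ hc]
    linarith
end

section
/- Let X be a real Banach space and f ∈ Γ(X). Assume there exist a neighborhood U of a point x̄ ∈ dom f and a constant c > 0 such that f((1 − λ)x + λx̄) ≤ (1 − λ)f(x) + λf(x̄) − c·λ(1 − λ)·‖x − x̄‖² for all x ∈ U and all λ ∈ (0, 1). Then for every y* ∈ ∂f(x̄) and every x ∈ U one has f(x) ≥ f(x̄) + ⟨y*, x − x̄⟩ + c·‖x − x̄‖². In particular, ∂f is strongly metrically subregular at x̄ for every y* ∈ ∂f(x̄). -/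
open Topology Filter Metric Set

theorem stmt_11 {X : Type*} [NormedAddCommGroup X] [NormedSpace ℝ X] [CompleteSpace X]
    (f : X → EReal)
    (hproper : ∃ x, f x ≠ ⊤) (hne_bot : ∀ x, f x ≠ ⊥)
    (hlsc : LowerSemicontinuous f)
    (hconv : ∀ x y : X, ∀ a b : ℝ, 0 ≤ a → 0 ≤ b → a + b = 1 →
      f (a • x + b • y) ≤ (a : EReal) * f x + (b : EReal) * f y)
    (xbar : X) (hdom : f xbar ≠ ⊤)
    (U : Set X) (hU : U ∈ 𝓝 xbar) (c : ℝ) (hc : 0 < c)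
    (hstrong : ∀ x ∈ U, ∀ lam : ℝ, 0 < lam → lam < 1 →
      f ((1 - lam) • x + lam • xbar) ≤
        ((1 - lam : ℝ) : EReal) * f x + (lam : EReal) * f xbar
          - ((c * lam * (1 - lam) * ‖x - xbar‖ ^ 2 : ℝ) : EReal)) :
    (∀ y ∈ subdiff f xbar, ∀ x ∈ U,
        f xbar + ((y (x - xbar) + c * ‖x - xbar‖ ^ 2 : ℝ) : EReal) ≤ f x) ∧
    (∀ y ∈ subdiff f xbar, ∃ κ > (0 : ℝ), ∃ U' ∈ 𝓝 xbar, ∀ x ∈ U', ∀ z ∈ subdiff f x,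
        ‖x - xbar‖ ≤ κ * ‖z - y‖) := by
  set A : ℝ := (f xbar).toReal with hA
  have hfxbar : f xbar = (A : EReal) := (EReal.coe_toReal hdom (hne_bot xbar)).symm
  have key : ∀ y ∈ subdiff f xbar, ∀ x ∈ U,
      f xbar + ((y (x - xbar) + c * ‖x - xbar‖ ^ 2 : ℝ) : EReal) ≤ f x := by
    intro y hy x hx
    obtain ⟨-, hsub⟩ := hy
    by_cases hfx : f x = ⊤
    · simp [hfx]
    set B : ℝ := (f x).toReal with hB
    have hfxeq : f x = (B : EReal) := (EReal.coe_toReal hfx (hne_bot x)).symm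
    set p : ℝ := y (x - xbar) with hp
    set r : ℝ := ‖x - xbar‖ ^ 2 with hr
    have hr0 : 0 ≤ r := by positivity
    -- real inequality for each lam ∈ (0,1)
    have hlam : ∀ lam : ℝ, 0 < lam → lam < 1 → A + p + c * lam * r ≤ B := by
      intro lam h0 h1
      have hpt : ((1 - lam) • x + lam • xbar) - xbar = (1 - lam) • (x - xbar) := by
        have : (1 : ℝ) • xbar = xbar := one_smul ℝ xbar
        rw [smul_sub]
        module
      have h2 := hsub ((1 - lam) • x + lam • xbar)
      have h3 := hstrong x hx lam h0 h1
      have h4 : f xbar + ((y (((1 - lam) • x + lam • xbar) - xbar) : ℝ) : EReal) ≤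
          ((1 - lam : ℝ) : EReal) * f x + (lam : EReal) * f xbar
          - ((c * lam * (1 - lam) * r : ℝ) : EReal) := le_trans h2 h3
      rw [hpt, map_smul] at h4
      rw [hfxeq, hfxbar] at h4
      rw [smul_eq_mul] at h4
      have h6 : A + (1 - lam) * p ≤ (1 - lam) * B + lam * A - c * lam * (1 - lam) * r := by
        exact_mod_cast h4
      have h1l : 0 < 1 - lam := by linarith
      have h7 : (1 - lam) * (A + p + c * lam * r) ≤ (1 - lam) * B := by nlinarith [h6]
      exact (mul_le_mul_iff_right₀ h1l).mp h7
    -- pass to the limit lam → 1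
    have hreal : A + (p + c * r) ≤ B := by
      have : ∀ ε > (0:ℝ), A + (p + c * r) ≤ B + ε := by
        intro ε hε
        set lam : ℝ := 1 - min (ε / (c * r + 1)) (1/2) with hlamdef
        have hcr1 : 0 < c * r + 1 := by nlinarith
        have hmpos : 0 < min (ε / (c * r + 1)) (1/2) :=
          lt_min (div_pos hε hcr1) (by norm_num)
        have hmle : min (ε / (c * r + 1)) (1/2) ≤ ε / (c * r + 1) := min_le_left _ _
        have hmle2 : min (ε / (c * r + 1)) (1/2) ≤ 1/2 := min_le_right _ _
        have h0 : 0 < lam := by simp only [hlamdef]; linarith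
        have h1 : lam < 1 := by simp only [hlamdef]; linarith
        have := hlam lam h0 h1
        have hdivle : (1 - lam) * (c * r + 1) ≤ ε := by
          have : min (ε / (c * r + 1)) (1/2) * (c * r + 1) ≤ ε / (c * r + 1) * (c * r + 1) :=
            mul_le_mul_of_nonneg_right hmle hcr1.le
          rw [div_mul_cancel₀ _ (ne_of_gt hcr1)] at this
          simpa [hlamdef] using this
        nlinarith [mul_nonneg (mul_nonneg hc.le hr0) (sub_nonneg.mpr h1.le)]
      exact le_of_forall_pos_le_add this
    rw [hfxeq, hfxbar, ← EReal.coe_add]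
    exact_mod_cast hreal
  refine ⟨key, ?_⟩
  intro y hy
  refine ⟨1 / c, by positivity, U, hU, ?_⟩
  intro x hx z hz
  obtain ⟨hfxt, hzsub⟩ := hz
  set B : ℝ := (f x).toReal with hB
  have hfxeq : f x = (B : EReal) := (EReal.coe_toReal hfxt (hne_bot x)).symm
  have h1 := key y hy x hx
  have h2 := hzsub xbar
  rw [hfxeq, hfxbar, ← EReal.coe_add] at h1 h2
  have h1' : A + (y (x - xbar) + c * ‖x - xbar‖ ^ 2) ≤ B := by exact_mod_cast h1
  have h2' : B + z (xbar - x) ≤ A := by exact_mod_cast h2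
  have hzneg : z (xbar - x) = - z (x - xbar) := by
    rw [show xbar - x = -(x - xbar) from (neg_sub x xbar).symm, map_neg]
  rw [hzneg] at h2'
  -- c‖x-xbar‖² ≤ (z - y)(x - xbar) ≤ ‖z-y‖‖x-xbar‖
  have hbd : (z - y) (x - xbar) ≤ ‖z - y‖ * ‖x - xbar‖ :=
    le_trans (le_abs_self _) ((z - y).le_opNorm _)
  rw [ContinuousLinearMap.sub_apply] at hbd
  rcases eq_or_lt_of_le (norm_nonneg (x - xbar)) with h0 | h0
  · rw [← h0]; positivity
  · have hstep : ‖x - xbar‖ ≤ ‖z - y‖ / c := by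
      rw [le_div_iff₀ hc]; nlinarith
    calc ‖x - xbar‖ ≤ ‖z - y‖ / c := hstep
      _ = 1 / c * ‖z - y‖ := by ring
end
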